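/- arXiv:1905.10551 — 13 statements merged into one kernel-verified Lean document; each statement's English description precedes it below -/
import Mathlib

section
/- Let φ and g be analytic functions on the open unit disk 𝔻 such that φ(z) ≠ 0 and g(z) ≠ 0 for all z ∈ 𝔻\{0}, and define f(z) = φ(z)·|g(z)|². Then for every z ∈ 𝔻\{0}, Re((z·f_z(z) − z̄·f_z̄(z))/f(z)) = Re(z·φ′(z)/φ(z)). Consequently, for each α ∈ [0,1), Re((z·f_z − z̄·f_z̄)/f) > α holds at every z ∈ 𝔻\{0} if and only if Re(z·φ′(z)/φ(z)) > α holds at every z ∈ 𝔻\{0}. -/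
open Complex Metric Set

/-- Wirtinger derivative `f_z = (1/2)(∂f/∂x - i ∂f/∂y)`. -/
noncomputable def wz (f : ℂ → ℂ) (z : ℂ) : ℂ :=
  (1 / 2) * (fderiv ℝ f z 1 - Complex.I * fderiv ℝ f z Complex.I)

/-- Wirtinger derivative `f_z̄ = (1/2)(∂f/∂x + i ∂f/∂y)`. -/
noncomputable def wzbar (f : ℂ → ℂ) (z : ℂ) : ℂ :=
  (1 / 2) * (fderiv ℝ f z 1 + Complex.I * fderiv ℝ f z Complex.I)

/-- The operator `Df = z f_z - z̄ f_z̄`. -/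
noncomputable def Dop (f : ℂ → ℂ) (z : ℂ) : ℂ :=
  z * wz f z - (starRingEnd ℂ) z * wzbar f z

lemma wirt (φ g f : ℂ → ℂ) (z : ℂ)
    (hφ : DifferentiableAt ℂ φ z) (hg : DifferentiableAt ℂ g z)
    (hf : ∀ w, f w = φ w * (Complex.normSq (g w) : ℂ)) :
    wz f z = deriv φ z * (g z * (starRingEnd ℂ) (g z)) + φ z * (deriv g z * (starRingEnd ℂ) (g z)) ∧
    wzbar f z = φ z * (g z * (starRingEnd ℂ) (deriv g z)) := by
  have hfe : f = fun w => φ w * (g w * (starRingEnd ℂ) (g w)) := by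
    funext w; rw [hf, Complex.mul_conj]
  have hφR : HasFDerivAt φ
      (ContinuousLinearMap.restrictScalars ℝ ((1 : ℂ →L[ℂ] ℂ).smulRight (deriv φ z))) z :=
    (hφ.hasDerivAt.hasFDerivAt).restrictScalars ℝ
  have hgR : HasFDerivAt g
      (ContinuousLinearMap.restrictScalars ℝ ((1 : ℂ →L[ℂ] ℂ).smulRight (deriv g z))) z :=
    (hg.hasDerivAt.hasFDerivAt).restrictScalars ℝ
  have hconj : HasFDerivAt (fun w => (starRingEnd ℂ) (g w))
      ((Complex.conjCLE : ℂ →L[ℝ] ℂ).comp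
        (ContinuousLinearMap.restrictScalars ℝ ((1 : ℂ →L[ℂ] ℂ).smulRight (deriv g z)))) z :=
    (Complex.conjCLE : ℂ →L[ℝ] ℂ).hasFDerivAt.comp z hgR
  have H := hφR.mul (hgR.mul hconj)
  rw [hfe]
  have hD : fderiv ℝ (fun w => φ w * (g w * (starRingEnd ℂ) (g w))) z = _ := H.fderiv
  constructor <;>
  · simp only [wz, wzbar, hD]
    simp [ContinuousLinearMap.add_apply, ContinuousLinearMap.smul_apply,
      ContinuousLinearMap.comp_apply, ContinuousLinearMap.smulRight_apply,
      ContinuousLinearMap.coe_restrictScalars', ContinuousLinearMap.one_apply,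
      Complex.conjCLE_apply, map_mul, smul_eq_mul]
    ring_nf
    simp [Complex.ext_iff]
    ring_nf
    exact ⟨trivial, trivial⟩

theorem stmt_0 (φ g f : ℂ → ℂ)
    (hφ : DifferentiableOn ℂ φ (ball (0 : ℂ) 1))
    (hg : DifferentiableOn ℂ g (ball (0 : ℂ) 1))
    (hφne : ∀ z ∈ ball (0 : ℂ) 1 \ {0}, φ z ≠ 0)
    (hgne : ∀ z ∈ ball (0 : ℂ) 1 \ {0}, g z ≠ 0)
    (hf : ∀ z, f z = φ z * (Complex.normSq (g z) : ℂ)) :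
    (∀ z ∈ ball (0 : ℂ) 1 \ {0},
        ((z * wz f z - (starRingEnd ℂ) z * wzbar f z) / f z).re
          = (z * deriv φ z / φ z).re) ∧
      ∀ α : ℝ, 0 ≤ α → α < 1 →
        ((∀ z ∈ ball (0 : ℂ) 1 \ {0},
            α < ((z * wz f z - (starRingEnd ℂ) z * wzbar f z) / f z).re) ↔
          (∀ z ∈ ball (0 : ℂ) 1 \ {0}, α < (z * deriv φ z / φ z).re)) := by
  have main : ∀ z ∈ ball (0 : ℂ) 1 \ {0},
      ((z * wz f z - (starRingEnd ℂ) z * wzbar f z) / f z).re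
        = (z * deriv φ z / φ z).re := by
    intro z hz
    have hzball : z ∈ ball (0 : ℂ) 1 := hz.1
    have hφz : DifferentiableAt ℂ φ z := hφ.differentiableAt (isOpen_ball.mem_nhds hzball)
    have hgz : DifferentiableAt ℂ g z := hg.differentiableAt (isOpen_ball.mem_nhds hzball)
    obtain ⟨h1, h2⟩ := wirt φ g f z hφz hgz hf
    have hp : φ z ≠ 0 := hφne z hz
    have hq : g z ≠ 0 := hgne z hz
    have hqc : (starRingEnd ℂ) (g z) ≠ 0 := by simpa using hq
    have hfz : f z = φ z * (g z * (starRingEnd ℂ) (g z)) := by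
      rw [hf, Complex.mul_conj]
    set w : ℂ := z * deriv g z / g z with hw
    have key : (z * wz f z - (starRingEnd ℂ) z * wzbar f z) / f z
        = z * deriv φ z / φ z + (w - (starRingEnd ℂ) w) := by
      rw [h1, h2, hfz, hw]
      simp only [map_div₀, map_mul]
      field_simp
      ring
    rw [key]
    simp [Complex.add_re, Complex.sub_re, Complex.conj_re]
  refine ⟨main, fun α _ _ => ?_⟩
  constructor <;> intro h z hz
  · rw [← main z hz]; exact h z hz
  · rw [main z hz]; exact h z hz
end

section
/- Let p ≥ 1 be a real number and let φ be a C² complex-valued function on the open unit disk 𝔻. Define f(z) = φ(z)·|z|^{2(p−1)}. Then for every z ∈ 𝔻\{0} at which Dφ(z) ≠ 0, one has Df(z) = |z|^{2(p−1)}·Dφ(z) ≠ 0 and Re(D²f(z)/Df(z)) = Re(D²φ(z)/Dφ(z)). In particular, for each α ∈ [0,1), Re(D²f/Df) > α holds at every z ∈ 𝔻\{0} if and only if Re(D²φ/Dφ) > α holds at every z ∈ 𝔻\{0}. -/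
open Complex Metric Set

lemma Dop_congr {u v : ℂ → ℂ} {z : ℂ} (h : u =ᶠ[nhds z] v) : Dop u z = Dop v z := by
  unfold Dop wz wzbar
  rw [h.fderiv_eq]

lemma Dop_mul {u v : ℂ → ℂ} {z : ℂ} (hu : DifferentiableAt ℝ u z)
    (hv : DifferentiableAt ℝ v z) :
    Dop (fun w => u w * v w) z = u z * Dop v z + v z * Dop u z := by
  unfold Dop wz wzbar
  rw [fderiv_fun_mul hu hv]
  simp only [ContinuousLinearMap.add_apply, ContinuousLinearMap.smul_apply, smul_eq_mul]
  ring

noncomputable def Gfun (p : ℝ) : ℂ → ℂ := fun w => ((Complex.normSq w ^ (p - 1) : ℝ) : ℂ)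

lemma Gfun_eq (p : ℝ) (w : ℂ) : ((‖w‖ ^ (2 * (p - 1)) : ℝ) : ℂ) = Gfun p w := by
  unfold Gfun
  congr 1
  rw [← Complex.sq_norm, ← Real.rpow_natCast ‖w‖ 2,
    ← Real.rpow_mul (norm_nonneg w)]
  norm_num

lemma hasFDerivAt_normSq' (z : ℂ) :
    HasFDerivAt Complex.normSq
      (((2 * z.re) • Complex.reCLM + (2 * z.im) • Complex.imCLM : ℂ →L[ℝ] ℝ)) z := by
  have hre := Complex.reCLM.hasFDerivAt (x := z)
  have him := Complex.imCLM.hasFDerivAt (x := z)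
  have h := (hre.mul hre).add (him.mul him)
  have he : Complex.normSq = fun w : ℂ => Complex.reCLM w * Complex.reCLM w +
      Complex.imCLM w * Complex.imCLM w := by
    funext w; simp [Complex.normSq_apply]
  rw [he]
  refine h.congr_fderiv ?_
  ext v
  simp [smul_eq_mul]
  ring

lemma hasFDerivAt_Gfun (p : ℝ) {z : ℂ} (hz : z ≠ 0) :
    HasFDerivAt (Gfun p)
      (Complex.ofRealCLM.comp
        (((p - 1) * Complex.normSq z ^ (p - 2)) •
          ((2 * z.re) • Complex.reCLM + (2 * z.im) • Complex.imCLM : ℂ →L[ℝ] ℝ))) z := by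
  have hn : Complex.normSq z ≠ 0 := by simpa [Complex.normSq_eq_zero] using hz
  have h1 : HasDerivAt (fun t : ℝ => t ^ (p - 1))
      ((p - 1) * Complex.normSq z ^ (p - 1 - 1)) (Complex.normSq z) :=
    Real.hasDerivAt_rpow_const (Or.inl hn)
  have h3 := h1.comp_hasFDerivAt z (hasFDerivAt_normSq' z)
  have h4 := Complex.ofRealCLM.hasFDerivAt.comp z h3
  rw [show p - 1 - 1 = p - 2 by ring] at h4
  exact h4

lemma wz_Gfun (p : ℝ) {z : ℂ} (hz : z ≠ 0) :
    wz (Gfun p) z = (((p - 1) * Complex.normSq z ^ (p - 2) : ℝ) : ℂ) * (starRingEnd ℂ) z := by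
  unfold wz
  rw [(hasFDerivAt_Gfun p hz).fderiv]
  simp only [ContinuousLinearMap.coe_comp', Function.comp_apply,
    ContinuousLinearMap.smul_apply, ContinuousLinearMap.add_apply,
    Complex.reCLM_apply, Complex.imCLM_apply, Complex.ofRealCLM_apply,
    Complex.one_re, Complex.one_im, Complex.I_re, Complex.I_im, smul_eq_mul]
  simp [Complex.ext_iff]
  constructor <;> ring

lemma wzbar_Gfun (p : ℝ) {z : ℂ} (hz : z ≠ 0) :
    wzbar (Gfun p) z = (((p - 1) * Complex.normSq z ^ (p - 2) : ℝ) : ℂ) * z := by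
  unfold wzbar
  rw [(hasFDerivAt_Gfun p hz).fderiv]
  simp only [ContinuousLinearMap.coe_comp', Function.comp_apply,
    ContinuousLinearMap.smul_apply, ContinuousLinearMap.add_apply,
    Complex.reCLM_apply, Complex.imCLM_apply, Complex.ofRealCLM_apply,
    Complex.one_re, Complex.one_im, Complex.I_re, Complex.I_im, smul_eq_mul]
  simp [Complex.ext_iff]
  constructor <;> ring

lemma Dop_Gfun (p : ℝ) {z : ℂ} (hz : z ≠ 0) : Dop (Gfun p) z = 0 := by
  unfold Dop
  rw [wz_Gfun p hz, wzbar_Gfun p hz]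
  ring

lemma diff_Dop {φ : ℂ → ℂ} (hφ : ContDiffOn ℝ 2 φ (ball (0 : ℂ) 1)) {z : ℂ}
    (hz : z ∈ ball (0 : ℂ) 1) : DifferentiableAt ℝ (Dop φ) z := by
  have h2 : ContDiffAt ℝ 2 φ z := hφ.contDiffAt (isOpen_ball.mem_nhds hz)
  have hfd : ContDiffAt ℝ 1 (fderiv ℝ φ) z := h2.fderiv_right (by norm_num)
  have hd : DifferentiableAt ℝ (fderiv ℝ φ) z := hfd.differentiableAt one_ne_zero
  have h1 : DifferentiableAt ℝ (fun w => (fderiv ℝ φ w) 1) z :=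
    hd.clm_apply (differentiableAt_const _)
  have hI : DifferentiableAt ℝ (fun w => (fderiv ℝ φ w) Complex.I) z :=
    hd.clm_apply (differentiableAt_const _)
  have hwz : DifferentiableAt ℝ (wz φ) z := by
    unfold wz
    exact (differentiableAt_const _).mul (h1.sub ((differentiableAt_const _).mul hI))
  have hwzbar : DifferentiableAt ℝ (wzbar φ) z := by
    unfold wzbar
    exact (differentiableAt_const _).mul (h1.add ((differentiableAt_const _).mul hI))
  have hconj : DifferentiableAt ℝ (fun w : ℂ => (starRingEnd ℂ) w) z :=
    Complex.conjCLE.differentiable.differentiableAt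
  exact (differentiableAt_fun_id.mul hwz).sub (hconj.mul hwzbar)
theorem stmt_2 (p : ℝ) (hp : 1 ≤ p) (φ f : ℂ → ℂ)
    (hφ : ContDiffOn ℝ 2 φ (ball (0 : ℂ) 1))
    (hf : ∀ z, f z = φ z * ((‖z‖ ^ (2 * (p - 1)) : ℝ) : ℂ)) :
    (∀ z ∈ ball (0 : ℂ) 1 \ {0}, Dop φ z ≠ 0 →
        Dop f z = ((‖z‖ ^ (2 * (p - 1)) : ℝ) : ℂ) * Dop φ z ∧
          Dop f z ≠ 0 ∧
          (Dop (Dop f) z / Dop f z).re = (Dop (Dop φ) z / Dop φ z).re) ∧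
      ∀ α : ℝ, 0 ≤ α → α < 1 →
        ((∀ z ∈ ball (0 : ℂ) 1 \ {0}, α < (Dop (Dop f) z / Dop f z).re) ↔
          (∀ z ∈ ball (0 : ℂ) 1 \ {0}, α < (Dop (Dop φ) z / Dop φ z).re)) := by
  have hfe : f = fun w => φ w * Gfun p w := by
    funext w; rw [hf w, Gfun_eq]
  have hopen : IsOpen (ball (0 : ℂ) 1 \ {0}) := isOpen_ball.sdiff isClosed_singleton
  have hGne : ∀ z : ℂ, z ≠ 0 → Gfun p z ≠ 0 := by
    intro z hz
    unfold Gfun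
    rw [Ne, Complex.ofReal_eq_zero]
    exact (Real.rpow_pos_of_pos (Complex.normSq_pos.2 hz) _).ne'
  have key1 : ∀ z ∈ ball (0 : ℂ) 1 \ {0}, Dop f z = Gfun p z * Dop φ z := by
    intro z hz
    have hz0 : z ≠ 0 := hz.2
    have hφd : DifferentiableAt ℝ φ z :=
      (hφ.contDiffAt (isOpen_ball.mem_nhds hz.1)).differentiableAt (by norm_num)
    have hGd : DifferentiableAt ℝ (Gfun p) z := (hasFDerivAt_Gfun p hz0).differentiableAt
    rw [hfe, Dop_mul hφd hGd, Dop_Gfun p hz0]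
    ring
  have key2 : ∀ z ∈ ball (0 : ℂ) 1 \ {0}, Dop (Dop f) z = Gfun p z * Dop (Dop φ) z := by
    intro z hz
    have hz0 : z ≠ 0 := hz.2
    have hGd : DifferentiableAt ℝ (Gfun p) z := (hasFDerivAt_Gfun p hz0).differentiableAt
    have heq : Dop f =ᶠ[nhds z] fun w => Gfun p w * Dop φ w :=
      Filter.eventuallyEq_of_mem (hopen.mem_nhds hz) key1
    rw [Dop_congr heq, Dop_mul hGd (diff_Dop hφ hz.1), Dop_Gfun p hz0]
    ring
  have ratio : ∀ z ∈ ball (0 : ℂ) 1 \ {0},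
      Dop (Dop f) z / Dop f z = Dop (Dop φ) z / Dop φ z := by
    intro z hz
    rw [key1 z hz, key2 z hz, mul_div_mul_left _ _ (hGne z hz.2)]
  refine ⟨fun z hz hne => ⟨?_, ?_, by rw [ratio z hz]⟩, fun α _ _ => ?_⟩
  · rw [Gfun_eq p z]; exact key1 z hz
  · rw [key1 z hz]; exact mul_ne_zero (hGne z hz.2) hne
  · constructor
    · intro h z hz; rw [← ratio z hz]; exact h z hz
    · intro h z hz; rw [ratio z hz]; exact h z hz
end

section
/- Let α ∈ [0,1), and let (aₙ)ₙ≥1 and (bₙ)ₙ≥1 be complex sequences such that the power series H(z) = Σₙ₌₁^∞ aₙ zⁿ and G(z) = Σₙ₌₁^∞ bₙ zⁿ converge for all z in the open unit disk 𝔻. Set h = exp(H) and g = exp(G), and suppose that Re(1 + z·h′(z)/h(z) − z·g′(z)/g(z)) > α for all z ∈ 𝔻. Then |aₙ − bₙ| ≤ 2(1−α)/n for every n ≥ 1. -/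
open Complex Metric Set Filter FormalMultilinearSeries

-- coefficient bound
lemma coeffBound {a : ℕ → ℂ} {H : ℂ → ℂ}
    (hH : ∀ z ∈ ball (0 : ℂ) 1, HasSum (fun n : ℕ => a (n + 1) * z ^ (n + 1)) (H z))
    {r : ℝ} (hr0 : 0 ≤ r) (hr1 : r < 1) :
    ∃ C : ℝ, 0 ≤ C ∧ ∀ n : ℕ, ‖a (n + 1)‖ * r ^ (n + 1) ≤ C := by
  have hz : (r : ℂ) ∈ ball (0 : ℂ) 1 := by
    simp [Complex.dist_eq, _root_.abs_of_nonneg hr0, hr1]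
  have hs := (hH _ hz).summable
  have ht : Tendsto (fun n : ℕ => ‖a (n + 1) * (r : ℂ) ^ (n + 1)‖) atTop (nhds 0) := by
    simpa using hs.tendsto_atTop_zero.norm
  obtain ⟨C, hC⟩ := ht.bddAbove_range
  refine ⟨C, le_trans (norm_nonneg _) (hC (Set.mem_range_self 0)), fun n => ?_⟩
  have := hC (Set.mem_range_self n)
  simpa [norm_mul, norm_pow, Complex.norm_real, _root_.abs_of_nonneg hr0] using this

lemma hasFPS {a : ℕ → ℂ} {H : ℂ → ℂ}
    (hH : ∀ z ∈ ball (0 : ℂ) 1, HasSum (fun n : ℕ => a (n + 1) * z ^ (n + 1)) (H z)) :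
    HasFPowerSeriesOnBall H
      (FormalMultilinearSeries.ofScalars ℂ (fun k => if k = 0 then 0 else a k)) 0 1 := by
  set c : ℕ → ℂ := fun k => if k = 0 then 0 else a k with hc
  constructor
  · -- radius
    apply ENNReal.le_of_forall_nnreal_lt
    intro r hr
    have hr1 : (r : ℝ) < 1 := by exact_mod_cast hr
    obtain ⟨C, hC0, hC⟩ := coeffBound hH r.coe_nonneg hr1
    apply FormalMultilinearSeries.le_radius_of_bound _ C
    intro n
    rw [FormalMultilinearSeries.ofScalars_norm]
    match n with
    | 0 => simpa [hc] using hC0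
    | n + 1 => simpa [hc] using hC n
  · exact one_pos
  · intro y hy
    have hy' : y ∈ ball (0 : ℂ) 1 := by
      rw [← ENNReal.coe_one, Metric.emetric_ball_nnreal, NNReal.coe_one] at hy; exact hy
    have h1 := hH y hy'
    have h2 : HasSum (fun n : ℕ => c (n + 1) * y ^ (n + 1)) (H y - c 0 * y ^ 0) := by
      simpa [hc] using h1
    have h3 : HasSum (fun n : ℕ => c n * y ^ n) (H y) := by
      have := (hasSum_nat_add_iff' (f := fun n : ℕ => c n * y ^ n) 1).mp (by simpa using h2)
      simpa using this
    have h4 : (fun n => (FormalMultilinearSeries.ofScalars ℂ c n) fun _ => y)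
        = fun n : ℕ => c n * y ^ n := by
      funext n
      rw [FormalMultilinearSeries.ofScalars_apply_eq, smul_eq_mul]
    rw [zero_add, h4]; exact h3

lemma hasSum_zderiv {a : ℕ → ℂ} {H : ℂ → ℂ}
    (hH : ∀ z ∈ ball (0 : ℂ) 1, HasSum (fun n : ℕ => a (n + 1) * z ^ (n + 1)) (H z))
    {z : ℂ} (hz : z ∈ ball (0 : ℂ) 1) :
    HasSum (fun n : ℕ => ((n : ℂ) + 1) * a (n + 1) * z ^ (n + 1)) (z * deriv H z) := by
  have hP := hasFPS hH
  have hz' : z ∈ Metric.eball (0 : ℂ) 1 := by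
    rw [← ENNReal.coe_one, Metric.emetric_ball_nnreal, NNReal.coe_one]; exact hz
  have hF := hP.fderiv
  have h1 : HasSum (fun n => (FormalMultilinearSeries.ofScalars ℂ
      (fun k => if k = 0 then 0 else a k)).derivSeries n (fun _ => z)) (fderiv ℂ H (0 + z)) :=
    hF.hasSum hz'
  have h2 := h1.mapL (ContinuousLinearMap.apply ℂ ℂ z)
  have h3 : HasSum (fun n => (FormalMultilinearSeries.ofScalars ℂ
      (fun k => if k = 0 then 0 else a k)).derivSeries n (fun _ => z) z) (fderiv ℂ H z z) := by
    simpa using h2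
  have hterm : ∀ n : ℕ, (FormalMultilinearSeries.ofScalars ℂ
      (fun k => if k = 0 then 0 else a k)).derivSeries n (fun _ => z) z
      = ((n : ℂ) + 1) * a (n + 1) * z ^ (n + 1) := by
    intro n
    rw [FormalMultilinearSeries.derivSeries_apply_diag]
    rw [FormalMultilinearSeries.ofScalars_apply_eq]
    simp [smul_eq_mul]
    ring
  have hval : fderiv ℂ H z z = z * deriv H z := by
    calc fderiv ℂ H z z = fderiv ℂ H z (z • 1) := by rw [smul_eq_mul, mul_one]
    _ = z • fderiv ℂ H z 1 := by rw [map_smul]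
    _ = z * deriv H z := by rw [smul_eq_mul, fderiv_apply_one_eq_deriv]
  rw [← hval]
  exact h3.congr_fun fun n => (hterm n).symm

open Real in
lemma integral_I {d : ℕ → ℂ} {q : ℂ → ℂ}
    (hsum : ∀ z ∈ ball (0 : ℂ) 1, HasSum (fun k : ℕ => d k * z ^ k) (q z))
    {r : ℝ} (hr0 : 0 < r) (hr1 : r < 1)
    (hnorm : Summable (fun k : ℕ => ‖d k‖ * r ^ k)) (m : ℕ) :
    ∫ θ in (0:ℝ)..(2*π), q ((r:ℂ) * Complex.exp (θ * I)) * Complex.exp (-(m:ℂ) * θ * I)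
      = 2 * π * d m * r ^ m := by
  have hmem : ∀ θ : ℝ, (r:ℂ) * Complex.exp (θ * I) ∈ ball (0:ℂ) 1 := by
    intro θ
    simp only [mem_ball, dist_zero_right, norm_mul, Complex.norm_real,
      Complex.norm_exp]
    simp [_root_.abs_of_nonneg hr0.le, hr1]
  have hcont : ∀ k : ℕ, Continuous fun θ : ℝ =>
      d k * ((r:ℂ) * Complex.exp (θ * I)) ^ k * Complex.exp (-(m:ℂ) * θ * I) := by
    intro k
    have h1 : Continuous fun θ : ℝ => Complex.exp ((θ:ℂ) * I) :=
      Complex.continuous_exp.comp (Complex.continuous_ofReal.mul continuous_const)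
    have h2 : Continuous fun θ : ℝ => Complex.exp (-(m:ℂ) * (θ:ℂ) * I) := by
      apply Complex.continuous_exp.comp
      exact (continuous_const.mul Complex.continuous_ofReal).mul continuous_const
    exact (continuous_const.mul ((continuous_const.mul h1).pow k)).mul h2
  set f : ℕ → C(ℝ, ℂ) := fun k => ⟨_, hcont k⟩ with hf
  have hfnorm : ∀ k (θ : ℝ), ‖f k θ‖ = ‖d k‖ * r ^ k := by
    intro k θ
    simp only [hf, ContinuousMap.coe_mk, norm_mul, norm_pow, Complex.norm_real,
      Complex.norm_exp]
    simp [_root_.abs_of_nonneg hr0.le]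
  have hf_sum : Summable fun k : ℕ =>
      ‖(f k).restrict (⟨uIcc (0:ℝ) (2*π), isCompact_uIcc⟩ : TopologicalSpace.Compacts ℝ)‖ := by
    apply Summable.of_nonneg_of_le (fun k => norm_nonneg _) _ hnorm
    intro k
    apply ContinuousMap.norm_le _ (by positivity) |>.mpr
    intro x
    rw [ContinuousMap.restrict_apply]
    exact (hfnorm k x).le
  have hkey := intervalIntegral.hasSum_intervalIntegral_of_summable_norm (a := 0) (b := 2*π) hf_sum
  have heq : (∫ θ in (0:ℝ)..(2*π), ∑' k : ℕ, f k θ)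
      = ∫ θ in (0:ℝ)..(2*π), q ((r:ℂ) * Complex.exp (θ * I))
          * Complex.exp (-(m:ℂ) * θ * I) :=
    intervalIntegral.integral_congr fun θ _ => ((hsum _ (hmem θ)).mul_right _).tsum_eq
  rw [heq] at hkey
  have hint : ∀ k : ℕ, (∫ θ in (0:ℝ)..(2*π), f k θ)
      = if k = m then 2 * π * d m * r ^ m else 0 := by
    intro k
    have hptw : ∀ θ : ℝ, f k θ = (d k * (r:ℂ) ^ k) *
        Complex.exp ((((k:ℂ) - m) * I) * θ) := by
      intro θ
      have harg : (((k:ℂ) - m) * I) * θ = k * ((θ:ℂ) * I) + (-(m:ℂ) * θ * I) := by ring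
      simp only [hf, ContinuousMap.coe_mk]
      rw [harg, Complex.exp_add, mul_pow, ← Complex.exp_nat_mul]
      ring
    rw [intervalIntegral.integral_congr (fun θ _ => hptw θ)]
    rw [intervalIntegral.integral_const_mul]
    rcases eq_or_ne k m with hkm | hkm
    · subst hkm
      simp only [sub_self, zero_mul, Complex.exp_zero, if_pos rfl]
      rw [intervalIntegral.integral_const, sub_zero, Complex.real_smul]
      push_cast
      ring
    · have hc : (((k:ℂ) - m) * I) ≠ 0 := by
        simp only [ne_eq, mul_eq_zero, Complex.I_ne_zero, or_false, sub_eq_zero]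
        exact_mod_cast hkm
      rw [integral_exp_mul_complex hc]
      have h3 : Complex.exp ((((k:ℂ) - m) * I) * ((2*π : ℝ) : ℂ)) = 1 := by
        rw [show (((k:ℂ) - m) * I) * ((2*π : ℝ) : ℂ)
            = (((k:ℤ) - m : ℤ) : ℂ) * (2 * (π:ℂ) * I) by push_cast; ring]
        exact Complex.exp_int_mul_two_pi_mul_I _
      rw [h3]
      simp [hkm]
  exact ((hasSum_ite_eq m _).unique (hkey.congr_fun fun k => (hint k).symm)).symm

open Real in
lemma integral_J {d : ℕ → ℂ} {q : ℂ → ℂ}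
    (hsum : ∀ z ∈ ball (0 : ℂ) 1, HasSum (fun k : ℕ => d k * z ^ k) (q z))
    {r : ℝ} (hr0 : 0 < r) (hr1 : r < 1)
    (hnorm : Summable (fun k : ℕ => ‖d k‖ * r ^ k)) (m : ℕ) :
    ∫ θ in (0:ℝ)..(2*π), (starRingEnd ℂ) (q ((r:ℂ) * Complex.exp (θ * I)))
        * Complex.exp (-(m:ℂ) * θ * I)
      = if m = 0 then 2 * π * (starRingEnd ℂ) (d 0) else 0 := by
  have hmem : ∀ θ : ℝ, (r:ℂ) * Complex.exp (θ * I) ∈ ball (0:ℂ) 1 := by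
    intro θ
    simp only [mem_ball, dist_zero_right, norm_mul, Complex.norm_real,
      Complex.norm_exp]
    simp [_root_.abs_of_nonneg hr0.le, hr1]
  have hcont : ∀ k : ℕ, Continuous fun θ : ℝ =>
      (starRingEnd ℂ) (d k) * ((r:ℂ) * Complex.exp (-(θ:ℂ) * I)) ^ k
        * Complex.exp (-(m:ℂ) * θ * I) := by
    intro k
    have h1 : Continuous fun θ : ℝ => Complex.exp (-(θ:ℂ) * I) :=
      Complex.continuous_exp.comp ((Complex.continuous_ofReal.neg).mul continuous_const)
    have h2 : Continuous fun θ : ℝ => Complex.exp (-(m:ℂ) * (θ:ℂ) * I) := by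
      apply Complex.continuous_exp.comp
      exact (continuous_const.mul Complex.continuous_ofReal).mul continuous_const
    exact (continuous_const.mul ((continuous_const.mul h1).pow k)).mul h2
  set f : ℕ → C(ℝ, ℂ) := fun k => ⟨_, hcont k⟩ with hf
  have hfnorm : ∀ k (θ : ℝ), ‖f k θ‖ = ‖d k‖ * r ^ k := by
    intro k θ
    simp only [hf, ContinuousMap.coe_mk, norm_mul, norm_pow, Complex.norm_real,
      Complex.norm_exp, RingHomIsometric.norm_map]
    simp [_root_.abs_of_nonneg hr0.le]
  have hf_sum : Summable fun k : ℕ =>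
      ‖(f k).restrict (⟨uIcc (0:ℝ) (2*π), isCompact_uIcc⟩ : TopologicalSpace.Compacts ℝ)‖ := by
    apply Summable.of_nonneg_of_le (fun k => norm_nonneg _) _ hnorm
    intro k
    apply ContinuousMap.norm_le _ (by positivity) |>.mpr
    intro x
    rw [ContinuousMap.restrict_apply]
    exact (hfnorm k x).le
  have hkey := intervalIntegral.hasSum_intervalIntegral_of_summable_norm (a := 0) (b := 2*π) hf_sum
  have htsum : ∀ θ : ℝ, ∑' k : ℕ, f k θ
      = (starRingEnd ℂ) (q ((r:ℂ) * Complex.exp (θ * I)))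
          * Complex.exp (-(m:ℂ) * θ * I) := by
    intro θ
    have h1 : HasSum (fun k : ℕ => (starRingEnd ℂ) (d k * ((r:ℂ) * Complex.exp (θ * I)) ^ k))
        ((starRingEnd ℂ) (q ((r:ℂ) * Complex.exp (θ * I)))) :=
      (hsum _ (hmem θ)).map (starRingEnd ℂ) continuous_conj
    have h2 : ∀ k : ℕ, (starRingEnd ℂ) (d k * ((r:ℂ) * Complex.exp (θ * I)) ^ k)
        = (starRingEnd ℂ) (d k) * ((r:ℂ) * Complex.exp (-(θ:ℂ) * I)) ^ k := by
      intro k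
      rw [map_mul, map_pow, map_mul, Complex.conj_ofReal, ← Complex.exp_conj]
      congr 2
      simp [Complex.conj_ofReal]
    have h1' : HasSum (fun k : ℕ => (starRingEnd ℂ) (d k)
        * ((r:ℂ) * Complex.exp (-(θ:ℂ) * I)) ^ k)
        ((starRingEnd ℂ) (q ((r:ℂ) * Complex.exp (θ * I)))) :=
      h1.congr_fun fun k => (h2 k).symm
    exact (h1'.mul_right _).tsum_eq
  have heq : (∫ θ in (0:ℝ)..(2*π), ∑' k : ℕ, f k θ)
      = ∫ θ in (0:ℝ)..(2*π), (starRingEnd ℂ) (q ((r:ℂ) * Complex.exp (θ * I)))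
          * Complex.exp (-(m:ℂ) * θ * I) :=
    intervalIntegral.integral_congr fun θ _ => htsum θ
  rw [heq] at hkey
  have hint : ∀ k : ℕ, (∫ θ in (0:ℝ)..(2*π), f k θ)
      = if k = 0 ∧ m = 0 then 2 * π * (starRingEnd ℂ) (d 0) else 0 := by
    intro k
    have hptw : ∀ θ : ℝ, f k θ = ((starRingEnd ℂ) (d k) * (r:ℂ) ^ k) *
        Complex.exp (((-(k:ℂ) - m) * I) * θ) := by
      intro θ
      have harg : ((-(k:ℂ) - m) * I) * θ = k * (-(θ:ℂ) * I) + (-(m:ℂ) * θ * I) := by ring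
      simp only [hf, ContinuousMap.coe_mk]
      rw [harg, Complex.exp_add, mul_pow, ← Complex.exp_nat_mul]
      ring
    rw [intervalIntegral.integral_congr (fun θ _ => hptw θ)]
    rw [intervalIntegral.integral_const_mul]
    rcases eq_or_ne (k + m) 0 with hkm | hkm
    · obtain ⟨hk0, hm0⟩ := Nat.add_eq_zero.mp hkm
      subst hk0; subst hm0
      rw [if_pos ⟨rfl, rfl⟩]
      have hone : ∀ θ : ℝ, Complex.exp (((-((0:ℕ):ℂ)) - ((0:ℕ):ℂ)) * I * θ) = 1 := by
        intro θ; norm_num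
      rw [intervalIntegral.integral_congr (fun θ _ => hone θ), intervalIntegral.integral_const,
        sub_zero, Complex.real_smul]
      push_cast
      ring
    · have hc : ((-(k:ℂ) - m) * I) ≠ 0 := by
        simp only [ne_eq, mul_eq_zero, Complex.I_ne_zero, or_false, sub_eq_zero]
        intro hcon
        have : (k : ℂ) + m = 0 := by linear_combination -hcon
        have : ((k + m : ℕ) : ℂ) = 0 := by push_cast; exact this
        exact hkm (by exact_mod_cast this)
      rw [integral_exp_mul_complex hc]
      have h3 : Complex.exp (((-(k:ℂ) - m) * I) * ((2*π : ℝ) : ℂ)) = 1 := by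
        rw [show ((-(k:ℂ) - m) * I) * ((2*π : ℝ) : ℂ)
            = ((-(k:ℤ) - m : ℤ) : ℂ) * (2 * (π:ℂ) * I) by push_cast; ring]
        exact Complex.exp_int_mul_two_pi_mul_I _
      rw [h3]
      have : ¬ (k = 0 ∧ m = 0) := by
        rintro ⟨h1, h2⟩; exact hkm (by simp [h1, h2])
      simp [this]
  have h4 := hkey.congr_fun fun k => (hint k).symm
  rcases eq_or_ne m 0 with hm | hm
  · subst hm
    rw [if_pos rfl]
    have h5 : (fun k : ℕ => if k = 0 ∧ (0:ℕ) = 0 then 2 * (π:ℂ) * (starRingEnd ℂ) (d 0) else 0)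
        = fun k : ℕ => if k = 0 then 2 * (π:ℂ) * (starRingEnd ℂ) (d 0) else 0 := by
      funext k; simp
    rw [h5] at h4
    exact ((hasSum_ite_eq 0 _).unique h4).symm
  · rw [if_neg hm]
    have h5 : (fun k : ℕ => if k = 0 ∧ m = 0 then 2 * (π:ℂ) * (starRingEnd ℂ) (d 0) else 0)
        = fun _ => (0:ℂ) := by
      funext k; simp [hm]
    rw [h5] at h4
    exact h4.unique hasSum_zero

lemma diffAtH {a : ℕ → ℂ} {H : ℂ → ℂ}
    (hH : ∀ z ∈ ball (0 : ℂ) 1, HasSum (fun n : ℕ => a (n + 1) * z ^ (n + 1)) (H z))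
    {z : ℂ} (hz : z ∈ ball (0 : ℂ) 1) : DifferentiableAt ℂ H z := by
  have hP := hasFPS hH
  have hz' : z ∈ Metric.eball (0 : ℂ) 1 := by
    rw [← ENNReal.coe_one, Metric.emetric_ball_nnreal, NNReal.coe_one]; exact hz
  exact (hP.differentiableOn z hz').differentiableAt (EMetric.isOpen_ball.mem_nhds hz')

open Real in
theorem stmt_3 (α : ℝ) (hα0 : 0 ≤ α) (hα1 : α < 1)
    (a b : ℕ → ℂ) (H G h g : ℂ → ℂ)
    (hH : ∀ z ∈ ball (0 : ℂ) 1, HasSum (fun n : ℕ => a (n + 1) * z ^ (n + 1)) (H z))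
    (hG : ∀ z ∈ ball (0 : ℂ) 1, HasSum (fun n : ℕ => b (n + 1) * z ^ (n + 1)) (G z))
    (hh : ∀ z, h z = Complex.exp (H z))
    (hg : ∀ z, g z = Complex.exp (G z))
    (hstar : ∀ z ∈ ball (0 : ℂ) 1,
        α < (1 + z * deriv h z / h z - z * deriv g z / g z).re) :
    ∀ n : ℕ, 1 ≤ n → ‖a n - b n‖ ≤ 2 * (1 - α) / n := by
  intro n hn
  set d : ℕ → ℂ := fun k => if k = 0 then 1 - (α:ℂ) else (k:ℂ) * (a k - b k) with hd
  set q : ℂ → ℂ := fun z => 1 - (α:ℂ) + z * deriv H z - z * deriv G z with hq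
  have hqsum : ∀ z ∈ ball (0:ℂ) 1, HasSum (fun k : ℕ => d k * z ^ k) (q z) := by
    intro z hz
    have hAB := (hasSum_zderiv hH hz).sub (hasSum_zderiv hG hz)
    have hdsucc : ∀ m : ℕ, d (m+1) = ((m:ℂ)+1) * (a (m+1) - b (m+1)) := by
      intro m
      simp only [hd]
      rw [if_neg (Nat.succ_ne_zero m)]
      push_cast
      ring
    have h1 : HasSum (fun m : ℕ => d (m+1) * z ^ (m+1))
        (z * deriv H z - z * deriv G z) := by
      refine hAB.congr_fun fun m => ?_
      rw [hdsucc m]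
      ring
    have h2 : HasSum (fun m : ℕ => d (m+1) * z ^ (m+1))
        (q z - ∑ i ∈ Finset.range 1, d i * z ^ i) := by
      convert h1 using 1
      first
      | (simp [hq, hd]; ring)
      | simp [hq, hd]
    exact (hasSum_nat_add_iff' 1).mp h2
  have hnormsum : ∀ r : ℝ, 0 ≤ r → r < 1 → Summable (fun k : ℕ => ‖d k‖ * r ^ k) := by
    intro r hr0 hr1
    set r' : ℝ := (1+r)/2 with hr'
    have hr'0 : 0 < r' := by simp only [hr']; linarith
    have hr'1 : r' < 1 := by simp only [hr']; linarith
    have hrr' : r < r' := by simp only [hr']; linarith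
    obtain ⟨Ca, hCa0, hCa⟩ := coeffBound hH hr'0.le hr'1
    obtain ⟨Cb, hCb0, hCb⟩ := coeffBound hG hr'0.le hr'1
    set x : ℝ := r / r' with hx
    have hx0 : 0 ≤ x := div_nonneg hr0 hr'0.le
    have hx1 : x < 1 := (div_lt_one hr'0).mpr hrr'
    have hs : Summable (fun k : ℕ => (Ca + Cb) * (((k:ℝ)+1) * x ^ (k+1))) := by
      have h0 : Summable (fun k : ℕ => (k:ℝ) * x ^ k) := by
        simpa using summable_pow_mul_geometric_of_norm_lt_one 1
          (r := x) (by rwa [Real.norm_eq_abs, _root_.abs_of_nonneg hx0])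
      have h1 := (summable_nat_add_iff 1).mpr h0
      have h2 : (fun k : ℕ => ((k+1:ℕ):ℝ) * x ^ (k+1)) = fun k : ℕ => ((k:ℝ)+1) * x^(k+1) := by
        funext k; push_cast; ring
      exact ((h2 ▸ h1)).mul_left _
    refine (summable_nat_add_iff 1).mp (Summable.of_nonneg_of_le (fun k => by positivity) ?_ hs)
    intro k
    have hr_eq : r = x * r' := by rw [hx, div_mul_cancel₀ r hr'0.ne']
    have h1 : ‖d (k+1)‖ = ((k:ℝ)+1) * ‖a (k+1) - b (k+1)‖ := by
      have : d (k+1) = (((k+1:ℕ)):ℂ) * (a (k+1) - b (k+1)) := by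
        simp only [hd]; rw [if_neg (Nat.succ_ne_zero k)]
      rw [this, norm_mul, Complex.norm_natCast]
      push_cast; ring
    have h2 : ‖a (k+1) - b (k+1)‖ * r'^(k+1) ≤ Ca + Cb := by
      calc ‖a (k+1) - b (k+1)‖ * r'^(k+1)
          ≤ (‖a (k+1)‖ + ‖b (k+1)‖) * r'^(k+1) := by
            apply mul_le_mul_of_nonneg_right (norm_sub_le _ _) (by positivity)
        _ = ‖a (k+1)‖ * r'^(k+1) + ‖b (k+1)‖ * r'^(k+1) := by ring
        _ ≤ Ca + Cb := add_le_add (hCa k) (hCb k)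
    have key : ‖d (k+1)‖ * r ^ (k+1)
        = (((k:ℝ)+1) * x^(k+1)) * (‖a (k+1) - b (k+1)‖ * r'^(k+1)) := by
      rw [h1, hr_eq, mul_pow]; ring
    rw [key]
    calc (((k:ℝ)+1) * x^(k+1)) * (‖a (k+1) - b (k+1)‖ * r'^(k+1))
        ≤ (((k:ℝ)+1) * x^(k+1)) * (Ca + Cb) :=
          mul_le_mul_of_nonneg_left h2 (by positivity)
      _ = (Ca + Cb) * (((k:ℝ)+1) * x^(k+1)) := by ring
  have hq_pos : ∀ z ∈ ball (0:ℂ) 1, 0 < (q z).re := by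
    intro z hz
    have hdH := diffAtH hH hz
    have hdG := diffAtH hG hz
    have hhz : deriv h z = Complex.exp (H z) * deriv H z := by
      have hfun : h = fun w => Complex.exp (H w) := funext hh
      rw [hfun]
      exact (hdH.hasDerivAt.cexp).deriv
    have hgz : deriv g z = Complex.exp (G z) * deriv G z := by
      have hfun : g = fun w => Complex.exp (G w) := funext hg
      rw [hfun]
      exact (hdG.hasDerivAt.cexp).deriv
    have hrel : q z = (1 + z * deriv h z / h z - z * deriv g z / g z) - (α:ℂ) := by
      rw [hq, hh z, hg z, hhz, hgz]
      field_simp [Complex.exp_ne_zero]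
      ring
    rw [hrel, Complex.sub_re, Complex.ofReal_re]
    exact sub_pos.mpr (hstar z hz)
  have hbound : ∀ r : ℝ, 0 < r → r < 1 → ‖d n‖ * r ^ n ≤ 2 * (1 - α) := by
    intro r hr0 hr1
    have hnorm := hnormsum r hr0.le hr1
    have hI := integral_I hqsum hr0 hr1 hnorm
    have hJ := integral_J hqsum hr0 hr1 hnorm
    have hmem : ∀ θ : ℝ, (r:ℂ) * Complex.exp (θ * I) ∈ ball (0:ℂ) 1 := by
      intro θ
      simp only [mem_ball, dist_zero_right, norm_mul, Complex.norm_real,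
        Complex.norm_exp]
      simp [_root_.abs_of_nonneg hr0.le, hr1]
    have hcontq : Continuous fun θ : ℝ => q ((r:ℂ) * Complex.exp (θ * I)) := by
      have hcf : ∀ k : ℕ, Continuous fun θ : ℝ => d k * ((r:ℂ) * Complex.exp (θ * I)) ^ k := by
        intro k
        have h1 : Continuous fun θ : ℝ => Complex.exp ((θ:ℂ) * I) :=
          Complex.continuous_exp.comp (Complex.continuous_ofReal.mul continuous_const)
        exact continuous_const.mul ((continuous_const.mul h1).pow k)
      have hb : ∀ (k : ℕ) (θ : ℝ),
          ‖d k * ((r:ℂ) * Complex.exp (θ * I)) ^ k‖ ≤ ‖d k‖ * r ^ k := by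
        intro k θ
        simp only [norm_mul, norm_pow, Complex.norm_real,
          Complex.norm_exp]
        simp [_root_.abs_of_nonneg hr0.le]
      have hct := continuous_tsum hcf hnorm hb
      have heq : (fun θ : ℝ => q ((r:ℂ) * Complex.exp (θ * I)))
          = fun θ : ℝ => ∑' k : ℕ, d k * ((r:ℂ) * Complex.exp (θ * I)) ^ k := by
        funext θ
        exact ((hqsum _ (hmem θ)).tsum_eq).symm
      rw [heq]; exact hct
    have hconte : ∀ m : ℕ, Continuous fun θ : ℝ => Complex.exp (-(m:ℂ) * θ * I) := by
      intro m
      apply Complex.continuous_exp.comp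
      exact (continuous_const.mul Complex.continuous_ofReal).mul continuous_const
    have hsplit : ∀ m : ℕ,
        (∫ θ in (0:ℝ)..(2*π), ((2*(q ((r:ℂ) * Complex.exp (θ * I))).re : ℝ) : ℂ)
          * Complex.exp (-(m:ℂ) * θ * I))
        = 2 * π * d m * r ^ m + (if m = 0 then 2 * π * (starRingEnd ℂ) (d 0) else 0) := by
      intro m
      have e1 : ∀ θ : ℝ, ((2*(q ((r:ℂ) * Complex.exp (θ * I))).re : ℝ) : ℂ)
            * Complex.exp (-(m:ℂ) * θ * I)
          = q ((r:ℂ) * Complex.exp (θ * I)) * Complex.exp (-(m:ℂ) * θ * I)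
            + (starRingEnd ℂ) (q ((r:ℂ) * Complex.exp (θ * I)))
              * Complex.exp (-(m:ℂ) * θ * I) := by
        intro θ
        rw [← add_mul, Complex.add_conj]
      rw [intervalIntegral.integral_congr fun θ _ => e1 θ]
      have hic : IntervalIntegrable (fun θ : ℝ =>
          (starRingEnd ℂ) (q ((r:ℂ) * Complex.exp (θ * I))) * Complex.exp (-(m:ℂ) * θ * I))
          MeasureTheory.volume 0 (2*π) := by
        apply Continuous.intervalIntegrable
        exact (Continuous.comp continuous_conj hcontq).mul (hconte m)
      rw [intervalIntegral.integral_add (f := fun θ : ℝ => q ((r:ℂ) * Complex.exp (θ * I)) * Complex.exp (-(m:ℂ) * θ * I)) ((hcontq.mul (hconte m)).intervalIntegrable _ _) hic]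
      rw [hI m, hJ m]
    have hA : (∫ θ in (0:ℝ)..(2*π), 2*(q ((r:ℂ) * Complex.exp (θ * I))).re)
        = 4*π*(1-α) := by
      have h0 := hsplit 0
      have hz0 : ∀ θ : ℝ, ((2*(q ((r:ℂ) * Complex.exp (θ * I))).re : ℝ) : ℂ)
          * Complex.exp (-((0:ℕ):ℂ) * θ * I)
          = ((2*(q ((r:ℂ) * Complex.exp (θ * I))).re : ℝ) : ℂ) := by
        intro θ; norm_num
      rw [intervalIntegral.integral_congr fun θ _ => hz0 θ] at h0
      rw [intervalIntegral.integral_ofReal] at h0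
      have hd0 : d 0 = 1 - (α:ℂ) := by simp [hd]
      rw [hd0, pow_zero, if_pos rfl] at h0
      have h1 : ((∫ θ in (0:ℝ)..(2*π), 2*(q ((r:ℂ) * Complex.exp (θ * I))).re : ℝ) : ℂ)
          = ((4*π*(1-α) : ℝ) : ℂ) := by
        rw [h0]
        rw [map_sub, map_one, Complex.conj_ofReal]
        push_cast
        ring
      exact_mod_cast h1
    have hn0 : n ≠ 0 := Nat.one_le_iff_ne_zero.mp hn
    have h1 := hsplit n
    rw [if_neg hn0, add_zero] at h1
    have h2 : ‖2 * (π:ℂ) * d n * (r:ℂ)^n‖ = 2*π*(‖d n‖ * r^n) := by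
      rw [norm_mul, norm_mul, norm_mul, norm_pow, Complex.norm_real, Real.norm_eq_abs,
        Complex.norm_real, Real.norm_eq_abs]
      rw [_root_.abs_of_nonneg Real.pi_nonneg, _root_.abs_of_nonneg hr0.le]
      simp
      ring
    have h3 : 2*π*(‖d n‖ * r^n) ≤ 4*π*(1-α) := by
      calc 2*π*(‖d n‖ * r^n) = ‖2 * (π:ℂ) * d n * (r:ℂ)^n‖ := h2.symm
        _ = ‖∫ θ in (0:ℝ)..(2*π), ((2*(q ((r:ℂ) * Complex.exp (θ * I))).re : ℝ) : ℂ)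
              * Complex.exp (-(n:ℂ) * θ * I)‖ := by rw [h1]
        _ ≤ ∫ θ in (0:ℝ)..(2*π), ‖((2*(q ((r:ℂ) * Complex.exp (θ * I))).re : ℝ) : ℂ)
              * Complex.exp (-(n:ℂ) * θ * I)‖ :=
            intervalIntegral.norm_integral_le_integral_norm Real.two_pi_pos.le
        _ = ∫ θ in (0:ℝ)..(2*π), 2*(q ((r:ℂ) * Complex.exp (θ * I))).re := by
            refine intervalIntegral.integral_congr fun θ _ => ?_
            rw [norm_mul, Complex.norm_real, Real.norm_eq_abs,
              Complex.norm_exp]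
            have hpos := hq_pos _ (hmem θ)
            simp [_root_.abs_of_nonneg (by linarith : (0:ℝ) ≤ 2*(q ((r:ℂ) * Complex.exp (θ * I))).re)]
        _ = 4*π*(1-α) := hA
    nlinarith [Real.pi_pos]
  have hfinal : ‖d n‖ ≤ 2*(1-α) := by
    have h0 : Tendsto (fun j : ℕ => (1/2:ℝ)^(j+1)) atTop (nhds 0) :=
      (tendsto_pow_atTop_nhds_zero_of_lt_one (by norm_num) (by norm_num)).comp
        (Filter.tendsto_add_atTop_nat 1)
    have h1 : Tendsto (fun j : ℕ => 1 - (1/2:ℝ)^(j+1)) atTop (nhds 1) := by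
      simpa using tendsto_const_nhds.sub h0
    have hseq : Tendsto (fun j : ℕ => ‖d n‖ * (1 - (1/2:ℝ)^(j+1)) ^ n) atTop (nhds (‖d n‖)) := by
      have h2 := (h1.pow n).const_mul (‖d n‖)
      simpa using h2
    refine le_of_tendsto hseq (Filter.Eventually.of_forall fun j => ?_)
    have hlt1 : (1/2:ℝ)^(j+1) < 1 := pow_lt_one₀ (by norm_num) (by norm_num) (Nat.succ_ne_zero j)
    have hgt0 : 0 < (1/2:ℝ)^(j+1) := by positivity
    exact hbound _ (by linarith) (by linarith)
  have hdn : d n = (n:ℂ) * (a n - b n) := by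
    simp only [hd]; rw [if_neg (Nat.one_le_iff_ne_zero.mp hn)]
  have hnd : ‖d n‖ = (n:ℝ) * ‖a n - b n‖ := by rw [hdn, norm_mul, Complex.norm_natCast]
  have hnpos : (0:ℝ) < n := by exact_mod_cast hn
  rw [le_div_iff₀ hnpos]
  calc ‖a n - b n‖ * n = ‖d n‖ := by rw [hnd]; ring
    _ ≤ 2*(1-α) := hfinal
end

section
/- Let (aₙ)ₙ≥1 and (bₙ)ₙ≥1 be complex sequences such that the power series H(z) = Σₙ₌₁^∞ aₙ zⁿ and G(z) = Σₙ₌₁^∞ bₙ zⁿ converge for all z in the open unit disk 𝔻. Set h = exp(H) and g = exp(G), and suppose that Re(1 + z·h′(z)/h(z) − z·g′(z)/g(z)) > 0 for all z ∈ 𝔻. Then |aₙ − bₙ| ≤ 2/n for every n ≥ 1. -/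
open Complex Metric Set FormalMultilinearSeries intervalIntegral Real

lemma myBallEq (z : ℂ) : z ∈ Metric.eball (0 : ℂ) 1 ↔ z ∈ ball (0 : ℂ) 1 := by
  rw [← ENNReal.ofReal_one, Metric.eball_ofReal]

lemma lemA {c : ℕ → ℂ} {f : ℂ → ℂ}
    (hf : ∀ z ∈ ball (0 : ℂ) 1, HasSum (fun n : ℕ => c n * z ^ n) (f z)) :
    HasFPowerSeriesOnBall f (ofScalars ℂ c) 0 1 := by
  constructor
  · refine ENNReal.le_of_forall_nnreal_lt fun r hr => ?_
    apply FormalMultilinearSeries.le_radius_of_tendsto _ (l := 0)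
    have hr1 : (r : ℝ) < 1 := by exact_mod_cast hr
    have hrb : ((r : ℝ) : ℂ) ∈ ball (0 : ℂ) 1 := by
      simp only [mem_ball, dist_zero_right]
      simpa [_root_.abs_of_nonneg r.coe_nonneg] using hr1
    have h2 := (hf _ hrb).summable.tendsto_atTop_zero.norm
    simp only [norm_zero] at h2
    convert h2 using 2 with n
    rw [ofScalars_norm, norm_mul, norm_pow]
    norm_num
  · exact one_pos
  · intro y hy
    have hyb : y ∈ ball (0 : ℂ) 1 := by
      exact (myBallEq y).mp hy
    have := hf y hyb
    rw [zero_add]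
    refine this.congr_fun fun n => ?_
    rw [ofScalars_apply_eq, smul_eq_mul]

lemma lemB {c : ℕ → ℂ} {f : ℂ → ℂ}
    (hf : HasFPowerSeriesOnBall f (ofScalars ℂ c) 0 1) {z : ℂ} (hz : z ∈ ball (0 : ℂ) 1) :
    HasSum (fun n : ℕ => (n + 1 : ℂ) * c (n + 1) * z ^ (n + 1)) (z * deriv f z) := by
  have hz' : z ∈ Metric.eball (0 : ℂ) 1 := by
    exact (myBallEq z).mpr hz
  have h1 := (hf.fderiv).hasSum (y := z) (by simpa [Metric.mem_eball] using hz')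
  have h2 := h1.mapL (ContinuousLinearMap.apply ℂ ℂ z)
  simp only [ContinuousLinearMap.apply_apply] at h2
  have h3 : (fderiv ℂ f (0 + z)) z = z * deriv f z := by
    rw [zero_add]
    have : (fderiv ℂ f z) z = (fderiv ℂ f z) (z • 1) := by norm_num
    rw [this, (fderiv ℂ f z).map_smul, smul_eq_mul, fderiv_apply_one_eq_deriv]
  rw [h3] at h2
  refine h2.congr_fun fun n => ?_
  rw [derivSeries_apply_diag, ofScalars_apply_eq]
  rw [nsmul_eq_mul, smul_eq_mul]
  push_cast
  ring

lemma lemC {d : ℕ → ℂ} {p : ℂ → ℂ} (hp : HasFPowerSeriesOnBall p (ofScalars ℂ d) 0 1)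
    {r : ℝ} (hr0 : 0 < r) (hr1 : r < 1) (n : ℕ) :
    ∫ θ in (0:ℝ)..(2*π), Complex.exp (-(n:ℂ) * θ * I) * p (circleMap 0 r θ) =
      2 * π * (d n * (r:ℂ) ^ n) := by
  have hsub : closedBall (0:ℂ) r ⊆ Metric.eball (0:ℂ) 1 := by
    intro z hz
    rw [myBallEq]
    simp only [mem_closedBall, mem_ball, dist_zero_right] at hz ⊢
    linarith
  have hd : DifferentiableOn ℂ p (closedBall (0:ℂ) (⟨r, hr0.le⟩ : NNReal)) :=
    hp.differentiableOn.mono hsub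
  have hps := hd.hasFPowerSeriesOnBall (by exact_mod_cast hr0)
  have heq : ofScalars ℂ d = cauchyPowerSeries p 0 r :=
    hp.hasFPowerSeriesAt.eq_formalMultilinearSeries hps.hasFPowerSeriesAt
  have hcoef : d n = (2 * ↑π * I : ℂ)⁻¹ •
      ∮ z in C(0, r), (1 / (z - 0)) ^ n • (z - 0)⁻¹ • p z := by
    have h1 : (ofScalars ℂ d n fun _ => (1:ℂ)) = (cauchyPowerSeries p 0 r n fun _ => (1:ℂ)) := by
      rw [heq]
    rw [ofScalars_apply_eq, cauchyPowerSeries_apply] at h1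
    simpa using h1
  rw [circleIntegral] at hcoef
  simp only [smul_eq_mul, deriv_circleMap, sub_zero, one_div] at hcoef
  have hrne : (r:ℂ) ≠ 0 := by exact_mod_cast hr0.ne'
  have hint : ∀ θ : ℝ, circleMap 0 r θ * I * ((circleMap 0 r θ)⁻¹ ^ n *
      ((circleMap 0 r θ)⁻¹ * p (circleMap 0 r θ)))
      = I * ((r:ℂ)⁻¹ ^ n * (Complex.exp (-(n:ℂ) * θ * I) * p (circleMap 0 r θ))) := by
    intro θ
    have hEne : Complex.exp ((θ:ℂ)*I) ≠ 0 := Complex.exp_ne_zero _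
    have hcm : circleMap 0 r θ = (r:ℂ) * Complex.exp (θ * I) := by simp [circleMap]
    have h4 : Complex.exp (-(n:ℂ)*θ*I) = (Complex.exp ((θ:ℂ)*I))⁻¹ ^ n := by
      rw [← Complex.exp_neg, ← Complex.exp_nat_mul]
      congr 1
      ring
    rw [hcm, h4]
    field_simp
    ring
  rw [intervalIntegral.integral_congr (fun θ _ => hint θ)] at hcoef
  rw [intervalIntegral.integral_const_mul, intervalIntegral.integral_const_mul] at hcoef
  have hπ : ((π:ℝ):ℂ) ≠ 0 := by exact_mod_cast Real.pi_ne_zero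
  rw [hcoef]
  field_simp
  rw [mul_comm _ ((r:ℂ) ^ n), ← mul_assoc, ← mul_pow, one_div, mul_inv_cancel₀ hrne, one_pow, one_mul]
  congr 1
  funext θ
  ring_nf

lemma lemD {p : ℂ → ℂ} (hdiff : ∀ z ∈ ball (0:ℂ) 1, DifferentiableAt ℂ p z)
    {r : ℝ} (hr0 : 0 < r) (hr1 : r < 1) {n : ℕ} (hn : 1 ≤ n) :
    ∫ θ in (0:ℝ)..(2*π), Complex.exp ((n:ℂ) * θ * I) * p (circleMap 0 r θ) = 0 := by
  set q : ℂ → ℂ := fun z => z ^ (n - 1) * p z with hq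
  have hsub : closedBall (0:ℂ) r ⊆ ball (0:ℂ) 1 := by
    intro z hz
    simp only [mem_closedBall, mem_ball, dist_zero_right] at hz ⊢
    linarith
  have hzero : (∮ z in C(0, r), q z) = 0 := by
    apply circleIntegral_eq_zero_of_differentiable_on_off_countable hr0.le
      (s := (∅ : Set ℂ)) countable_empty
    · apply ContinuousOn.mul (by fun_prop)
      intro z hz
      exact (hdiff z (hsub hz)).continuousAt.continuousWithinAt
    · intro z hz
      exact (differentiableAt_pow _).mul (hdiff z (hsub (ball_subset_closedBall hz.1)))
  rw [circleIntegral] at hzero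
  simp only [smul_eq_mul, deriv_circleMap] at hzero
  have hrne : (r:ℂ) ≠ 0 := by exact_mod_cast hr0.ne'
  have hint : ∀ θ : ℝ, circleMap 0 r θ * I * q (circleMap 0 r θ)
      = I * ((r:ℂ) ^ n * (Complex.exp ((n:ℂ) * θ * I) * p (circleMap 0 r θ))) := by
    intro θ
    have hcm : circleMap 0 r θ = (r:ℂ) * Complex.exp (θ * I) := by simp [circleMap]
    have hpow : circleMap 0 r θ * (circleMap 0 r θ) ^ (n - 1) = (circleMap 0 r θ) ^ n := by
      rw [← pow_succ']
      congr 1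
      omega
    have h4 : (Complex.exp ((θ:ℂ)*I)) ^ n = Complex.exp ((n:ℂ)*θ*I) := by
      rw [← Complex.exp_nat_mul]
      congr 1
      ring
    rw [hq]
    simp only []
    rw [show circleMap 0 r θ * I * ((circleMap 0 r θ) ^ (n-1) * p (circleMap 0 r θ))
        = (circleMap 0 r θ * (circleMap 0 r θ) ^ (n-1)) * I * p (circleMap 0 r θ) by ring,
      hpow, hcm, mul_pow, h4]
    ring
  rw [intervalIntegral.integral_congr (fun θ _ => hint θ)] at hzero
  rw [intervalIntegral.integral_const_mul, intervalIntegral.integral_const_mul] at hzero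
  have hrn : ((r:ℂ)) ^ n ≠ 0 := pow_ne_zero _ hrne
  rcases mul_eq_zero.mp hzero with h | h
  · exact absurd h I_ne_zero
  rcases mul_eq_zero.mp h with h | h
  · exact absurd h hrn
  exact h

theorem stmt_4 (a b : ℕ → ℂ) (H G h g : ℂ → ℂ)
    (hH : ∀ z ∈ ball (0 : ℂ) 1, HasSum (fun n : ℕ => a (n + 1) * z ^ (n + 1)) (H z))
    (hG : ∀ z ∈ ball (0 : ℂ) 1, HasSum (fun n : ℕ => b (n + 1) * z ^ (n + 1)) (G z))
    (hh : ∀ z, h z = Complex.exp (H z))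
    (hg : ∀ z, g z = Complex.exp (G z))
    (hstar : ∀ z ∈ ball (0 : ℂ) 1,
        0 < (1 + z * deriv h z / h z - z * deriv g z / g z).re) :
    ∀ n : ℕ, 1 ≤ n → ‖a n - b n‖ ≤ 2 / n := by
  -- coefficient sequences with 0th term adjusted
  set cH : ℕ → ℂ := fun n => if n = 0 then 0 else a n with hcH
  set cG : ℕ → ℂ := fun n => if n = 0 then 0 else b n with hcG
  have hHsum : ∀ z ∈ ball (0 : ℂ) 1, HasSum (fun n : ℕ => cH n * z ^ n) (H z) := by
    intro z hz
    have h0 : HasSum (fun n : ℕ => cH (n+1) * z ^ (n+1)) (H z) := by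
      simpa [hcH] using hH z hz
    have := (hasSum_nat_add_iff (f := fun n : ℕ => cH n * z ^ n) 1).mp h0
    simpa [hcH] using this
  have hGsum : ∀ z ∈ ball (0 : ℂ) 1, HasSum (fun n : ℕ => cG n * z ^ n) (G z) := by
    intro z hz
    have h0 : HasSum (fun n : ℕ => cG (n+1) * z ^ (n+1)) (G z) := by
      simpa [hcG] using hG z hz
    have := (hasSum_nat_add_iff (f := fun n : ℕ => cG n * z ^ n) 1).mp h0
    simpa [hcG] using this
  have hPH := lemA hHsum
  have hPG := lemA hGsum
  have hdiffH : ∀ z ∈ ball (0:ℂ) 1, DifferentiableAt ℂ H z := by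
    intro z hz
    exact (hPH.differentiableOn z ((myBallEq z).mpr hz)).differentiableAt
      (Metric.isOpen_eball.mem_nhds ((myBallEq z).mpr hz))
  have hdiffG : ∀ z ∈ ball (0:ℂ) 1, DifferentiableAt ℂ G z := by
    intro z hz
    exact (hPG.differentiableOn z ((myBallEq z).mpr hz)).differentiableAt
      (Metric.isOpen_eball.mem_nhds ((myBallEq z).mpr hz))
  -- the function p and its coefficients
  set p : ℂ → ℂ := fun z => 1 + z * deriv H z - z * deriv G z with hp
  set d : ℕ → ℂ := fun n => if n = 0 then 1 else n * (a n - b n) with hd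
  have hdsum : ∀ z ∈ ball (0 : ℂ) 1, HasSum (fun n : ℕ => d n * z ^ n) (p z) := by
    intro z hz
    have hBH := lemB hPH hz
    have hBG := lemB hPG hz
    have hsub := hBH.sub hBG
    have h0 : HasSum (fun n : ℕ => d (n+1) * z ^ (n+1))
        (z * deriv H z - z * deriv G z) := by
      refine hsub.congr_fun fun n => ?_
      simp only [hd, hcH, hcG, Nat.succ_ne_zero, if_false]
      push_cast
      ring
    have := (hasSum_nat_add_iff (f := fun n : ℕ => d n * z ^ n) 1).mp h0
    have h1 : z * deriv H z - z * deriv G z + ∑ i ∈ Finset.range 1, d i * z ^ i = p z := by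
      simp [hd, hp]
      ring
    rwa [h1] at this
  have hQ := lemA hdsum
  have hdiffp : ∀ z ∈ ball (0:ℂ) 1, DifferentiableAt ℂ p z := by
    intro z hz
    exact (hQ.differentiableOn z ((myBallEq z).mpr hz)).differentiableAt
      (Metric.isOpen_eball.mem_nhds ((myBallEq z).mpr hz))
  -- positivity of the real part of p
  have hpRe : ∀ z ∈ ball (0:ℂ) 1, 0 < (p z).re := by
    intro z hz
    have hs := hstar z hz
    have hEh : deriv h z = Complex.exp (H z) * deriv H z := by
      have hfun : h = fun w => Complex.exp (H w) := funext hh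
      rw [hfun]
      exact ((hdiffH z hz).hasDerivAt.cexp).deriv
    have hEg : deriv g z = Complex.exp (G z) * deriv G z := by
      have hfun : g = fun w => Complex.exp (G w) := funext hg
      rw [hfun]
      exact ((hdiffG z hz).hasDerivAt.cexp).deriv
    have e1 : z * deriv h z / h z = z * deriv H z := by
      rw [hEh, hh z]
      field_simp [Complex.exp_ne_zero]
    have e2 : z * deriv g z / g z = z * deriv G z := by
      rw [hEg, hg z]
      field_simp [Complex.exp_ne_zero]
    rw [e1, e2] at hs
    exact hs
  -- main bound
  intro n hn
  have hbound : ∀ r : ℝ, 0 < r → r < 1 → ‖d n‖ * r ^ n ≤ 2 := by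
    intro r hr0 hr1
    have hC := lemC hQ hr0 hr1 n
    have hC0 := lemC hQ hr0 hr1 0
    have hD := lemD hdiffp hr0 hr1 hn
    have hcm_mem : ∀ θ : ℝ, circleMap 0 r θ ∈ ball (0:ℂ) 1 := by
      intro θ
      simp only [mem_ball, dist_zero_right, norm_circleMap_zero]
      rwa [_root_.abs_of_pos hr0]
    have hpc : Continuous fun θ : ℝ => p (circleMap 0 r θ) := by
      refine continuous_iff_continuousAt.mpr fun θ => ?_
      exact ((hdiffp _ (hcm_mem θ)).continuousAt).comp (continuous_circleMap 0 r).continuousAt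
    have hec : ∀ w : ℂ, Continuous fun θ : ℝ => Complex.exp (w * θ * I) := by
      intro w
      fun_prop
    have hI1 : IntervalIntegrable (fun θ : ℝ => Complex.exp ((n:ℂ) * θ * I) * p (circleMap 0 r θ))
        MeasureTheory.volume 0 (2*π) := ((hec _).mul hpc).intervalIntegrable _ _
    have hI2 : IntervalIntegrable (fun θ : ℝ => Complex.exp (-(n:ℂ) * θ * I) * p (circleMap 0 r θ))
        MeasureTheory.volume 0 (2*π) := ((hec _).mul hpc).intervalIntegrable _ _
    have hI3 : IntervalIntegrable (fun θ : ℝ =>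
        Complex.exp (-(n:ℂ) * θ * I) * (starRingEnd ℂ) (p (circleMap 0 r θ)))
        MeasureTheory.volume 0 (2*π) :=
      ((hec _).mul (continuous_star.comp hpc)).intervalIntegrable _ _
    have h2 : ∀ θ : ℝ, Complex.conjCLE.toContinuousLinearMap
        (Complex.exp ((n:ℂ) * θ * I) * p (circleMap 0 r θ))
        = Complex.exp (-(n:ℂ) * θ * I) * (starRingEnd ℂ) (p (circleMap 0 r θ)) := by
      intro θ
      simp only [ContinuousLinearEquiv.coe_coe, Complex.conjCLE_apply, map_mul]
      congr 1
      rw [← Complex.exp_conj]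
      congr 1
      simp only [map_mul, Complex.conj_I, map_natCast, Complex.conj_ofReal]
      ring
    have hconj : ∫ θ in (0:ℝ)..(2*π),
        Complex.exp (-(n:ℂ) * θ * I) * (starRingEnd ℂ) (p (circleMap 0 r θ)) = 0 := by
      have hcc := ContinuousLinearMap.intervalIntegral_comp_comm
        (Complex.conjCLE.toContinuousLinearMap) hI1
      rw [intervalIntegral.integral_congr (fun θ _ => (h2 θ).symm), hcc, hD, map_zero]
    have hsum2 : (2:ℂ) * π * (d n * (r:ℂ)^n)
        = ∫ θ in (0:ℝ)..(2*π),
            Complex.exp (-(n:ℂ) * θ * I) * (2 * ((p (circleMap 0 r θ)).re : ℂ)) := by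
      calc (2:ℂ) * π * (d n * (r:ℂ)^n)
          = ∫ θ in (0:ℝ)..(2*π), Complex.exp (-(n:ℂ) * θ * I) * p (circleMap 0 r θ) := hC.symm
        _ = (∫ θ in (0:ℝ)..(2*π), Complex.exp (-(n:ℂ) * θ * I) * p (circleMap 0 r θ))
            + ∫ θ in (0:ℝ)..(2*π),
                Complex.exp (-(n:ℂ) * θ * I) * (starRingEnd ℂ) (p (circleMap 0 r θ)) := by
            rw [hconj, add_zero]
        _ = ∫ θ in (0:ℝ)..(2*π),
              (Complex.exp (-(n:ℂ) * θ * I) * p (circleMap 0 r θ)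
              + Complex.exp (-(n:ℂ) * θ * I) * (starRingEnd ℂ) (p (circleMap 0 r θ))) :=
            (intervalIntegral.integral_add hI2 hI3).symm
        _ = _ := by
            refine intervalIntegral.integral_congr fun θ _ => ?_
            rw [← mul_add, Complex.add_conj]
            push_cast
            ring
    have hre : (∫ θ in (0:ℝ)..(2*π), (p (circleMap 0 r θ)).re) = 2*π := by
      have hIp : IntervalIntegrable (fun θ : ℝ => p (circleMap 0 r θ))
          MeasureTheory.volume 0 (2*π) := hpc.intervalIntegrable _ _
      have hcc := ContinuousLinearMap.intervalIntegral_comp_comm Complex.reCLM hIp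
      have h0 : (∫ θ in (0:ℝ)..(2*π), p (circleMap 0 r θ)) = 2*π := by
        have := hC0
        simp only [Nat.cast_zero, neg_zero, zero_mul, Complex.exp_zero, one_mul, pow_zero,
          mul_one] at this
        rw [this]
        simp [hd]
      simp only [Complex.reCLM_apply] at hcc
      rw [hcc, h0]
      simp
    have h2re : (∫ θ in (0:ℝ)..(2*π), 2 * (p (circleMap 0 r θ)).re) = 4*π := by
      rw [intervalIntegral.integral_const_mul, hre]
      ring
    have habs : ‖(2:ℂ) * π * (d n * (r:ℂ)^n)‖ ≤ 4*π := by
      rw [← h2re]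
      calc ‖(2:ℂ) * π * (d n * (r:ℂ)^n)‖
          = ‖∫ θ in (0:ℝ)..(2*π),
              Complex.exp (-(n:ℂ) * θ * I) * (2 * ((p (circleMap 0 r θ)).re : ℂ))‖ := by
            rw [← hsum2]
        _ ≤ ∫ θ in (0:ℝ)..(2*π),
              ‖Complex.exp (-(n:ℂ) * θ * I) * (2 * ((p (circleMap 0 r θ)).re : ℂ))‖ :=
            intervalIntegral.norm_integral_le_integral_norm (by positivity)
        _ = ∫ θ in (0:ℝ)..(2*π), 2 * (p (circleMap 0 r θ)).re := by
            refine intervalIntegral.integral_congr fun θ _ => ?_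
            rw [norm_mul]
            have he1 : ‖Complex.exp (-(n:ℂ) * θ * I)‖ = 1 := by
              rw [Complex.norm_exp]
              simp
            rw [he1, one_mul, norm_mul]
            have hpos := hpRe _ (hcm_mem θ)
            simp [Complex.norm_real, Real.norm_eq_abs, _root_.abs_of_pos hpos]
    have habs2 : ‖(2:ℂ) * π * (d n * (r:ℂ)^n)‖
        = 2 * π * (‖d n‖ * r^n) := by
      simp only [norm_mul, Complex.norm_two, Complex.norm_real, Real.norm_eq_abs, norm_pow]
      rw [_root_.abs_of_pos Real.pi_pos, _root_.abs_of_pos hr0]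
    rw [habs2] at habs
    nlinarith [Real.pi_pos]
  have hlim : ‖d n‖ ≤ 2 := by
    have ht : Filter.Tendsto (fun r : ℝ => ‖d n‖ * r ^ n)
        (nhdsWithin 1 (Iio 1)) (nhds (‖d n‖)) := by
      have hc : Continuous fun r : ℝ => ‖d n‖ * r ^ n := by fun_prop
      have h1 := (hc.tendsto 1).mono_left (nhdsWithin_le_nhds (s := Iio (1:ℝ)))
      simpa using h1
    refine le_of_tendsto ht ?_
    filter_upwards [Ioo_mem_nhdsLT_of_mem (by norm_num : (1:ℝ) ∈ Ioc (0:ℝ) 1)] with r hr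
    exact hbound r hr.1 hr.2
  have hn0 : n ≠ 0 := by omega
  have hdn : d n = n * (a n - b n) := by simp [hd, hn0]
  rw [hdn, norm_mul, Complex.norm_natCast] at hlim
  have hnr : (0:ℝ) < n := by exact_mod_cast hn
  rw [le_div_iff₀ hnr]
  linarith [hlim]
end

section
/- Let α ∈ [0,1), and let (aₙ)ₙ≥1 and (bₙ)ₙ≥1 be complex sequences satisfying Σₙ₌₁^∞ n·|aₙ − bₙ| ≤ 1 − α, such that the power series H(z) = Σₙ₌₁^∞ aₙ zⁿ and G(z) = Σₙ₌₁^∞ bₙ zⁿ converge for all z in the open unit disk 𝔻. Set h = exp(H) and g = exp(G). Then Re(1 + z·h′(z)/h(z) − z·g′(z)/g(z)) > α for all z ∈ 𝔻; that is, the log-harmonic mapping f(z) = z·h(z)·conj(g(z)) satisfies Re((z·f_z(z) − z̄·f_z̄(z))/f(z)) > α for all z ∈ 𝔻. -/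
open Complex Metric Set

-- bound on coefficients from convergence at a point
lemma coef_bound (c : ℕ → ℂ) (F : ℂ → ℂ)
    (hF : ∀ z ∈ ball (0 : ℂ) 1, HasSum (fun n : ℕ => c (n + 1) * z ^ (n + 1)) (F z))
    {r : ℝ} (hr0 : 0 ≤ r) (hr1 : r < 1) :
    ∃ C : ℝ, ∀ n : ℕ, ‖c (n + 1)‖ * r ^ (n + 1) ≤ C := by
  have hmem : (r : ℂ) ∈ ball (0 : ℂ) 1 := by
    simp [Complex.norm_of_nonneg hr0, _root_.abs_of_nonneg hr0, hr1]
  have hs := (hF _ hmem).summable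
  have h0 : Filter.Tendsto (fun n : ℕ => ‖c (n + 1) * (r : ℂ) ^ (n + 1)‖)
      Filter.atTop (nhds 0) := by
    simpa using hs.tendsto_atTop_zero.norm
  obtain ⟨C, hC⟩ := h0.bddAbove_range
  refine ⟨C, fun n => ?_⟩
  have := hC (Set.mem_range_self n)
  simpa [map_mul, map_pow, Complex.norm_of_nonneg hr0, _root_.abs_of_nonneg hr0] using this

lemma norm_term_le (c : ℕ → ℂ) {C r r' : ℝ} (hr : 0 ≤ r) (hr' : 0 < r')
    (hC : ∀ n : ℕ, ‖c (n + 1)‖ * r' ^ (n + 1) ≤ C) {y : ℂ} (hy : ‖y‖ ≤ r) (n : ℕ) :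
    ‖((n : ℂ) + 1) * c (n + 1) * y ^ n‖ ≤ C / r' * (((n : ℝ) + 1) * (r / r') ^ n) := by
  have hcb : ‖c (n + 1)‖ ≤ C / r' ^ (n + 1) := by
    rw [le_div_iff₀ (pow_pos hr' _)]; exact hC n
  have hyn : ‖y‖ ^ n ≤ r ^ n := pow_le_pow_left₀ (norm_nonneg _) hy n
  have h1 : ‖((n : ℂ) + 1) * c (n + 1) * y ^ n‖
      = ((n : ℝ) + 1) * (‖c (n + 1)‖ * ‖y‖ ^ n) := by
    rw [norm_mul, norm_mul, norm_pow]
    have : ‖((n : ℂ) + 1)‖ = ((n : ℝ) + 1) := by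
      norm_cast
    rw [this, mul_assoc]
  rw [h1]
  have hC0 : 0 ≤ C := le_trans (by positivity) (hC 0)
  have h2 : ‖c (n + 1)‖ * ‖y‖ ^ n ≤ C / r' ^ (n + 1) * r ^ n :=
    mul_le_mul hcb hyn (pow_nonneg (norm_nonneg _) n)
      (div_nonneg hC0 (by positivity))
  calc ((n : ℝ) + 1) * (‖c (n + 1)‖ * ‖y‖ ^ n)
      ≤ ((n : ℝ) + 1) * (C / r' ^ (n + 1) * r ^ n) := by
        apply mul_le_mul_of_nonneg_left h2; positivity
    _ = C / r' * (((n : ℝ) + 1) * (r / r') ^ n) := by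
        rw [div_pow]; field_simp; ring

lemma usummable {C r r' : ℝ} (hr : 0 ≤ r) (hrr' : r < r') :
    Summable fun n : ℕ => C / r' * (((n : ℝ) + 1) * (r / r') ^ n) := by
  have hr'0 : 0 < r' := lt_of_le_of_lt hr hrr'
  have hq : ‖r / r'‖ < 1 := by
    rw [Real.norm_eq_abs, _root_.abs_of_nonneg (by positivity), div_lt_one hr'0]
    exact hrr'
  have h1 : Summable fun n : ℕ => ((n : ℝ) ^ 1 * (r / r') ^ n + (r / r') ^ n) :=
    (summable_pow_mul_geometric_of_norm_lt_one 1 hq).add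
      (summable_geometric_of_norm_lt_one hq)
  refine ((h1.mul_left (C / r')).congr fun n => ?_)
  ring

lemma deriv_summable (c : ℕ → ℂ) (F : ℂ → ℂ)
    (hF : ∀ z ∈ ball (0 : ℂ) 1, HasSum (fun n : ℕ => c (n + 1) * z ^ (n + 1)) (F z))
    {z : ℂ} (hz : z ∈ ball (0 : ℂ) 1) :
    Summable fun n : ℕ => ((n : ℂ) + 1) * c (n + 1) * z ^ n := by
  have hz1 : ‖z‖ < 1 := by simpa using mem_ball_zero_iff.mp hz
  set r' : ℝ := (‖z‖ + 1) / 2 with hr'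
  have h1 : ‖z‖ < r' := by rw [hr']; linarith [norm_nonneg z]
  have h2 : r' < 1 := by rw [hr']; linarith
  have h0 : (0:ℝ) ≤ r' := by positivity
  obtain ⟨C, hC⟩ := coef_bound c F hF h0 h2
  exact Summable.of_norm_bounded (usummable (norm_nonneg z) h1)
    (fun n => norm_term_le c (norm_nonneg z) (lt_of_le_of_lt (norm_nonneg z) h1) hC le_rfl n)

lemma key_deriv (c : ℕ → ℂ) (F : ℂ → ℂ)
    (hF : ∀ z ∈ ball (0 : ℂ) 1, HasSum (fun n : ℕ => c (n + 1) * z ^ (n + 1)) (F z))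
    {z : ℂ} (hz : z ∈ ball (0 : ℂ) 1) :
    HasDerivAt F (∑' n : ℕ, ((n : ℂ) + 1) * c (n + 1) * z ^ n) z := by
  have hz1 : ‖z‖ < 1 := by simpa using mem_ball_zero_iff.mp hz
  set r : ℝ := (‖z‖ + 1) / 2 with hrdef
  set r' : ℝ := (r + 1) / 2 with hr'def
  have hzr : ‖z‖ < r := by rw [hrdef]; linarith [norm_nonneg z]
  have hr0 : (0:ℝ) ≤ r := le_trans (norm_nonneg z) hzr.le
  have hrr' : r < r' := by rw [hr'def, hrdef]; linarith
  have hr'1 : r' < 1 := by rw [hr'def, hrdef]; linarith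
  have hr'0 : (0:ℝ) < r' := lt_of_le_of_lt hr0 hrr'
  obtain ⟨C, hC⟩ := coef_bound c F hF hr'0.le hr'1
  have hzmem : z ∈ ball (0:ℂ) r := by
    rw [mem_ball_zero_iff]; exact hzr
  have hD : HasDerivAt (fun w : ℂ => ∑' n : ℕ, c (n + 1) * w ^ (n + 1))
      (∑' n : ℕ, ((n : ℂ) + 1) * c (n + 1) * z ^ n) z := by
    refine hasDerivAt_tsum_of_isPreconnected (usummable (C := C) hr0 hrr')
      isOpen_ball (convex_ball (0:ℂ) r).isPreconnected
      (g := fun (n : ℕ) (w : ℂ) => c (n + 1) * w ^ (n + 1))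
      (g' := fun (n : ℕ) (w : ℂ) => ((n : ℂ) + 1) * c (n + 1) * w ^ n) ?_ ?_ hzmem
      ((hF z hz).summable) hzmem
    · intro n y _
      have := (hasDerivAt_pow (n + 1) y).const_mul (c (n + 1))
      convert this using 1
      · rfl
      push_cast
      ring
    · intro n y hy
      exact norm_term_le c hr0 hr'0 hC (mem_ball_zero_iff.mp hy).le n
  apply hD.congr_of_eventuallyEq
  filter_upwards [isOpen_ball.mem_nhds hz] with w hw
  exact ((hF w hw).tsum_eq).symm

lemma re_bound (α : ℝ) (hα1 : α < 1) (a b : ℕ → ℂ) (H G : ℂ → ℂ)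
    (hH : ∀ z ∈ ball (0 : ℂ) 1, HasSum (fun n : ℕ => a (n + 1) * z ^ (n + 1)) (H z))
    (hG : ∀ z ∈ ball (0 : ℂ) 1, HasSum (fun n : ℕ => b (n + 1) * z ^ (n + 1)) (G z))
    (hsummable : Summable fun n : ℕ => (n + 1 : ℝ) * ‖a (n + 1) - b (n + 1)‖)
    (hsum : (∑' n : ℕ, (n + 1 : ℝ) * ‖a (n + 1) - b (n + 1)‖) ≤ 1 - α)
    {z : ℂ} (hz : z ∈ ball (0 : ℂ) 1) :
    α < (1 + z * (∑' n : ℕ, ((n : ℂ) + 1) * a (n + 1) * z ^ n)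
      - z * (∑' n : ℕ, ((n : ℂ) + 1) * b (n + 1) * z ^ n)).re := by
  have hz1 : ‖z‖ < 1 := by simpa using mem_ball_zero_iff.mp hz
  have SA := deriv_summable a H hH hz
  have SB := deriv_summable b G hG hz
  set A := ∑' n : ℕ, ((n : ℂ) + 1) * a (n + 1) * z ^ n with hA
  set B := ∑' n : ℕ, ((n : ℂ) + 1) * b (n + 1) * z ^ n with hB
  set w := z * A - z * B with hw
  have hweq : w = ∑' n : ℕ, ((n : ℂ) + 1) * (a (n + 1) - b (n + 1)) * z ^ (n + 1) := by
    have h1 : A - B = ∑' n : ℕ, ((n : ℂ) + 1) * (a (n + 1) - b (n + 1)) * z ^ n := by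
      rw [← Summable.tsum_sub SA SB]
      exact tsum_congr fun n => by ring
    have h2 : w = z * (A - B) := by rw [hw]; ring
    rw [h2, h1, ← tsum_mul_left]
    exact tsum_congr fun n => by ring
  have hterm : ∀ n : ℕ, ‖((n : ℂ) + 1) * (a (n + 1) - b (n + 1)) * z ^ (n + 1)‖
      ≤ ‖z‖ * ((n + 1 : ℝ) * ‖a (n + 1) - b (n + 1)‖) := by
    intro n
    have he : ‖((n : ℂ) + 1) * (a (n + 1) - b (n + 1)) * z ^ (n + 1)‖
        = ((n : ℝ) + 1) * ‖a (n + 1) - b (n + 1)‖ * ‖z‖ ^ (n + 1) := by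
      rw [norm_mul, norm_mul, norm_pow]
      have : ‖((n : ℂ) + 1)‖ = ((n : ℝ) + 1) := by norm_cast
      rw [this]
    rw [he]
    have hzp : ‖z‖ ^ (n + 1) ≤ ‖z‖ := by
      calc ‖z‖ ^ (n + 1) ≤ ‖z‖ ^ 1 :=
            pow_le_pow_of_le_one (norm_nonneg z) hz1.le (by omega)
        _ = ‖z‖ := pow_one _
    calc ((n : ℝ) + 1) * ‖a (n + 1) - b (n + 1)‖ * ‖z‖ ^ (n + 1)
        ≤ ((n : ℝ) + 1) * ‖a (n + 1) - b (n + 1)‖ * ‖z‖ := by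
          apply mul_le_mul_of_nonneg_left hzp; positivity
      _ = ‖z‖ * ((n + 1 : ℝ) * ‖a (n + 1) - b (n + 1)‖) := by ring
  have hsn : Summable fun n : ℕ => ‖((n : ℂ) + 1) * (a (n + 1) - b (n + 1)) * z ^ (n + 1)‖ :=
    Summable.of_nonneg_of_le (fun n => norm_nonneg _) hterm (hsummable.mul_left ‖z‖)
  have hwle : ‖w‖ ≤ ‖z‖ * (1 - α) := by
    rw [hweq]
    calc ‖∑' n : ℕ, ((n : ℂ) + 1) * (a (n + 1) - b (n + 1)) * z ^ (n + 1)‖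
        ≤ ∑' n : ℕ, ‖((n : ℂ) + 1) * (a (n + 1) - b (n + 1)) * z ^ (n + 1)‖ :=
          norm_tsum_le_tsum_norm hsn
      _ ≤ ∑' n : ℕ, ‖z‖ * ((n + 1 : ℝ) * ‖a (n + 1) - b (n + 1)‖) :=
          Summable.tsum_le_tsum hterm hsn (hsummable.mul_left ‖z‖)
      _ = ‖z‖ * ∑' n : ℕ, ((n + 1 : ℝ) * ‖a (n + 1) - b (n + 1)‖) :=
          tsum_mul_left
      _ ≤ ‖z‖ * (1 - α) := by
          apply mul_le_mul_of_nonneg_left hsum (norm_nonneg z)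
  have hwlt : ‖w‖ < 1 - α := lt_of_le_of_lt hwle (by nlinarith [norm_nonneg z])
  have hre : -(‖w‖) ≤ w.re := (abs_le.mp (Complex.abs_re_le_norm w)).1
  have habs : ‖w‖ = ‖w‖ := rfl
  have : (1 + z * A - z * B).re = 1 + w.re := by
    rw [hw]; simp [Complex.add_re, Complex.sub_re, Complex.one_re]; ring
  rw [this]
  rw [habs] at hre
  linarith

theorem stmt_5 (α : ℝ) (hα0 : 0 ≤ α) (hα1 : α < 1)
    (a b : ℕ → ℂ) (H G h g f : ℂ → ℂ)
    (hH : ∀ z ∈ ball (0 : ℂ) 1, HasSum (fun n : ℕ => a (n + 1) * z ^ (n + 1)) (H z))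
    (hG : ∀ z ∈ ball (0 : ℂ) 1, HasSum (fun n : ℕ => b (n + 1) * z ^ (n + 1)) (G z))
    (hh : ∀ z, h z = Complex.exp (H z))
    (hg : ∀ z, g z = Complex.exp (G z))
    (hsummable : Summable fun n : ℕ => (n + 1 : ℝ) * ‖a (n + 1) - b (n + 1)‖)
    (hsum : (∑' n : ℕ, (n + 1 : ℝ) * ‖a (n + 1) - b (n + 1)‖) ≤ 1 - α)
    (hf : ∀ z, f z = z * h z * (starRingEnd ℂ) (g z)) :
    (∀ z ∈ ball (0 : ℂ) 1,
        α < (1 + z * deriv h z / h z - z * deriv g z / g z).re) ∧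
      ∀ z ∈ ball (0 : ℂ) 1 \ {0},
        α < ((z * wz f z - (starRingEnd ℂ) z * wzbar f z) / f z).re := by
  have hfunh : h = fun w => Complex.exp (H w) := funext hh
  have hfung : g = fun w => Complex.exp (G w) := funext hg
  have hDh : ∀ z ∈ ball (0 : ℂ) 1, HasDerivAt h
      (Complex.exp (H z) * (∑' n : ℕ, ((n : ℂ) + 1) * a (n + 1) * z ^ n)) z := by
    intro z hz
    rw [hfunh]
    exact (key_deriv a H hH hz).cexp
  have hDg : ∀ z ∈ ball (0 : ℂ) 1, HasDerivAt g
      (Complex.exp (G z) * (∑' n : ℕ, ((n : ℂ) + 1) * b (n + 1) * z ^ n)) z := by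
    intro z hz
    rw [hfung]
    exact (key_deriv b G hG hz).cexp
  have part1 : ∀ z ∈ ball (0 : ℂ) 1,
      α < (1 + z * deriv h z / h z - z * deriv g z / g z).re := by
    intro z hz
    have e1 : z * deriv h z / h z = z * (∑' n : ℕ, ((n : ℂ) + 1) * a (n + 1) * z ^ n) := by
      rw [(hDh z hz).deriv, hh z]
      field_simp [Complex.exp_ne_zero]
    have e2 : z * deriv g z / g z = z * (∑' n : ℕ, ((n : ℂ) + 1) * b (n + 1) * z ^ n) := by
      rw [(hDg z hz).deriv, hg z]
      field_simp [Complex.exp_ne_zero]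
    rw [e1, e2]
    exact re_bound α hα1 a b H G hH hG hsummable hsum hz
  refine ⟨part1, ?_⟩
  rintro z ⟨hzb, hz0'⟩
  have hz0 : z ≠ 0 := hz0'
  have hh0 : h z ≠ 0 := by rw [hh z]; exact Complex.exp_ne_zero _
  have hg0 : g z ≠ 0 := by rw [hg z]; exact Complex.exp_ne_zero _
  have hgc0 : (starRingEnd ℂ) (g z) ≠ 0 := by
    simpa using hg0
  set Dh := deriv h z with hDhdef
  set Dg := deriv g z with hDgdef
  have Hd : HasDerivAt h Dh z := by
    rw [hDhdef, (hDh z hzb).deriv]; exact hDh z hzb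
  have Gd : HasDerivAt g Dg z := by
    rw [hDgdef, (hDg z hzb).deriv]; exact hDg z hzb
  have HdR : HasFDerivAt h
      ((ContinuousLinearMap.smulRight (1 : ℂ →L[ℂ] ℂ) Dh).restrictScalars ℝ) z :=
    Hd.hasFDerivAt.restrictScalars ℝ
  have GdR : HasFDerivAt g
      ((ContinuousLinearMap.smulRight (1 : ℂ →L[ℂ] ℂ) Dg).restrictScalars ℝ) z :=
    Gd.hasFDerivAt.restrictScalars ℝ
  have hconj : HasFDerivAt (fun w => (starRingEnd ℂ) (g w))
      ((Complex.conjCLE : ℂ →L[ℝ] ℂ).comp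
        ((ContinuousLinearMap.smulRight (1 : ℂ →L[ℂ] ℂ) Dg).restrictScalars ℝ)) z := by
    have := (Complex.conjCLE.hasFDerivAt (x := g z)).comp z GdR
    simpa [Function.comp_def] using this
  have hid : HasFDerivAt (fun w : ℂ => w) (ContinuousLinearMap.id ℝ ℂ) z := hasFDerivAt_id z
  have h1 := hid.mul HdR
  have h2 := h1.mul hconj
  have hfd : HasFDerivAt f
      ((z * h z) • ((Complex.conjCLE : ℂ →L[ℝ] ℂ).comp
        ((ContinuousLinearMap.smulRight (1 : ℂ →L[ℂ] ℂ) Dg).restrictScalars ℝ)) +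
       (starRingEnd ℂ) (g z) •
        ((z : ℂ) • ((ContinuousLinearMap.smulRight (1 : ℂ →L[ℂ] ℂ) Dh).restrictScalars ℝ) +
          h z • ContinuousLinearMap.id ℝ ℂ)) z := by
    have hfe : f = fun w => w * h w * (starRingEnd ℂ) (g w) := funext hf
    rw [hfe]; exact h2
  have ewz : wz f z = (starRingEnd ℂ) (g z) * (h z + z * Dh) := by
    rw [wz, hfd.fderiv]
    simp only [ContinuousLinearMap.add_apply, ContinuousLinearMap.smul_apply,
      ContinuousLinearMap.coe_comp', Function.comp_apply,
      ContinuousLinearMap.coe_restrictScalars', ContinuousLinearMap.smulRight_apply,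
      ContinuousLinearMap.one_apply, ContinuousLinearMap.id_apply, smul_eq_mul,
      ContinuousLinearEquiv.coe_coe, Complex.conjCLE_apply, map_mul, Complex.conj_I, map_one]
    ring_nf
    rw [Complex.I_sq]
    ring
  have ewzbar : wzbar f z = z * h z * (starRingEnd ℂ) Dg := by
    rw [wzbar, hfd.fderiv]
    simp only [ContinuousLinearMap.add_apply, ContinuousLinearMap.smul_apply,
      ContinuousLinearMap.coe_comp', Function.comp_apply,
      ContinuousLinearMap.coe_restrictScalars', ContinuousLinearMap.smulRight_apply,
      ContinuousLinearMap.one_apply, ContinuousLinearMap.id_apply, smul_eq_mul,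
      ContinuousLinearEquiv.coe_coe, Complex.conjCLE_apply, map_mul, Complex.conj_I, map_one]
    ring_nf
    rw [Complex.I_sq]
    ring
  have e3 : (z * wz f z - (starRingEnd ℂ) z * wzbar f z) / f z
      = 1 + z * Dh / h z - (starRingEnd ℂ) (z * Dg / g z) := by
    rw [ewz, ewzbar, hf z, map_div₀, map_mul]
    field_simp
  rw [e3]
  have e4 : (1 + z * Dh / h z - (starRingEnd ℂ) (z * Dg / g z)).re
      = (1 + z * Dh / h z - z * Dg / g z).re := by
    simp only [Complex.sub_re, Complex.conj_re]
  rw [e4]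
  exact part1 z hzb
end

section
/- Let μ be analytic on the open unit disk 𝔻 with μ(0) = 0 and |μ(z)| < 1 for all z ∈ 𝔻. Let g be analytic and nonvanishing on 𝔻 with g(0) = 1, and suppose that z·g′(z)·(1 − μ(z))·(1 − z) = μ(z)·g(z) for all z ∈ 𝔻. Then |g(z)| ≤ exp(|z|/(1 − |z|)) for all z ∈ 𝔻. -/
open Complex Metric Set Filter

theorem stmt_6 (μ g : ℂ → ℂ)
    (hμd : DifferentiableOn ℂ μ (ball (0 : ℂ) 1))
    (hμ0 : μ 0 = 0)
    (hμlt : ∀ z ∈ ball (0 : ℂ) 1, ‖μ z‖ < 1)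
    (hgd : DifferentiableOn ℂ g (ball (0 : ℂ) 1))
    (hgne : ∀ z ∈ ball (0 : ℂ) 1, g z ≠ 0)
    (hg0 : g 0 = 1)
    (heq : ∀ z ∈ ball (0 : ℂ) 1, z * deriv g z * (1 - μ z) * (1 - z) = μ z * g z) :
    ∀ z ∈ ball (0 : ℂ) 1,
      ‖g z‖ ≤ Real.exp (‖z‖ / (1 - ‖z‖)) := by
  intro z hz
  rcases eq_or_ne z 0 with rfl | hz0
  · simp [hg0]
  set r := ‖z‖ with hrdef
  have hr0 : 0 < r := norm_pos_iff.mpr hz0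
  have hr1 : r < 1 := by simpa [hrdef] using mem_ball_zero_iff.1 hz
  set C := Real.exp (r / (1 - r)) with hCdef
  -- Schwarz lemma
  have hschwarz : ∀ w ∈ ball (0 : ℂ) 1, ‖μ w‖ ≤ ‖w‖ := by
    intro w hw
    exact Complex.norm_le_norm_of_mapsTo_ball hμd
      (fun x hx => mem_closedBall_zero_iff.2 (hμlt x hx).le) hμ0 (mem_ball_zero_iff.1 hw)
  set f : ℝ → ℂ := fun t => g ((t : ℂ) * z) with hfdef
  have hmem : ∀ t : ℝ, 0 ≤ t → t ≤ 1 → ((t : ℂ) * z) ∈ ball (0 : ℂ) 1 := by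
    intro t ht0 ht1
    rw [mem_ball_zero_iff]
    have : ‖(t : ℂ) * z‖ = |t| * r := by
      simp [hrdef]
    rw [this, _root_.abs_of_nonneg ht0]
    nlinarith
  have key : ∀ ε : ℝ, 0 < ε → ‖g z‖ ≤ Real.exp (2 * ε) * C := by
    intro ε hε
    -- continuity of f at 0
    have hfc0 : ContinuousAt f 0 := by
      have h1 : ContinuousAt (fun t : ℝ => (t : ℂ) * z) 0 :=
        (Complex.continuous_ofReal.mul continuous_const).continuousAt
      have h2 : ContinuousAt g (((0 : ℝ) : ℂ) * z) := by
        have : DifferentiableAt ℂ g 0 :=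
          hgd.differentiableAt (isOpen_ball.mem_nhds (by simp))
        simpa using this.continuousAt
      exact ContinuousAt.comp (g := g) (f := fun t : ℝ => (t : ℂ) * z) h2 h1
    have hexpε : (1 : ℝ) < Real.exp ε := by
      have := Real.add_one_le_exp ε; linarith
    have hf0lt : ‖f 0‖ < Real.exp ε := by
      have : f 0 = 1 := by simp [hfdef, hg0]
      rw [this]; simpa using hexpε
    have hev : ∀ᶠ t in nhds (0 : ℝ), ‖f t‖ < Real.exp ε :=
      hfc0.norm.eventually_lt_const hf0lt
    have hev2 : ∀ᶠ t in nhdsWithin (0 : ℝ) (Ioi 0),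
        ‖f t‖ < Real.exp ε ∧ 0 < t ∧ t < 1 := by
      filter_upwards [hev.filter_mono nhdsWithin_le_nhds, self_mem_nhdsWithin,
        (eventually_lt_nhds (by norm_num : (0:ℝ) < 1)).filter_mono nhdsWithin_le_nhds]
        with t h1 h2 h3
      exact ⟨h1, h2, h3⟩
    obtain ⟨a, hfa, ha0, ha1⟩ := hev2.exists
    set B : ℝ → ℝ := fun t => Real.exp (ε + ε * t + t * r / (1 - t * r)) with hBdef
    have hdenom : ∀ t : ℝ, t ≤ 1 → 0 < 1 - t * r := by
      intro t ht; nlinarith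
    have hBpos : ∀ t, 0 < B t := fun t => Real.exp_pos _
    -- B continuity
    have hBc : ContinuousOn B (Icc a 1) := by
      apply Real.continuous_exp.comp_continuousOn
      apply ContinuousOn.add (by fun_prop)
      apply ContinuousOn.div (by fun_prop) (by fun_prop)
      intro x hx
      exact ne_of_gt (hdenom x hx.2)
    -- B derivative
    have hB' : ∀ x ∈ Ico a 1, HasDerivWithinAt B
        ((ε + r / (1 - x * r) ^ 2) * B x) (Ici x) x := by
      intro x hx
      have hd : (0:ℝ) < 1 - x * r := hdenom x hx.2.le
      have h1 : HasDerivAt (fun t : ℝ => t * r) r x := by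
        simpa using (hasDerivAt_id x).mul_const r
      have h2 : HasDerivAt (fun t : ℝ => 1 - t * r) (-r) x := by
        simpa using h1.const_sub (1:ℝ)
      have h3 := h1.div h2 (ne_of_gt hd)
      have h4 : HasDerivAt (fun t : ℝ => ε + ε * t) ε x := by
        simpa using ((hasDerivAt_id x).const_mul ε).const_add ε
      have h5 : HasDerivAt (fun t : ℝ => ε + ε * t + t * r / (1 - t * r))
          (ε + r / (1 - x * r) ^ 2) x := by
        have h6 : HasDerivAt (fun t : ℝ => ε + ε * t + t * r / (1 - t * r))
            (ε + (r * (1 - x * r) - x * r * -r) / (1 - x * r) ^ 2) x := h4.add h3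
        convert h6 using 1
        field_simp
        ring
      have h6 := h5.exp
      have h7 : Real.exp (ε + ε * x + x * r / (1 - x * r)) * (ε + r / (1 - x * r) ^ 2)
          = (ε + r / (1 - x * r) ^ 2) * B x := by rw [hBdef]; ring
      rw [h7] at h6
      exact h6.hasDerivWithinAt
    -- f continuity on Icc a 1
    have hfc : ContinuousOn f (Icc a 1) := by
      apply hgd.continuousOn.comp
        ((Complex.continuous_ofReal.mul continuous_const).continuousOn)
      intro t ht
      exact hmem t (ha0.le.trans ht.1) ht.2
    -- f derivative
    have hf' : ∀ x ∈ Ico a 1, HasDerivWithinAt f (z * deriv g ((x : ℂ) * z))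
        (Ici x) x := by
      intro x hx
      have hw : ((x : ℂ) * z) ∈ ball (0 : ℂ) 1 :=
        hmem x (ha0.le.trans hx.1) hx.2.le
      have hgx : HasDerivAt g (deriv g ((x : ℂ) * z)) ((x : ℂ) * z) :=
        (hgd.differentiableAt (isOpen_ball.mem_nhds hw)).hasDerivAt
      have hinner : HasDerivAt (fun c : ℂ => c * z) z (x : ℂ) := by
        simpa using (hasDerivAt_id (x : ℂ)).mul_const z
      have hcomp : HasDerivAt (fun c : ℂ => g (c * z))
          (deriv g ((x : ℂ) * z) * z) (x : ℂ) := HasDerivAt.comp (𝕜 := ℂ) ((x : ℝ) : ℂ) hgx hinner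
      have h8 := hcomp.comp_ofReal (z := x)
      have h2 : HasDerivAt f (z * deriv g ((x : ℂ) * z)) x := by
        simpa [hfdef, mul_comm] using h8
      exact h2.hasDerivWithinAt
    -- initial bound
    have hBa : ‖f a‖ ≤ B a := by
      have hle : Real.exp ε ≤ B a := by
        rw [hBdef]
        apply Real.exp_le_exp.2
        have hd : (0:ℝ) < 1 - a * r := hdenom a ha1.le
        have h1 : 0 ≤ ε * a := by positivity
        have h2 : 0 ≤ a * r / (1 - a * r) := by positivity
        linarith
      linarith [hfa.le, hle]
    -- the boundary bound
    have hbound : ∀ x ∈ Ico a 1, ‖f x‖ = B x →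
        ‖z * deriv g ((x : ℂ) * z)‖ < (ε + r / (1 - x * r) ^ 2) * B x := by
      intro x hx hfx
      have hx0 : 0 < x := lt_of_lt_of_le ha0 hx.1
      have hw : ((x : ℂ) * z) ∈ ball (0 : ℂ) 1 := hmem x hx0.le hx.2.le
      set w := (x : ℂ) * z with hwdef
      set s := x * r with hsdef
      have hs0 : 0 < s := by positivity
      have hs1 : s < 1 := by nlinarith [hx.2, hr1, hr0, hx0]
      have habsw : ‖w‖ = s := by
        simp [hwdef, hsdef, abs_of_pos hx0, hrdef]
      have hE := heq w hw
      set d := ‖deriv g w‖ with hddef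
      set m := ‖μ w‖ with hmdef
      set p := ‖1 - μ w‖ with hpdef
      set q := ‖1 - w‖ with hqdef
      have hEabs : s * d * p * q = m * ‖g w‖ := by
        have h9 := congrArg (‖·‖) hE
        simpa [habsw, hddef, hmdef, hpdef, hqdef, mul_assoc] using h9
      have hgw : ‖g w‖ = B x := by
        rw [← hfx]
      rw [hgw] at hEabs
      have hm : m ≤ s := by rw [hmdef, ← habsw]; exact hschwarz w hw
      have hm0 : 0 ≤ m := norm_nonneg _
      have hd0 : 0 ≤ d := norm_nonneg _
      have hp : 1 - s ≤ p := by
        have h10 : ‖(1:ℂ)‖ - ‖μ w‖ ≤ ‖1 - μ w‖ :=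
          norm_sub_norm_le 1 (μ w)
        simp only [norm_one] at h10
        rw [hpdef]; linarith [hm]
      have hq : 1 - s ≤ q := by
        have h10 : ‖(1:ℂ)‖ - ‖w‖ ≤ ‖1 - w‖ :=
          norm_sub_norm_le 1 w
        simp only [norm_one, habsw] at h10
        rw [hqdef]; linarith
      have h11 : s * d * (1 - s) * (1 - s) ≤ s * d * p * q := by
        have h12 : s * d * (1 - s) ≤ s * d * p :=
          mul_le_mul_of_nonneg_left hp (by positivity)
        exact mul_le_mul h12 hq (by linarith) (by positivity)
      have h13 : m * B x ≤ s * B x :=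
        mul_le_mul_of_nonneg_right hm (hBpos x).le
      have h14 : s * (d * (1 - s) ^ 2) ≤ s * B x := by
        calc s * (d * (1 - s) ^ 2) = s * d * (1 - s) * (1 - s) := by ring
          _ ≤ s * d * p * q := h11
          _ = m * B x := hEabs
          _ ≤ s * B x := h13
      have h15 : d * (1 - s) ^ 2 ≤ B x := le_of_mul_le_mul_left h14 hs0
      have h16 : ‖z * deriv g w‖ = r * d := by
        simp [hddef, hrdef]
      rw [h16]
      have hss : (0:ℝ) < (1 - s) ^ 2 := pow_pos (by linarith) 2
      have h19 : d ≤ B x / (1 - s) ^ 2 := (le_div_iff₀ hss).2 h15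
      have h17 : r * d ≤ r / (1 - s) ^ 2 * B x := by
        calc r * d ≤ r * (B x / (1 - s) ^ 2) := mul_le_mul_of_nonneg_left h19 hr0.le
          _ = r / (1 - s) ^ 2 * B x := by ring
      have h18 : 0 < ε * B x := by positivity
      calc r * d ≤ r / (1 - s) ^ 2 * B x := h17
        _ < (ε + r / (1 - s) ^ 2) * B x := by rw [add_mul]; linarith
    have hres := image_norm_le_of_norm_deriv_right_lt_deriv_boundary' hfc hf' hBa hBc hB' hbound
    have h1 : ‖f 1‖ ≤ B 1 := hres (right_mem_Icc.2 ha1.le)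
    have hfz : ‖f 1‖ = ‖g z‖ := by
      simp [hfdef]
    have hB1 : B 1 = Real.exp (2 * ε) * C := by
      rw [hBdef, hCdef, ← Real.exp_add]
      ring_nf
    rw [hfz, hB1] at h1
    exact h1
  have htend : Tendsto (fun ε : ℝ => Real.exp (2 * ε) * C) (nhdsWithin 0 (Ioi 0)) (nhds C) := by
    have hc : Continuous (fun ε : ℝ => Real.exp (2 * ε) * C) := by continuity
    have h := hc.tendsto 0
    simp only [mul_zero, Real.exp_zero, one_mul] at h
    exact h.mono_left nhdsWithin_le_nhds
  exact ge_of_tendsto htend (eventually_of_mem self_mem_nhdsWithin fun ε hε => key ε hε)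
end

section
/- Let μ be analytic on the open unit disk 𝔻 with μ(0) = 0 and |μ(z)| < 1 for all z ∈ 𝔻. Let g be analytic and nonvanishing on 𝔻 with g(0) = 1, and suppose that z·g′(z)·(1 − μ(z))·(1 − z) = μ(z)·g(z) for all z ∈ 𝔻. Define h(z) = g(z)/(1 − z). Then |h(z)| ≤ (1/(1 − |z|))·exp(|z|/(1 − |z|)) for all z ∈ 𝔻. -/
open Complex Metric Set

theorem stmt_7 (μ g h : ℂ → ℂ)
    (hμd : DifferentiableOn ℂ μ (ball (0 : ℂ) 1))
    (hμ0 : μ 0 = 0)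
    (hμlt : ∀ z ∈ ball (0 : ℂ) 1, ‖μ z‖ < 1)
    (hgd : DifferentiableOn ℂ g (ball (0 : ℂ) 1))
    (hgne : ∀ z ∈ ball (0 : ℂ) 1, g z ≠ 0)
    (hg0 : g 0 = 1)
    (heq : ∀ z ∈ ball (0 : ℂ) 1, z * deriv g z * (1 - μ z) * (1 - z) = μ z * g z)
    (hh : ∀ z, h z = g z / (1 - z)) :
    ∀ z ∈ ball (0 : ℂ) 1,
      ‖h z‖ ≤
        (1 / (1 - ‖z‖)) * Real.exp (‖z‖ / (1 - ‖z‖)) := by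
  intro z hz
  have hz1 : ‖z‖ < 1 := mem_ball_zero_iff.1 hz
  set r := ‖z‖ with hrdef
  have hr0 : 0 ≤ r := norm_nonneg z
  have hr1 : r < 1 := hz1
  have hr1' : (0:ℝ) < 1 - r := by linarith
  -- Schwarz lemma
  have hschwarz : ∀ w ∈ ball (0:ℂ) 1, ‖μ w‖ ≤ ‖w‖ := by
    intro w hw
    exact Complex.norm_le_norm_of_mapsTo_ball hμd
      (fun x hx => ball_subset_closedBall (mem_ball_zero_iff.2 (hμlt x hx))) hμ0 (mem_ball_zero_iff.1 hw)
  -- key pointwise bound on deriv g / g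
  have hkey : ∀ w ∈ ball (0:ℂ) 1, w ≠ 0 →
      ‖deriv g w‖ * (1 - ‖w‖)^2 ≤ ‖g w‖ := by
    intro w hw hw0
    have hw1 : ‖w‖ < 1 := mem_ball_zero_iff.1 hw
    have hwpos : 0 < ‖w‖ := norm_pos_iff.2 hw0
    have he := heq w hw
    have habs : ‖w‖ * ‖deriv g w‖ * ‖1 - μ w‖ *
        ‖1 - w‖ = ‖μ w‖ * ‖g w‖ := by
      have := congrArg (‖·‖) he
      simpa [norm_mul] using this
    have hμw : ‖μ w‖ ≤ ‖w‖ := hschwarz w hw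
    have h1μ : 1 - ‖w‖ ≤ ‖1 - μ w‖ := by
      have := norm_sub_norm_le (1:ℂ) (μ w)
      simp only [norm_one] at this
      linarith
    have h1w : 1 - ‖w‖ ≤ ‖1 - w‖ := by
      have := norm_sub_norm_le (1:ℂ) w
      simp only [norm_one] at this
      linarith
    have hg' : 0 ≤ ‖deriv g w‖ := norm_nonneg _
    have hgw : 0 < ‖g w‖ := norm_pos_iff.2 (hgne w hw)
    have hstep : ‖deriv g w‖ * ‖1 - μ w‖ * ‖1 - w‖
        ≤ ‖g w‖ := by
      have : ‖w‖ * (‖deriv g w‖ * ‖1 - μ w‖ *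
          ‖1 - w‖) ≤ ‖w‖ * ‖g w‖ := by
        calc ‖w‖ * (‖deriv g w‖ * ‖1 - μ w‖ *
              ‖1 - w‖)
            = ‖μ w‖ * ‖g w‖ := by rw [← habs]; ring
          _ ≤ ‖w‖ * ‖g w‖ := by
              exact mul_le_mul_of_nonneg_right hμw hgw.le
      exact le_of_mul_le_mul_left this hwpos
    have h1wpos : (0:ℝ) < 1 - ‖w‖ := by linarith
    nlinarith [mul_le_mul h1μ h1w h1wpos.le (norm_nonneg (1 - μ w)),
      mul_le_mul_of_nonneg_left (mul_le_mul h1μ h1w h1wpos.le (norm_nonneg (1 - μ w))) hg']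
  -- main claim: |g z| ≤ exp (r/(1-r))
  have hgz : ‖g z‖ ≤ Real.exp (r / (1 - r)) := by
    rcases eq_or_ne z 0 with rfl | hz0
    · simp only [hg0, norm_one]
      have : (0:ℝ) ≤ r / (1-r) := div_nonneg hr0 hr1'.le
      calc (1:ℝ) = Real.exp 0 := Real.exp_zero.symm
        _ ≤ Real.exp (r / (1-r)) := Real.exp_le_exp.2 this
    · have hrpos : 0 < r := norm_pos_iff.2 hz0
      set F : ℝ → ℝ := fun t => Real.log (‖g ((t:ℂ) * z)‖) with hF
      set D : ℝ → ℝ := fun t => ((z * deriv g ((t:ℂ) * z)) / g ((t:ℂ) * z)).re with hD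
      set Dup : ℝ → ℝ := fun t => r / (1 - t * r)^2 with hDup
      have hmem : ∀ t ∈ Icc (0:ℝ) 1, ((t:ℂ) * z) ∈ ball (0:ℂ) 1 := by
        intro t ht
        rw [mem_ball_zero_iff]
        rw [norm_mul, Complex.norm_real, Real.norm_eq_abs]
        calc |t| * r ≤ 1 * r := by
              rw [_root_.abs_of_nonneg ht.1]; exact mul_le_mul_of_nonneg_right ht.2 hr0
          _ = r := one_mul r
          _ < 1 := hr1
      have hgcont : ContinuousOn g (ball (0:ℂ) 1) := hgd.continuousOn
      have hganal : AnalyticOnNhd ℂ g (ball (0:ℂ) 1) := hgd.analyticOnNhd isOpen_ball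
      have hderivcont : ContinuousOn (deriv g) (ball (0:ℂ) 1) := hganal.deriv.continuousOn
      have hmapc : ContinuousOn (fun t:ℝ => (t:ℂ) * z) (Icc 0 1) :=
        Complex.continuous_ofReal.continuousOn.mul continuousOn_const
      have hmaps : MapsTo (fun t:ℝ => (t:ℂ) * z) (Icc 0 1) (ball (0:ℂ) 1) :=
        fun t ht => hmem t ht
      have hDcont : ContinuousOn D (Icc 0 1) := by
        apply Complex.continuous_re.comp_continuousOn
        exact (continuousOn_const.mul (hderivcont.comp hmapc hmaps)).div
          (hgcont.comp hmapc hmaps) (fun t ht => hgne _ (hmem t ht))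
      have htrlt : ∀ t ∈ Icc (0:ℝ) 1, t * r < 1 := by
        intro t ht
        have : t * r ≤ 1 * r := mul_le_mul_of_nonneg_right ht.2 hr0
        nlinarith
      have hDupcont : ContinuousOn Dup (Icc 0 1) := by
        apply continuousOn_const.div
        · fun_prop
        · intro t ht
          have h1 : (0:ℝ) < 1 - t * r := by have := htrlt t ht; linarith
          positivity
      have hDint : IntervalIntegrable D MeasureTheory.volume 0 1 :=
        ContinuousOn.intervalIntegrable (by rwa [uIcc_of_le zero_le_one])
      have hDupint : IntervalIntegrable Dup MeasureTheory.volume 0 1 :=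
        ContinuousOn.intervalIntegrable (by rwa [uIcc_of_le zero_le_one])
      have hFderiv : ∀ t ∈ uIcc (0:ℝ) 1, HasDerivAt F (D t) t := by
        rw [uIcc_of_le zero_le_one]
        intro t ht
        set w : ℂ := (t:ℂ) * z with hw
        have hwmem : w ∈ ball (0:ℂ) 1 := hmem t ht
        have hgw : g w ≠ 0 := hgne w hwmem
        have hgwpos : 0 < ‖g w‖ := norm_pos_iff.2 hgw
        set c : ℂ := ((‖g w‖ : ℝ) : ℂ) / g w with hc
        have hc0 : c ≠ 0 := div_ne_zero (by exact_mod_cast hgwpos.ne') hgw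
        have hcabs : ‖c‖ = 1 := by
          rw [hc, norm_div, Complex.norm_real, Real.norm_eq_abs, _root_.abs_of_nonneg (norm_nonneg _)]
          exact div_self hgwpos.ne'
        have hgderiv : HasDerivAt g (deriv g w) w :=
          (hgd.differentiableAt (isOpen_ball.mem_nhds hwmem)).hasDerivAt
        have hmder : HasDerivAt (fun s : ℝ => (s:ℂ) * z) z t := by
          simpa using Complex.ofRealCLM.hasDerivAt.mul_const z
        have hcomp : HasDerivAt (fun s : ℝ => g ((s:ℂ) * z)) (z * deriv g w) t := by
          have h := (hgderiv.hasFDerivAt.restrictScalars ℝ).comp_hasDerivAt t hmder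
          simpa [mul_comm, Function.comp_def] using h
        have hcgw : c * g w = ((‖g w‖ : ℝ) : ℂ) := by
          rw [hc]; field_simp
        have hpos : 0 < (c * g w).re := by
          rw [hcgw]; simpa using hgwpos
        have hslit : c * g w ∈ Complex.slitPlane := Or.inl hpos
        have hlog := Complex.hasDerivAt_log hslit
        have hψ : HasDerivAt (fun s : ℝ => c * g ((s:ℂ) * z)) (c * (z * deriv g w)) t :=
          hcomp.const_mul c
        have hψlog : HasDerivAt (fun s : ℝ => Complex.log (c * g ((s:ℂ) * z)))
            ((c * g w)⁻¹ * (c * (z * deriv g w))) t := by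
          have h := (hlog.hasFDerivAt.restrictScalars ℝ).comp_hasDerivAt t hψ
          simpa [mul_comm, Function.comp_def] using h
        have hre : HasDerivAt (fun s : ℝ => (Complex.log (c * g ((s:ℂ) * z))).re)
            (((c * g w)⁻¹ * (c * (z * deriv g w))).re) t := by
          have h := Complex.reCLM.hasFDerivAt.comp_hasDerivAt t hψlog
          simpa only [Function.comp_def, Complex.reCLM_apply] using h
        have hfun : F = fun s : ℝ => (Complex.log (c * g ((s:ℂ) * z))).re := by
          funext s
          rw [hF]
          rw [Complex.log_re, norm_mul, hcabs, one_mul]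
        have hval : ((c * g w)⁻¹ * (c * (z * deriv g w))).re = D t := by
          rw [hD]
          congr 1
          show (c * g w)⁻¹ * (c * (z * deriv g w)) = z * deriv g w / g w
          field_simp
        rw [hfun, ← hval]
        exact hre
      have hFTC : ∫ t in (0:ℝ)..1, D t = F 1 - F 0 :=
        intervalIntegral.integral_eq_sub_of_hasDerivAt hFderiv hDint
      have hGderiv : ∀ t ∈ uIcc (0:ℝ) 1,
          HasDerivAt (fun t : ℝ => (1 - t * r)⁻¹) (Dup t) t := by
        rw [uIcc_of_le zero_le_one]
        intro t ht
        have hpos : 0 < 1 - t * r := by have := htrlt t ht; linarith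
        have h1 : HasDerivAt (fun t : ℝ => 1 - t * r) (-r) t := by
          simpa using ((hasDerivAt_id t).mul_const r).const_sub 1
        have h2 := h1.inv hpos.ne'
        refine h2.congr_deriv ?_
        rw [hDup]
        field_simp
      have hGFTC : ∫ t in (0:ℝ)..1, Dup t = (1 - r)⁻¹ - 1 := by
        have h := intervalIntegral.integral_eq_sub_of_hasDerivAt hGderiv hDupint
        simpa using h
      have hae : D ≤ᵐ[MeasureTheory.volume.restrict (Icc (0:ℝ) 1)] Dup := by
        have h0 : ∀ᵐ t : ℝ ∂(MeasureTheory.volume.restrict (Icc (0:ℝ) 1)), t ≠ 0 := by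
          refine MeasureTheory.ae_restrict_of_ae ?_
          rw [MeasureTheory.ae_iff]
          have : {t : ℝ | ¬ t ≠ 0} = {0} := by ext t; simp
          rw [this]
          exact Real.volume_singleton
        have hIcc : ∀ᵐ t : ℝ ∂(MeasureTheory.volume.restrict (Icc (0:ℝ) 1)),
            t ∈ Icc (0:ℝ) 1 := MeasureTheory.ae_restrict_mem measurableSet_Icc
        filter_upwards [h0, hIcc] with t ht0 htIcc
        set w : ℂ := (t:ℂ) * z with hw
        have hw0 : w ≠ 0 := mul_ne_zero (Complex.ofReal_ne_zero.2 ht0) hz0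
        have hwmem : w ∈ ball (0:ℂ) 1 := hmem t htIcc
        have hwabs : ‖w‖ = t * r := by
          rw [hw, norm_mul, Complex.norm_real, Real.norm_eq_abs, _root_.abs_of_nonneg htIcc.1]
        have hk := hkey w hwmem hw0
        rw [hwabs] at hk
        have hgwpos : 0 < ‖g w‖ := norm_pos_iff.2 (hgne w hwmem)
        have htr1 : t * r < 1 := htrlt t htIcc
        have hpos2 : (0:ℝ) < (1 - t * r)^2 := by
          have h1 : (0:ℝ) < 1 - t * r := by linarith
          positivity
        calc D t ≤ ‖z * deriv g w / g w‖ := Complex.re_le_norm _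
          _ = r * ‖deriv g w‖ / ‖g w‖ := by
              rw [norm_div, norm_mul]
          _ ≤ r / (1 - t * r)^2 := by
              rw [div_le_div_iff₀ hgwpos hpos2]
              nlinarith [norm_nonneg (deriv g w)]
          _ = Dup t := rfl
      have hmono : ∫ t in (0:ℝ)..1, D t ≤ ∫ t in (0:ℝ)..1, Dup t :=
        intervalIntegral.integral_mono_ae_restrict zero_le_one hDint hDupint hae
      have hF0 : F 0 = 0 := by
        rw [hF]
        norm_num [hg0]
      have hF1 : F 1 = Real.log (‖g z‖) := by
        rw [hF]; norm_num
      have hlog2 : Real.log (‖g z‖) ≤ r / (1 - r) := by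
        have h2 : F 1 - F 0 ≤ (1 - r)⁻¹ - 1 := by
          rw [← hFTC, ← hGFTC]; exact hmono
        rw [hF0, hF1] at h2
        have h3 : (1 - r)⁻¹ - 1 = r / (1 - r) := by field_simp; ring
        linarith
      have habspos : 0 < ‖g z‖ := norm_pos_iff.2 (hgne z hz)
      exact (Real.log_le_iff_le_exp habspos).1 hlog2
  -- conclude
  have h1z : (1:ℂ) - z ≠ 0 := by
    intro hc
    have : z = 1 := by linear_combination -hc
    have h1 : (1:ℝ) < 1 := by
      calc (1:ℝ) = ‖z‖ := by rw [this]; simp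
        _ < 1 := hz1
    exact lt_irrefl 1 h1
  have h1zabs : 1 - r ≤ ‖1 - z‖ := by
    have := norm_sub_norm_le (1:ℂ) z
    simp only [norm_one] at this
    linarith
  rw [hh z, norm_div]
  rw [one_div, inv_mul_eq_div]
  exact div_le_div₀ (Real.exp_pos _).le hgz hr1' h1zabs
end

section
/- Let μ be analytic on the open unit disk 𝔻 with μ(0) = 0 and |μ(z)| < 1 for all z ∈ 𝔻. Let g be analytic and nonvanishing on 𝔻 with g(0) = 1, and suppose that z·g′(z)·(1 − μ(z))·(1 − z) = μ(z)·g(z) for all z ∈ 𝔻. Define f(z) = (z/(1 − z))·|g(z)|². Then |f(z)| ≤ (|z|/(1 − |z|))·exp(2|z|/(1 − |z|)) for all z ∈ 𝔻. -/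
open Complex Metric Set

theorem stmt_8 (μ g f : ℂ → ℂ)
    (hμd : DifferentiableOn ℂ μ (ball (0 : ℂ) 1))
    (hμ0 : μ 0 = 0)
    (hμlt : ∀ z ∈ ball (0 : ℂ) 1, ‖μ z‖ < 1)
    (hgd : DifferentiableOn ℂ g (ball (0 : ℂ) 1))
    (hgne : ∀ z ∈ ball (0 : ℂ) 1, g z ≠ 0)
    (hg0 : g 0 = 1)
    (heq : ∀ z ∈ ball (0 : ℂ) 1, z * deriv g z * (1 - μ z) * (1 - z) = μ z * g z)
    (hf : ∀ z, f z = z / (1 - z) * (Complex.normSq (g z) : ℂ)) :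
    ∀ z ∈ ball (0 : ℂ) 1,
      ‖f z‖ ≤
        (‖z‖ / (1 - ‖z‖)) *
          Real.exp (2 * ‖z‖ / (1 - ‖z‖)) := by
  intro z hz
  have hz1 : ‖z‖ < 1 := by simpa [mem_ball_zero_iff] using hz
  rcases eq_or_ne z 0 with rfl | hz0
  · simp [hf]
  set r := ‖z‖ with hrdef
  have hr0 : 0 < r := norm_pos_iff.2 hz0
  -- membership of the segment
  have hmem : ∀ t ∈ Icc (0:ℝ) 1, ((t : ℂ) * z) ∈ ball (0:ℂ) 1 := by
    intro t ht
    rw [mem_ball_zero_iff]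
    have h1 : ‖((t:ℂ) * z)‖ = |t| * r := by
      simp [norm_mul, Complex.norm_real, Real.norm_eq_abs, hrdef]
    rw [h1, _root_.abs_of_nonneg ht.1]
    nlinarith [ht.2, ht.1]
  have h1tr : ∀ t ∈ Icc (0:ℝ) 1, 0 < 1 - t * r := by
    intro t ht; nlinarith [ht.1, ht.2]
  -- Schwarz lemma
  have hsch : ∀ w ∈ ball (0:ℂ) 1, ‖μ w‖ ≤ ‖w‖ := by
    intro w hw
    exact norm_le_norm_of_mapsTo_ball hμd
      (fun x hx => mem_closedBall_zero_iff.2 (hμlt x hx).le)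
      hμ0 (by simpa [mem_ball_zero_iff] using hw)
  set q : ℝ → ℂ := fun t => g ((t : ℂ) * z) with hqdef
  have hqder : ∀ t ∈ Icc (0:ℝ) 1, HasDerivAt q (deriv g ((t:ℂ) * z) * z) t := by
    intro t ht
    have h1 : HasDerivAt (fun s : ℝ => ((s:ℂ) * z)) z t := by
      simpa using (Complex.ofRealCLM.hasDerivAt.mul_const z)
    have h2 := (hgd.differentiableAt (isOpen_ball.mem_nhds (hmem t ht))).hasDerivAt
    have h3 := (h2.hasFDerivAt.restrictScalars ℝ).comp_hasDerivAt t h1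
    exact h3.congr_deriv (by simp [mul_comm])
  set F : ℝ → ℝ := fun t => ‖q t‖ ^ 2 with hFdef
  have hFpos : ∀ t ∈ Icc (0:ℝ) 1, 0 < F t := by
    intro t ht
    have := hgne _ (hmem t ht)
    exact pow_pos (norm_pos_iff.2 this) 2
  have hFder : ∀ t ∈ Icc (0:ℝ) 1,
      HasDerivAt F (2 * (inner ℝ (q t) (deriv g ((t:ℂ) * z) * z) : ℝ)) t :=
    fun t ht => (hqder t ht).norm_sq
  set φ : ℝ → ℝ := fun t => Real.log (F t) with hφdef
  have hφder : ∀ t ∈ Icc (0:ℝ) 1,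
      HasDerivAt φ (2 * (inner ℝ (q t) (deriv g ((t:ℂ) * z) * z) : ℝ) / F t) t :=
    fun t ht => (hFder t ht).log (ne_of_gt (hFpos t ht))
  set ψ : ℝ → ℝ := fun t => 2 * (1 - t * r)⁻¹ with hψdef
  have hψder : ∀ t ∈ Icc (0:ℝ) 1, HasDerivAt ψ (2 * r / (1 - t * r) ^ 2) t := by
    intro t ht
    have h0 : HasDerivAt (fun t : ℝ => 1 - t * r) (-r) t := by
      simpa using ((hasDerivAt_id t).mul_const r).const_sub 1
    have h1 := (h0.inv (ne_of_gt (h1tr t ht))).const_mul 2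
    exact h1.congr_deriv (by ring)
  set D : ℝ → ℝ := fun t => ψ t - φ t with hDdef
  have hDder : ∀ t ∈ Icc (0:ℝ) 1,
      HasDerivAt D (2 * r / (1 - t * r) ^ 2
        - 2 * (inner ℝ (q t) (deriv g ((t:ℂ) * z) * z) : ℝ) / F t) t :=
    fun t ht => (hψder t ht).sub (hφder t ht)
  -- key derivative bound on the open interval
  have key : ∀ t ∈ Ioo (0:ℝ) 1,
      2 * (inner ℝ (q t) (deriv g ((t:ℂ) * z) * z) : ℝ) / F t ≤ 2 * r / (1 - t * r) ^ 2 := by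
    intro t ht
    have htI : t ∈ Icc (0:ℝ) 1 := Ioo_subset_Icc_self ht
    set w : ℂ := (t : ℂ) * z with hwdef
    have hw : w ∈ ball (0:ℂ) 1 := hmem t htI
    have hwabs : ‖w‖ = t * r := by
      simp [hwdef, norm_mul, Complex.norm_real, Real.norm_eq_abs, _root_.abs_of_nonneg ht.1.le, hrdef]
    have htr : 0 < 1 - t * r := h1tr t htI
    have htrpos : 0 < t * r := mul_pos ht.1 hr0
    set A := ‖deriv g w‖ with hA
    set B := ‖1 - μ w‖ with hB
    set C := ‖1 - w‖ with hC
    set G := ‖g w‖ with hG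
    have habs : (t * r) * A * B * C = ‖μ w‖ * G := by
      rw [← hwabs]
      simpa [norm_mul] using congrArg norm (heq w hw)
    have hμw : ‖μ w‖ ≤ t * r := hwabs ▸ hsch w hw
    have h1μ : 1 - t * r ≤ B := by
      have h := norm_sub_norm_le (1:ℂ) (μ w)
      have h2 := hμw
      simp only [norm_one] at h
      calc 1 - t * r ≤ 1 - ‖μ w‖ := by linarith
        _ ≤ B := h
    have h1w : 1 - t * r ≤ C := by
      have h := norm_sub_norm_le (1:ℂ) w
      simp only [norm_one] at h
      calc 1 - t * r ≤ 1 - ‖w‖ := by rw [hwabs]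
        _ ≤ C := h
    have hGnn : 0 ≤ G := norm_nonneg _
    have hAnn : 0 ≤ A := norm_nonneg _
    have hABC : A * B * C ≤ G := by
      have h1 : ‖μ w‖ * G ≤ (t * r) * G :=
        mul_le_mul_of_nonneg_right hμw hGnn
      have h2 : (t * r) * (A * B * C) ≤ (t * r) * G := by
        calc (t * r) * (A * B * C) = (t * r) * A * B * C := by ring
          _ = ‖μ w‖ * G := habs
          _ ≤ (t * r) * G := h1
      exact le_of_mul_le_mul_left h2 htrpos
    have hstep : A * ((1 - t * r) * (1 - t * r)) ≤ G := by
      have hBC : (1 - t * r) * (1 - t * r) ≤ B * C :=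
        mul_le_mul h1μ h1w htr.le (le_trans htr.le h1μ)
      calc A * ((1 - t * r) * (1 - t * r)) ≤ A * (B * C) :=
            mul_le_mul_of_nonneg_left hBC hAnn
        _ = A * B * C := by ring
        _ ≤ G := hABC
    -- inner product bound
    have hin : (inner ℝ (q t) (deriv g w * z) : ℝ) ≤ ‖q t‖ * ‖deriv g w * z‖ :=
      real_inner_le_norm _ _
    have hnq : ‖q t‖ = G := by simp [hqdef, hG, hwdef]
    have hnd : ‖deriv g w * z‖ = A * r := by
      simp [norm_mul, hA, hrdef]
    have hFt : F t = G ^ 2 := by simp [hFdef, hnq]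
    rw [div_le_div_iff₀ (hFpos t htI) (pow_pos htr 2)]
    have hin2 : (inner ℝ (q t) (deriv g w * z) : ℝ) ≤ G * (A * r) := by
      rw [hnq, hnd] at hin; exact hin
    rw [hFt]
    nlinarith [hstep, hin2, hGnn, hAnn, hr0, htr, sq_nonneg (1 - t*r),
      mul_le_mul_of_nonneg_left hstep (mul_nonneg (mul_nonneg (by norm_num : (0:ℝ) ≤ 2) hr0.le) hGnn)]
  -- monotonicity
  have hcont : ContinuousOn D (Icc 0 1) :=
    fun t ht => ((hDder t ht).continuousAt.continuousWithinAt)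
  have hmono : MonotoneOn D (Icc 0 1) := by
    apply monotoneOn_of_deriv_nonneg (convex_Icc 0 1) hcont
    · intro t ht
      rw [interior_Icc] at ht
      exact ((hDder t (Ioo_subset_Icc_self ht)).differentiableAt).differentiableWithinAt
    · intro t ht
      rw [interior_Icc] at ht
      rw [(hDder t (Ioo_subset_Icc_self ht)).deriv]
      have := key t ht
      linarith
  have hD01 : D 0 ≤ D 1 :=
    hmono ⟨le_refl 0, zero_le_one⟩ ⟨zero_le_one, le_refl 1⟩ zero_le_one
  have hF0 : F 0 = 1 := by simp [hFdef, hqdef, hg0]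
  have hF1 : F 1 = Complex.normSq (g z) := by
    simp [hFdef, hqdef, Complex.normSq_eq_norm_sq]
  have hlog : Real.log (Complex.normSq (g z)) ≤ 2 * r / (1 - r) := by
    have hD0 : D 0 = 2 := by simp [hDdef, hψdef, hφdef, hF0]
    have hD1 : D 1 = 2 * (1 - r)⁻¹ - Real.log (Complex.normSq (g z)) := by
      simp [hDdef, hψdef, hφdef, hF1]
    rw [hD0, hD1] at hD01
    have hr1' : 0 < 1 - r := by linarith
    have : 2 * (1 - r)⁻¹ - 2 = 2 * r / (1 - r) := by field_simp; ring
    linarith [this.symm.le, this.le]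
  have hns : (Complex.normSq (g z) : ℝ) ≤ Real.exp (2 * r / (1 - r)) := by
    have hpos : 0 < Complex.normSq (g z) := Complex.normSq_pos.2 (hgne z hz)
    calc (Complex.normSq (g z) : ℝ) = Real.exp (Real.log (Complex.normSq (g z))) :=
          (Real.exp_log hpos).symm
      _ ≤ Real.exp (2 * r / (1 - r)) := Real.exp_le_exp.2 hlog
  -- conclude
  rw [hf]
  have h1z : (1:ℝ) - r ≤ ‖1 - z‖ := by
    have h := norm_sub_norm_le (1:ℂ) z
    simpa using h
  have hr1' : (0:ℝ) < 1 - r := by linarith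
  have h1zpos : 0 < ‖1 - z‖ := lt_of_lt_of_le hr1' h1z
  have hnspos : (0:ℝ) ≤ Complex.normSq (g z) := Complex.normSq_nonneg _
  rw [norm_mul, norm_div]
  rw [Complex.norm_real, Real.norm_of_nonneg hnspos]
  have hstep1 : r / ‖1 - z‖ ≤ r / (1 - r) :=
    div_le_div_of_nonneg_left hr0.le hr1' h1z |>.trans_eq rfl
  calc ‖z‖ / ‖1 - z‖ * Complex.normSq (g z)
      ≤ (r / (1 - r)) * Real.exp (2 * r / (1 - r)) := by
        apply mul_le_mul hstep1 hns hnspos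
        positivity
    _ = (r / (1 - r)) * Real.exp (2 * r / (1 - r)) := rfl
end

section
/- Let μ be analytic on the open unit disk 𝔻 with μ(0) = 0 and |μ(z)| < 1 for all z ∈ 𝔻. Let g be analytic and nonvanishing on 𝔻 with g(0) = 1, satisfying z·g′(z)·(1 − μ(z))·(1 − z) = μ(z)·g(z) for all z ∈ 𝔻, and define h(z) = g(z)/(1 − z). Then for all z ∈ 𝔻, |h(z) + z·h′(z)|·|g(z)| ≤ (1/(1 − |z|)³)·exp(2|z|/(1 − |z|)). (The left-hand side equals |f_z(z)| for the log-harmonic mapping f(z) = z·h(z)·conj(g(z)), since f_z = (h + z·h′)·conj(g).) -/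
open Complex Metric Set Filter Topology

theorem stmt_9 (μ g h : ℂ → ℂ)
    (hμd : DifferentiableOn ℂ μ (ball (0 : ℂ) 1))
    (hμ0 : μ 0 = 0)
    (hμlt : ∀ z ∈ ball (0 : ℂ) 1, ‖μ z‖ < 1)
    (hgd : DifferentiableOn ℂ g (ball (0 : ℂ) 1))
    (hgne : ∀ z ∈ ball (0 : ℂ) 1, g z ≠ 0)
    (hg0 : g 0 = 1)
    (heq : ∀ z ∈ ball (0 : ℂ) 1, z * deriv g z * (1 - μ z) * (1 - z) = μ z * g z)
    (hh : ∀ z, h z = g z / (1 - z)) :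
    ∀ z ∈ ball (0 : ℂ) 1,
      ‖h z + z * deriv h z‖ * ‖g z‖ ≤
        (1 / (1 - ‖z‖) ^ 3) *
          Real.exp (2 * ‖z‖ / (1 - ‖z‖)) := by
  have hfun : h = fun w => g w / (1 - w) := funext hh
  subst hfun
  -- Schwarz lemma facts
  have hmaps : MapsTo μ (ball (0 : ℂ) 1) (ball (0 : ℂ) 1) := fun w hw =>
    mem_ball_zero_iff.2 (hμlt w hw)
  have hsch : ∀ w ∈ ball (0 : ℂ) 1, ‖μ w‖ ≤ ‖w‖ := by
    intro w hw
    have h0 : μ 0 = (0 : ℂ) := hμ0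
    simpa using Complex.norm_le_norm_of_mapsTo_ball hμd (hmaps.mono_right ball_subset_closedBall)
      hμ0 (mem_ball_zero_iff.1 hw)
  have hschd : ‖deriv μ 0‖ ≤ 1 :=
    Complex.norm_deriv_le_one_of_mapsTo_ball hμd (by rw [hμ0]; exact hmaps.mono_right ball_subset_closedBall) one_pos
  -- deriv g 0 = deriv μ 0
  have hdg0 : deriv g 0 = deriv μ 0 := by
    have hball0 : ball (0:ℂ) 1 ∈ 𝓝 (0:ℂ) := ball_mem_nhds _ one_pos
    have hgA : AnalyticOnNhd ℂ g (ball (0:ℂ) 1) := hgd.analyticOnNhd isOpen_ball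
    have h0mem : (0:ℂ) ∈ ball (0:ℂ) 1 := by simp
    have hdgd : DifferentiableAt ℂ (deriv g) 0 := ((hgA.deriv) 0 h0mem).differentiableAt
    have hμdiff : DifferentiableAt ℂ μ 0 := hμd.differentiableAt hball0
    set C : ℂ → ℂ := fun w => deriv g w * (1 - μ w) * (1 - w) with hC
    have hCd : DifferentiableAt ℂ C 0 :=
      (hdgd.mul ((differentiableAt_const _).sub hμdiff)).mul
        ((differentiableAt_const _).sub differentiableAt_id)
    have hA : HasDerivAt (fun w => w * C w) (1 * C 0 + 0 * deriv C 0) 0 :=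
      (hasDerivAt_id 0).mul hCd.hasDerivAt
    have hgdiff : DifferentiableAt ℂ g 0 := hgd.differentiableAt hball0
    have hB : HasDerivAt (fun w => μ w * g w) (deriv μ 0 * g 0 + μ 0 * deriv g 0) 0 :=
      hμdiff.hasDerivAt.mul hgdiff.hasDerivAt
    have hAB : (fun w => w * C w) =ᶠ[𝓝 (0:ℂ)] fun w => μ w * g w := by
      filter_upwards [hball0] with w hw
      have hq := heq w hw
      simp only [hC]
      linear_combination hq
    have hdAB : deriv (fun w => w * C w) 0 = deriv (fun w => μ w * g w) 0 := hAB.deriv_eq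
    rw [hA.deriv, hB.deriv] at hdAB
    simpa [hC, hμ0, hg0] using hdAB
  -- derivative bound from the ODE and Schwarz
  have hgderiv : ∀ w ∈ ball (0 : ℂ) 1,
      ‖deriv g w‖ * (1 - ‖w‖) ^ 2 ≤ ‖g w‖ := by
    intro w hw
    have hwlt : ‖w‖ < 1 := mem_ball_zero_iff.1 hw
    have hw1 : (0:ℝ) < 1 - ‖w‖ := by linarith
    rcases eq_or_ne w 0 with rfl | hw0
    · simpa [hg0, hdg0] using hschd
    · have hq := congrArg norm (heq w hw)
      simp only [norm_mul] at hq
      have hs := hsch w hw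
      have hwpos : 0 < ‖w‖ := norm_pos_iff.2 hw0
      have h1 : ‖deriv g w‖ * (‖1 - μ w‖ * ‖1 - w‖)
          ≤ ‖g w‖ := by
        have hkey : ‖w‖ *
            (‖deriv g w‖ * (‖1 - μ w‖ * ‖1 - w‖))
            ≤ ‖w‖ * ‖g w‖ :=
          calc ‖w‖ *
              (‖deriv g w‖ * (‖1 - μ w‖ * ‖1 - w‖))
              = ‖μ w‖ * ‖g w‖ := by rw [← hq]; ring
            _ ≤ ‖w‖ * ‖g w‖ :=
                mul_le_mul_of_nonneg_right hs (norm_nonneg _)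
        exact le_of_mul_le_mul_left hkey hwpos
      have h2 : 1 - ‖w‖ ≤ ‖1 - μ w‖ := by
        have h2' : ‖(1:ℂ)‖ - ‖μ w‖ ≤ ‖(1:ℂ) - μ w‖ := norm_sub_norm_le 1 (μ w)
        simp at h2'
        linarith
      have h3 : 1 - ‖w‖ ≤ ‖1 - w‖ := by
        have h3' : ‖(1:ℂ)‖ - ‖w‖ ≤ ‖(1:ℂ) - w‖ := norm_sub_norm_le 1 w
        simpa using h3'
      have h4 : (1 - ‖w‖) ^ 2 ≤ ‖1 - μ w‖ * ‖1 - w‖ := by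
        rw [sq]
        exact mul_le_mul h2 h3 hw1.le (norm_nonneg _)
      calc ‖deriv g w‖ * (1 - ‖w‖) ^ 2
          ≤ ‖deriv g w‖ * (‖1 - μ w‖ * ‖1 - w‖) :=
            mul_le_mul_of_nonneg_left h4 (norm_nonneg _)
        _ ≤ ‖g w‖ := h1
  -- growth bound for g
  have hgbound : ∀ z ∈ ball (0 : ℂ) 1,
      ‖g z‖ ≤ Real.exp (‖z‖ / (1 - ‖z‖)) := by
    intro z hz
    set r := ‖z‖ with hr
    have hrlt : r < 1 := mem_ball_zero_iff.1 hz
    have hrnn : 0 ≤ r := norm_nonneg z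
    have habs : ∀ t ∈ Icc (0:ℝ) 1, ‖(↑t * z : ℂ)‖ = r * t := by
      intro t ht
      rw [norm_mul, Complex.norm_real, Real.norm_eq_abs, _root_.abs_of_nonneg ht.1, mul_comm]
    have hden : ∀ t ∈ Icc (0:ℝ) 1, (0:ℝ) < 1 - r * t := by
      intro t ht
      nlinarith [ht.1, ht.2]
    have hmem : ∀ t ∈ Icc (0:ℝ) 1, (↑t * z : ℂ) ∈ ball (0:ℂ) 1 := by
      intro t ht
      rw [mem_ball_zero_iff, habs t ht]
      nlinarith [ht.1, ht.2]
    have key : ∀ ε > (0:ℝ), ‖g z‖ ≤ Real.exp (ε + r/(1-r)) := by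
      intro ε hε
      set f : ℝ → ℂ := fun t => g (↑t * z) with hf
      set f' : ℝ → ℂ := fun t => deriv g (↑t * z) * z with hf'def
      set B : ℝ → ℝ := fun t => Real.exp (ε*t + r*t/(1-r*t)) with hB
      set B' : ℝ → ℝ := fun t => Real.exp (ε*t + r*t/(1-r*t)) * (ε + r/(1-r*t)^2) with hB'def
      have hcf : ContinuousOn f (Icc 0 1) := by
        apply hgd.continuousOn.comp
          ((Complex.continuous_ofReal.mul continuous_const).continuousOn)
        intro t ht; exact hmem t ht
      have hf' : ∀ t ∈ Ico (0:ℝ) 1, HasDerivWithinAt f (f' t) (Ici t) t := by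
        intro t ht
        have htmem : (↑t * z : ℂ) ∈ ball (0:ℂ) 1 := hmem t ⟨ht.1, ht.2.le⟩
        have hga : HasDerivAt g (deriv g (↑t*z)) (↑t*z) :=
          (hgd.differentiableAt (isOpen_ball.mem_nhds htmem)).hasDerivAt
        have hinner : HasDerivAt (fun w : ℂ => w * z) z (↑t) := by
          simpa using (hasDerivAt_id (↑t:ℂ)).mul_const z
        have hcomp : HasDerivAt (fun w : ℂ => g (w * z)) (deriv g (↑t*z) * z) (↑t) := by
          exact HasDerivAt.comp (↑t:ℂ) hga hinner
        exact (hcomp.comp_ofReal).hasDerivWithinAt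
      have hB' : ∀ t ∈ Ico (0:ℝ) 1, HasDerivWithinAt B (B' t) (Ici t) t := by
        intro t ht
        have h1t : 1 - r*t ≠ 0 := (hden t ⟨ht.1, ht.2.le⟩).ne'
        have hb : HasDerivAt (fun t:ℝ => r*t) r t := by
          simpa using (hasDerivAt_id t).const_mul r
        have hc : HasDerivAt (fun t:ℝ => 1 - r*t) (-r) t := by
          have := (hasDerivAt_const t (1:ℝ)).sub hb; simp only [zero_sub] at this; exact this
        have hd := hb.div hc h1t
        have heq' : (r*(1-r*t) - r*t*(-r))/(1-r*t)^2 = r/(1-r*t)^2 := by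
          rw [div_eq_div_iff (by positivity) (by positivity)]; ring
        rw [heq'] at hd
        have ha : HasDerivAt (fun t:ℝ => ε*t) ε t := by
          simpa using (hasDerivAt_id t).const_mul ε
        have h1 : HasDerivAt (fun t:ℝ => ε*t + r*t/(1-r*t)) (ε + r/(1-r*t)^2) t := ha.add hd
        exact h1.exp.hasDerivWithinAt
      have hBc : ContinuousOn B (Icc 0 1) := by
        apply Real.continuous_exp.comp_continuousOn
        apply ContinuousOn.add
        · exact (continuous_const.mul continuous_id).continuousOn
        · apply ContinuousOn.div
          · exact (continuous_const.mul continuous_id).continuousOn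
          · exact (continuous_const.sub (continuous_const.mul continuous_id)).continuousOn
          · intro t ht; exact (hden t ht).ne'
      have ha0 : ‖f 0‖ ≤ B 0 := by simp [hf, hB, hg0]
      have hbound : ∀ t ∈ Ico (0:ℝ) 1, ‖f t‖ = B t → ‖f' t‖ < B' t := by
        intro t ht hft
        have ht' : t ∈ Icc (0:ℝ) 1 := ⟨ht.1, ht.2.le⟩
        have htmem := hmem t ht'
        have hder := hgderiv _ htmem
        rw [habs t ht'] at hder
        have hft' : ‖g (↑t*z)‖ = B t := by
          simpa [hf] using hft
        rw [hft'] at hder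
        have hn : ‖f' t‖ = ‖deriv g (↑t*z)‖ * r := by
          simp [hf'def, norm_mul, hr]
        have hpos : (0:ℝ) < 1 - r*t := hden t ht'
        have hBpos : (0:ℝ) < B t := Real.exp_pos _
        rw [hn, hB'def]
        have hdg : ‖deriv g (↑t*z)‖ ≤ B t / (1-r*t)^2 := by
          rw [le_div_iff₀ (by positivity)]; exact hder
        have step1 : ‖deriv g (↑t*z)‖ * r ≤ B t / (1-r*t)^2 * r :=
          mul_le_mul_of_nonneg_right hdg hrnn
        have step2 : B t / (1-r*t)^2 * r < B t * (ε + r/(1-r*t)^2) := by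
          have hrr : B t / (1-r*t)^2 * r = B t * (r/(1-r*t)^2) := by ring
          rw [hrr]
          have : B t * (r/(1-r*t)^2) < B t * (ε + r/(1-r*t)^2) := by
            apply mul_lt_mul_of_pos_left _ hBpos
            linarith
          exact this
        calc ‖deriv g (↑t*z)‖ * r ≤ B t / (1-r*t)^2 * r := step1
          _ < Real.exp (ε*t + r*t/(1-r*t)) * (ε + r/(1-r*t)^2) := step2
      have hfin := image_norm_le_of_norm_deriv_right_lt_deriv_boundary' hcf hf' ha0 hBc hB'
        hbound (right_mem_Icc.2 zero_le_one)
      have : ‖g z‖ ≤ B 1 := by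
        simpa [hf] using hfin
      simpa [hB] using this
    have ht : Tendsto (fun ε : ℝ => Real.exp (ε + r/(1-r))) (𝓝[>] 0) (𝓝 (Real.exp (r/(1-r)))) := by
      have hc : ContinuousAt (fun ε : ℝ => Real.exp (ε + r/(1-r))) 0 := by fun_prop
      have := hc.continuousWithinAt (s := Ioi 0)
      simpa [ContinuousWithinAt] using this
    exact ge_of_tendsto ht (eventually_nhdsWithin_of_forall fun ε hε => key ε hε)
  -- main computation
  intro z hz
  have hzlt : ‖z‖ < 1 := mem_ball_zero_iff.1 hz
  have hz1 : (0 : ℝ) < 1 - ‖z‖ := by linarith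
  have h1zne : (1 : ℂ) - z ≠ 0 := by
    intro hc
    have : z = 1 := by linear_combination -hc
    simp [this] at hzlt
  have hμz1 : (1 : ℂ) - μ z ≠ 0 := by
    intro hc
    have : μ z = 1 := by linear_combination -hc
    have hlt := hμlt z hz
    rw [this] at hlt
    simp at hlt
  -- derivative of h
  have hgat : HasDerivAt g (deriv g z) z :=
    (hgd.differentiableAt (isOpen_ball.mem_nhds hz)).hasDerivAt
  have hden : HasDerivAt (fun w : ℂ => 1 - w) (-1) z := by
    have := (hasDerivAt_const z (1 : ℂ)).sub (hasDerivAt_id z); simp only [zero_sub] at this; exact this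
  have hdh : deriv (fun w => g w / (1 - w)) z
      = (deriv g z * (1 - z) - g z * (-1)) / (1 - z) ^ 2 :=
    (hgat.div hden h1zne).deriv
  -- key identity
  have hid : (g z / (1 - z) + z * deriv (fun w => g w / (1 - w)) z)
      * ((1 - μ z) * (1 - z) ^ 2) = g z := by
    rw [hdh]
    have hq := heq z hz
    field_simp
    ring_nf
    ring_nf at hq
    linear_combination ((1 - z) + z*(1-z)*(z-2) + z*(3-3*z+z^2)) * hq
  -- take absolute values
  have habs : ‖g z / (1 - z) + z * deriv (fun w => g w / (1 - w)) z‖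
      * (‖1 - μ z‖ * ‖1 - z‖ ^ 2) = ‖g z‖ := by
    have := congrArg norm hid
    simpa [norm_mul, norm_pow] using this
  have hlow : (1 - ‖z‖) ^ 3 ≤ ‖1 - μ z‖ * ‖1 - z‖ ^ 2 := by
    have h1 : 1 - ‖z‖ ≤ ‖1 - μ z‖ := by
      have := hsch z hz
      have h2 : ‖(1:ℂ)‖ - ‖μ z‖ ≤ ‖(1:ℂ) - μ z‖ := norm_sub_norm_le 1 (μ z)
      simp at h2
      linarith
    have h2 : 1 - ‖z‖ ≤ ‖1 - z‖ := by
      have h2 : ‖(1:ℂ)‖ - ‖z‖ ≤ ‖(1:ℂ) - z‖ := norm_sub_norm_le 1 z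
      simpa using h2
    calc (1 - ‖z‖) ^ 3 = (1 - ‖z‖) * (1 - ‖z‖) ^ 2 := by ring
      _ ≤ ‖1 - μ z‖ * ‖1 - z‖ ^ 2 := by
          apply mul_le_mul h1 (by nlinarith) (by positivity) (norm_nonneg _)
  have hgb := hgbound z hz
  have hgsq : ‖g z‖ ^ 2 ≤ Real.exp (2 * ‖z‖ / (1 - ‖z‖)) := by
    have : ‖g z‖ ^ 2 ≤ Real.exp (‖z‖ / (1 - ‖z‖)) ^ 2 := by
      have := norm_nonneg (g z)
      nlinarith
    calc ‖g z‖ ^ 2 ≤ Real.exp (‖z‖ / (1 - ‖z‖)) ^ 2 := this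
      _ = Real.exp (2 * ‖z‖ / (1 - ‖z‖)) := by
          rw [sq, ← Real.exp_add]
          ring_nf
  -- finish
  set a := ‖g z / (1 - z) + z * deriv (fun w => g w / (1 - w)) z‖ with ha
  set d := ‖1 - μ z‖ * ‖1 - z‖ ^ 2 with hd
  have hdpos : 0 < d := lt_of_lt_of_le (by positivity) hlow
  have hanon : 0 ≤ a := norm_nonneg _
  have key : a * ‖g z‖ * d ≤ Real.exp (2 * ‖z‖ / (1 - ‖z‖)) := by
    calc a * ‖g z‖ * d = (a * d) * ‖g z‖ := by ring
      _ = ‖g z‖ * ‖g z‖ := by rw [habs]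
      _ = ‖g z‖ ^ 2 := by ring
      _ ≤ _ := hgsq
  have hstep : a * ‖g z‖ * (1 - ‖z‖) ^ 3 ≤
      Real.exp (2 * ‖z‖ / (1 - ‖z‖)) := by
    have : a * ‖g z‖ * (1 - ‖z‖) ^ 3 ≤ a * ‖g z‖ * d := by
      apply mul_le_mul_of_nonneg_left hlow (by positivity)
    linarith
  rw [div_mul_eq_mul_div, one_mul, le_div_iff₀ (by positivity)]
  linarith
end

section
/- Let μ be analytic on the open unit disk 𝔻 with μ(0) = 0 and |μ(z)| < 1 for all z ∈ 𝔻. Let g be analytic and nonvanishing on 𝔻 with g(0) = 1, satisfying z·g′(z)·(1 − μ(z))·(1 − z) = μ(z)·g(z) for all z ∈ 𝔻, and define h(z) = g(z)/(1 − z). Then for all z ∈ 𝔻, |z|·|h(z)|·|g′(z)| ≤ (|z|/(1 − |z|)³)·exp(2|z|/(1 − |z|)). (The left-hand side equals |f_z̄(z)| for the log-harmonic mapping f(z) = z·h(z)·conj(g(z)), since f_z̄ = z·h·conj(g′).) -/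
open Complex Metric Set

theorem stmt_10 (μ g h : ℂ → ℂ)
    (hμd : DifferentiableOn ℂ μ (ball (0 : ℂ) 1))
    (hμ0 : μ 0 = 0)
    (hμlt : ∀ z ∈ ball (0 : ℂ) 1, ‖μ z‖ < 1)
    (hgd : DifferentiableOn ℂ g (ball (0 : ℂ) 1))
    (hgne : ∀ z ∈ ball (0 : ℂ) 1, g z ≠ 0)
    (hg0 : g 0 = 1)
    (heq : ∀ z ∈ ball (0 : ℂ) 1, z * deriv g z * (1 - μ z) * (1 - z) = μ z * g z)
    (hh : ∀ z, h z = g z / (1 - z)) :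
    ∀ z ∈ ball (0 : ℂ) 1,
      ‖z‖ * ‖h z‖ * ‖deriv g z‖ ≤
        (‖z‖ / (1 - ‖z‖) ^ 3) *
          Real.exp (2 * ‖z‖ / (1 - ‖z‖)) := by
  -- Schwarz lemma
  have hmaps : MapsTo μ (ball (0:ℂ) 1) (ball (0:ℂ) 1) := fun w hw =>
    mem_ball_zero_iff.2 (hμlt w hw)
  have hμle : ∀ w ∈ ball (0:ℂ) 1, ‖μ w‖ ≤ ‖w‖ := by
    intro w hw
    exact Complex.norm_le_norm_of_mapsTo_ball hμd (hmaps.mono_right ball_subset_closedBall) hμ0 (mem_ball_zero_iff.1 hw)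
  -- basic facts about points in the ball
  have habs1z : ∀ w ∈ ball (0:ℂ) 1, 1 - ‖w‖ ≤ ‖1 - w‖ := by
    intro w _
    have := norm_sub_norm_le (1:ℂ) w
    simpa using this
  have habs1μ : ∀ w ∈ ball (0:ℂ) 1, 1 - ‖w‖ ≤ ‖1 - μ w‖ := by
    intro w hw
    have h1 := norm_sub_norm_le (1:ℂ) (μ w)
    have := hμle w hw
    simp only [norm_one] at h1
    linarith
  -- the logarithmic derivative
  set q : ℂ → ℂ := fun w => deriv g w / g w with hq_def
  have hdg : DifferentiableOn ℂ (deriv g) (ball (0:ℂ) 1) :=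
    ((hgd.analyticOnNhd isOpen_ball).deriv).differentiableOn
  have hqc : ContinuousOn q (ball (0:ℂ) 1) :=
    hdg.continuousOn.div hgd.continuousOn hgne
  -- rewrite of the ODE: deriv g w = q w * g w, and formula for q
  have hgq : ∀ w ∈ ball (0:ℂ) 1, deriv g w = q w * g w := by
    intro w hw
    rw [hq_def]
    exact (div_mul_cancel₀ _ (hgne w hw)).symm
  have hqbound : ∀ w ∈ ball (0:ℂ) 1, w ≠ 0 →
      ‖q w‖ ≤ 1 / (1 - ‖w‖) ^ 2 := by
    intro w hw hw0
    have hw1 : ‖w‖ < 1 := mem_ball_zero_iff.1 hw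
    have hμw : 1 - μ w ≠ 0 := by
      intro hc
      have h1 : μ w = 1 := by linear_combination -hc
      have h2 := hμlt w hw
      rw [h1] at h2
      simp at h2
    have h1w : 1 - w ≠ 0 := by
      intro hc
      have : w = 1 := by linear_combination -hc
      rw [this] at hw1; simp at hw1
    have hgw : g w ≠ 0 := hgne w hw
    have hqw : q w = μ w / (w * (1 - μ w) * (1 - w)) := by
      rw [hq_def]
      show deriv g w / g w = _
      rw [div_eq_div_iff hgw (mul_ne_zero (mul_ne_zero hw0 hμw) h1w)]
      linear_combination heq w hw
    have hs : 0 < 1 - ‖w‖ := by linarith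
    have h1 : 1 - ‖w‖ ≤ ‖1 - w‖ := habs1z w hw
    have h2 : 1 - ‖w‖ ≤ ‖1 - μ w‖ := habs1μ w hw
    have h3 : ‖μ w‖ ≤ ‖w‖ := hμle w hw
    have hw0' : 0 < ‖w‖ := norm_pos_iff.2 hw0
    have p1 : 0 < ‖1 - w‖ := lt_of_lt_of_le hs h1
    have p2 : 0 < ‖1 - μ w‖ := lt_of_lt_of_le hs h2
    rw [hqw, norm_div, norm_mul, norm_mul,
      div_le_div_iff₀ (mul_pos (mul_pos hw0' p2) p1) (pow_pos hs 2)]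
    have hbc : (1 - ‖w‖) * (1 - ‖w‖) ≤
        ‖1 - μ w‖ * ‖1 - w‖ := mul_le_mul h2 h1 hs.le p2.le
    nlinarith [mul_le_mul_of_nonneg_left hbc hw0'.le,
      mul_le_mul_of_nonneg_right h3 (mul_nonneg hs.le hs.le)]
  -- Main pointwise goal
  intro z hz
  by_cases hz0 : z = 0
  · subst hz0
    norm_num
  set r : ℝ := ‖z‖ with hr_def
  have hr1 : r < 1 := mem_ball_zero_iff.1 hz
  have hr0 : 0 < r := norm_pos_iff.2 hz0
  have hs0 : 0 < 1 - r := by linarith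
  -- an open neighborhood of [0,1] mapped into the ball
  set U : Set ℝ := Ioo (-(r⁻¹)) (r⁻¹) with hU_def
  have hUopen : IsOpen U := isOpen_Ioo
  have hT1 : (1:ℝ) < r⁻¹ := (one_lt_inv₀ hr0).2 hr1
  have hsub : Icc (0:ℝ) 1 ⊆ U := by
    intro t ht
    exact ⟨by linarith [ht.1], by linarith [ht.2]⟩
  have hmemU : ∀ t ∈ U, ((t:ℂ) * z) ∈ ball (0:ℂ) 1 := by
    intro t ht
    rw [mem_ball_zero_iff]
    rw [norm_mul, Complex.norm_real, Real.norm_eq_abs, ← hr_def]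
    have h1 : |t| < r⁻¹ := abs_lt.2 ⟨ht.1, ht.2⟩
    calc |t| * r < r⁻¹ * r := by
          exact mul_lt_mul_of_pos_right h1 hr0
      _ = 1 := inv_mul_cancel₀ (ne_of_gt hr0)
  have hmem : ∀ t ∈ Icc (0:ℝ) 1, ((t:ℂ) * z) ∈ ball (0:ℂ) 1 := fun t ht =>
    hmemU t (hsub ht)
  -- the integrand
  set φ : ℝ → ℂ := fun t => z * q ((t:ℂ) * z) with hφ_def
  have hφcontU : ∀ t ∈ U, ContinuousAt φ t := by
    intro t ht
    have hinner : ContinuousAt (fun x : ℝ => (x:ℂ) * z) t :=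
      (Complex.continuous_ofReal.mul continuous_const).continuousAt
    have houter : ContinuousAt (fun w : ℂ => z * q w) ((t:ℂ) * z) :=
      continuousAt_const.mul (hqc.continuousAt (isOpen_ball.mem_nhds (hmemU t ht)))
    have hcomp : ContinuousAt ((fun w : ℂ => z * q w) ∘ (fun x : ℝ => (x:ℂ) * z)) t :=
      ContinuousAt.comp houter hinner
    simpa [Function.comp_def, hφ_def] using hcomp
  have hφcont : ∀ t ∈ Icc (0:ℝ) 1, ContinuousAt φ t := fun t ht => hφcontU t (hsub ht)
  have hφcontOn : ContinuousOn φ (Icc (0:ℝ) 1) := fun t ht =>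
    (hφcont t ht).continuousWithinAt
  have hφint : ∀ t ∈ Icc (0:ℝ) 1, IntervalIntegrable φ MeasureTheory.volume 0 t := by
    intro t ht
    apply ContinuousOn.intervalIntegrable
    apply hφcontOn.mono
    rw [uIcc_of_le ht.1]
    exact Icc_subset_Icc le_rfl ht.2
  set c : ℝ → ℂ := fun t => ∫ s in (0:ℝ)..t, φ s with hc_def
  have hcderiv : ∀ t ∈ Icc (0:ℝ) 1, HasDerivAt c (φ t) t := by
    intro t ht
    apply intervalIntegral.integral_hasDerivAt_right (hφint t ht)
    · exact ContinuousAt.stronglyMeasurableAtFilter hUopen hφcontU t (hsub ht)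
    · exact hφcont t ht
  -- the auxiliary function F
  set F : ℝ → ℂ := fun t => g ((t:ℂ) * z) * Complex.exp (-(c t)) with hF_def
  have hFderiv : ∀ t ∈ Icc (0:ℝ) 1, HasDerivAt F 0 t := by
    intro t ht
    have hinner : HasDerivAt (fun s : ℝ => ((s:ℂ) * z)) z t := by
      simpa using (Complex.ofRealCLM.hasDerivAt (x := t)).mul_const z
    have hgdiff : DifferentiableAt ℂ g ((t:ℂ) * z) :=
      hgd.differentiableAt (isOpen_ball.mem_nhds (hmem t ht))
    have hgt : HasDerivAt (fun s : ℝ => g ((s:ℂ) * z)) (z * deriv g ((t:ℂ) * z)) t := by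
      have := HasDerivAt.scomp (𝕜 := ℝ) (𝕜' := ℂ) t hgdiff.hasDerivAt hinner
      simpa [smul_eq_mul, Function.comp_def] using this
    have hct : HasDerivAt (fun s : ℝ => Complex.exp (-(c s)))
        (-(φ t) * Complex.exp (-(c t))) t := by
      have hneg : HasDerivAt (fun s : ℝ => -(c s)) (-(φ t)) t := (hcderiv t ht).neg
      have := HasDerivAt.scomp (𝕜 := ℝ) (𝕜' := ℂ) t
        (Complex.hasDerivAt_exp (-(c t))) hneg
      simpa [smul_eq_mul, mul_comm, Function.comp_def] using this
    have := hgt.mul hct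
    refine this.congr_deriv ?_
    have hgne' : g ((t:ℂ) * z) ≠ 0 := hgne _ (hmem t ht)
    have : φ t = z * (deriv g ((t:ℂ) * z) / g ((t:ℂ) * z)) := rfl
    rw [this, div_eq_mul_inv]
    linear_combination (-(z * deriv g ((t:ℂ) * z) * Complex.exp (-(c t)))) * mul_inv_cancel₀ hgne'
  -- conclude g z = exp (c 1)
  have hFcont : ContinuousOn F (Icc (0:ℝ) 1) := fun t ht =>
    ((hFderiv t ht).continuousAt).continuousWithinAt
  have hFconst := constant_of_has_deriv_right_zero hFcont
    (fun t ht => ((hFderiv t (Ico_subset_Icc_self ht)).hasDerivWithinAt))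
  have hF1 : F 1 = F 0 := hFconst 1 (right_mem_Icc.2 zero_le_one)
  have hc0 : c 0 = 0 := by simp [hc_def]
  have hF0 : F 0 = 1 := by simp [hF_def, hc0, hg0]
  have hgz : g z = Complex.exp (c 1) := by
    have h1 : g z * Complex.exp (-(c 1)) = 1 := by
      have : F 1 = 1 := hF1.trans hF0
      simpa [hF_def] using this
    have := congrArg (· * Complex.exp (c 1)) h1
    simp only [one_mul] at this
    rw [← this]
    rw [mul_assoc, ← Complex.exp_add]
    simp
  -- bound the norm of c 1
  set ψ : ℝ → ℝ := fun t => r / (1 - t * r) ^ 2 with hψ_def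
  have hψpos : ∀ t ∈ Icc (0:ℝ) 1, 0 < 1 - t * r := by
    intro t ht
    nlinarith [ht.1, ht.2]
  have hψcont : ContinuousOn ψ (Icc (0:ℝ) 1) := by
    apply ContinuousOn.div continuousOn_const
    · fun_prop
    · intro t ht
      have := hψpos t ht
      positivity
  have hψint : IntervalIntegrable ψ MeasureTheory.volume 0 1 := by
    apply ContinuousOn.intervalIntegrable
    rwa [uIcc_of_le zero_le_one]
  have hψval : ∫ t in (0:ℝ)..1, ψ t = r / (1 - r) := by
    have : ∀ t ∈ uIcc (0:ℝ) 1, HasDerivAt (fun u : ℝ => (1 - u * r)⁻¹) (ψ t) t := by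
      intro t ht
      rw [uIcc_of_le zero_le_one] at ht
      have h1 : HasDerivAt (fun u : ℝ => 1 - u * r) (-r) t := by
        simpa using ((hasDerivAt_id t).mul_const r).const_sub 1
      have hpos : (0:ℝ) < 1 - t * r := hψpos t ht
      have h2 := h1.inv hpos.ne'
      refine h2.congr_deriv ?_
      rw [hψ_def]
      field_simp
    rw [intervalIntegral.integral_eq_sub_of_hasDerivAt this hψint]
    field_simp
    ring
  have hnormc : ‖c 1‖ ≤ r / (1 - r) := by
    have hb : ∀ᵐ t ∂MeasureTheory.volume.restrict (Set.uIoc (0:ℝ) 1), ‖φ t‖ ≤ ψ t := by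
      rw [uIoc_of_le zero_le_one]
      filter_upwards [MeasureTheory.ae_restrict_mem measurableSet_Ioc] with t ht
      have ht' : t ∈ Icc (0:ℝ) 1 := ⟨le_of_lt ht.1, ht.2⟩
      have htz : ((t:ℂ) * z) ≠ 0 := by
        simp only [mul_ne_zero_iff, Complex.ofReal_ne_zero]
        exact ⟨ne_of_gt ht.1, hz0⟩
      have habs : ‖(t:ℂ) * z‖ = t * r := by
        rw [norm_mul, Complex.norm_real, Real.norm_eq_abs, abs_of_pos ht.1, ← hr_def]
      have hqb := hqbound _ (hmem t ht') htz
      rw [habs] at hqb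
      have h1tr := hψpos t ht'
      calc ‖φ t‖ = r * ‖q ((t:ℂ) * z)‖ := by
            show ‖z * q ((t:ℂ) * z)‖ = _
            rw [norm_mul, ← hr_def]
        _ ≤ r * (1 / (1 - t * r) ^ 2) := by
            apply mul_le_mul_of_nonneg_left hqb (le_of_lt hr0)
        _ = ψ t := by rw [hψ_def]; field_simp
    have := intervalIntegral.norm_integral_le_abs_of_norm_le hb hψint
    rw [hψval] at this
    have habs' : |r / (1 - r)| = r / (1 - r) := abs_of_nonneg (div_nonneg hr0.le hs0.le)
    rw [habs'] at this
    exact this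
  have hgz_bound : ‖g z‖ ≤ Real.exp (r / (1 - r)) := by
    rw [hgz, Complex.norm_exp]
    apply Real.exp_le_exp.2
    calc (c 1).re ≤ |(c 1).re| := le_abs_self _
      _ ≤ ‖c 1‖ := Complex.abs_re_le_norm _
      _ ≤ r / (1 - r) := hnormc
  -- final assembly
  have hμz : ‖μ z‖ ≤ r := hμle z hz
  have h1z : 1 - r ≤ ‖1 - z‖ := habs1z z hz
  have h1μ : 1 - r ≤ ‖1 - μ z‖ := by
    have := habs1μ z hz; linarith
  have hkey : ‖z‖ * ‖deriv g z‖ * ‖1 - μ z‖ *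
      ‖1 - z‖ = ‖μ z‖ * ‖g z‖ := by
    have := congrArg norm (heq z hz)
    simpa [norm_mul] using this
  set A := ‖g z‖ with hA_def
  set D := ‖deriv g z‖ with hD_def
  have hA0 : 0 ≤ A := norm_nonneg _
  have hD0 : 0 ≤ D := norm_nonneg _
  have hAexp : A ≤ Real.exp (r / (1 - r)) := hgz_bound
  -- abs z * D ≤ r * A / (1-r)^2
  have hzD : r * D * (1 - r) * (1 - r) ≤ r * A := by
    calc r * D * (1 - r) * (1 - r)
        ≤ r * D * ‖1 - μ z‖ * ‖1 - z‖ := by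
          apply mul_le_mul
          · exact mul_le_mul_of_nonneg_left h1μ (by positivity)
          · exact h1z
          · linarith
          · positivity
      _ = ‖μ z‖ * A := hkey
      _ ≤ r * A := mul_le_mul_of_nonneg_right hμz hA0
  -- abs (h z) ≤ A / (1-r)
  have h1zne : ‖1 - z‖ ≠ 0 := by linarith
  have hhz : ‖h z‖ = A / ‖1 - z‖ := by
    rw [hh z, norm_div]
  have hhz_le : ‖h z‖ ≤ A / (1 - r) := by
    rw [hhz]
    gcongr
  -- combine
  have hEpos : (0:ℝ) < Real.exp (r / (1 - r)) := Real.exp_pos _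
  have hexp2 : Real.exp (r / (1 - r)) ^ 2 = Real.exp (2 * r / (1 - r)) := by
    rw [sq, ← Real.exp_add]
    ring_nf
  calc ‖z‖ * ‖h z‖ * D
      = ‖h z‖ * (r * D) := by rw [hr_def]; ring
    _ ≤ (A / (1 - r)) * (r * A / (1 - r) ^ 2) := by
        apply mul_le_mul hhz_le _ (by positivity) (by positivity)
        rw [le_div_iff₀ (by positivity)]
        nlinarith
    _ = r * A ^ 2 / (1 - r) ^ 3 := by field_simp
    _ ≤ r * Real.exp (r / (1 - r)) ^ 2 / (1 - r) ^ 3 := by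
        gcongr
    _ = (r / (1 - r) ^ 3) * Real.exp (2 * r / (1 - r)) := by
        rw [hexp2]; ring
end

section
/- Let μ be analytic on the open unit disk 𝔻 with μ(0) = 0 and |μ(z)| < 1 for all z ∈ 𝔻. Let g be analytic and nonvanishing on 𝔻 with g(0) = 1, satisfying z·g′(z)·(1 − μ(z))·(1 − z) = μ(z)·g(z) for all z ∈ 𝔻, and define h(z) = g(z)/(1 − z). Then for all z ∈ 𝔻, |z·(h(z) + z·h′(z))·conj(g(z)) − z̄·z·h(z)·conj(g′(z))| ≤ (|z|·(1 + |z|)/(1 − |z|)³)·exp(2|z|/(1 − |z|)). (The left-hand side equals |Df(z)| = |z·f_z(z) − z̄·f_z̄(z)| for the log-harmonic mapping f(z) = z·h(z)·conj(g(z)).) -/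
open Complex Metric Set intervalIntegral

/-- Growth bound for a nonvanishing holomorphic function on the disk whose
logarithmic derivative satisfies `‖g'(w)‖ (1-‖w‖)² ≤ ‖g w‖` away from 0. -/
lemma aux_growth (g : ℂ → ℂ)
    (hgd : DifferentiableOn ℂ g (ball (0 : ℂ) 1))
    (hgne : ∀ z ∈ ball (0 : ℂ) 1, g z ≠ 0)
    (hg0 : g 0 = 1)
    (hbound : ∀ w ∈ ball (0 : ℂ) 1, w ≠ 0 → ‖deriv g w‖ * (1 - ‖w‖) ^ 2 ≤ ‖g w‖) :
    ∀ z ∈ ball (0 : ℂ) 1, ‖g z‖ ≤ Real.exp (‖z‖ / (1 - ‖z‖)) := by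
  intro z hz
  rcases eq_or_ne z 0 with rfl | hz0
  · simp [hg0]
  set r : ℝ := ‖z‖ with hr
  have hr1 : r < 1 := by simpa [hr] using mem_ball_zero_iff.1 hz
  have hr0 : 0 < r := norm_pos_iff.2 hz0
  -- the parametrization of the segment
  set p : ℝ → ℂ := fun t => (t : ℂ) * z with hp
  have hpU : ∀ t : ℝ, |t| < 1 / r → p t ∈ ball (0 : ℂ) 1 := by
    intro t ht
    rw [mem_ball_zero_iff]
    have : ‖p t‖ = |t| * r := by simp [hp, abs_mul, hr]
    rw [this]
    calc |t| * r < (1 / r) * r := by gcongr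
    _ = 1 := by field_simp
  set U : Set ℝ := Ioo (-(1 / r)) (1 / r) with hU
  have hUopen : IsOpen U := isOpen_Ioo
  have hUmem : ∀ t ∈ U, |t| < 1 / r := fun t ht => abs_lt.2 ⟨ht.1, ht.2⟩
  have h01U : Icc (0:ℝ) 1 ⊆ U := by
    intro t ht
    constructor
    · linarith [ht.1, one_div_pos.2 hr0]
    · calc t ≤ 1 := ht.2
      _ < 1 / r := by rw [lt_div_iff₀ hr0]; linarith
  -- continuity of deriv g on the ball
  have hga : AnalyticOnNhd ℂ g (ball (0:ℂ) 1) := hgd.analyticOnNhd isOpen_ball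
  have hdgc : ContinuousOn (deriv g) (ball (0:ℂ) 1) := (hga.deriv).continuousOn
  have hpc : Continuous p := by continuity
  -- the integrand
  set q : ℝ → ℂ := fun t => z * deriv g (p t) / g (p t) with hq
  have hqc : ContinuousOn q U := by
    apply ContinuousOn.div
    · exact continuousOn_const.mul (hdgc.comp hpc.continuousOn
        (fun t ht => hpU t (hUmem t ht)))
    · exact hgd.continuousOn.comp hpc.continuousOn (fun t ht => hpU t (hUmem t ht))
    · exact fun t ht => hgne _ (hpU t (hUmem t ht))
  set φ : ℝ → ℂ := fun t => ∫ s in (0:ℝ)..t, q s with hφ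
  have h0U : (0:ℝ) ∈ U := h01U ⟨le_rfl, zero_le_one⟩
  have hφd : ∀ t ∈ U, HasDerivAt φ (q t) t := by
    intro t ht
    apply intervalIntegral.integral_hasDerivAt_right
    · apply (hqc.mono _).intervalIntegrable
      exact Set.OrdConnected.uIcc_subset Set.ordConnected_Ioo h0U ht
    · exact hqc.stronglyMeasurableAtFilter hUopen t ht
    · exact hqc.continuousAt (hUopen.mem_nhds ht)
  -- the auxiliary function u
  set u : ℝ → ℂ := fun t => g (p t) * Complex.exp (-φ t) with hu
  have hud : ∀ t ∈ U, HasDerivAt u 0 t := by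
    intro t ht
    have hpmem := hpU t (hUmem t ht)
    have hgp : HasDerivAt g (deriv g (p t)) (p t) :=
      (hgd.differentiableAt (isOpen_ball.mem_nhds hpmem)).hasDerivAt
    have hpt : HasDerivAt p z t := by
      simpa using (hasDerivAt_id t).smul_const z
    have h1 : HasDerivAt (fun s => g (p s)) (deriv g (p t) * z) t := hgp.comp t hpt
    have h2 : HasDerivAt (fun s => Complex.exp (-φ s))
        (Complex.exp (-φ t) * (-q t)) t := ((hφd t ht).neg).cexp
    have := h1.mul h2
    have hgne' : g (p t) ≠ 0 := hgne _ hpmem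
    refine this.congr_deriv ?_
    rw [hq]
    field_simp
    ring
  have hIccU : Icc (0:ℝ) 1 ⊆ U := h01U
  have hcontu : ContinuousOn u (Icc 0 1) :=
    fun t ht => ((hud t (hIccU ht)).continuousAt).continuousWithinAt
  have huconst : u 1 = u 0 := by
    apply constant_of_has_deriv_right_zero hcontu
    intro t ht
    exact ((hud t (hIccU (Ico_subset_Icc_self ht))).hasDerivWithinAt)
    exact ⟨zero_le_one, le_rfl⟩
  have hu0 : u 0 = 1 := by
    simp [hu, hφ, hp, hg0]
  have hgz : g z = Complex.exp (φ 1) := by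
    have h1 : g (p 1) * Complex.exp (-φ 1) = 1 := by rw [← hu0]; exact huconst
    have hp1 : p 1 = z := by simp [hp]
    rw [hp1] at h1
    field_simp [Complex.exp_neg] at h1
    rw [Complex.exp_neg, ← div_eq_mul_inv, div_eq_one_iff_eq (Complex.exp_ne_zero _)] at h1
    exact h1
  -- bound the integral
  have hb1r : (0:ℝ) < 1 - r := by linarith
  have hbd : ∀ t ∈ Set.uIoc (0:ℝ) 1, ‖q t‖ ≤ r / (1 - t * r) ^ 2 := by
    intro t ht
    rw [Set.uIoc_of_le zero_le_one] at ht
    have ht0 : 0 < t := ht.1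
    have ht1 : t ≤ 1 := ht.2
    have htU : t ∈ U := h01U ⟨le_of_lt ht0, ht1⟩
    have hpmem : p t ∈ ball (0:ℂ) 1 := hpU t (hUmem t htU)
    have hpt0 : p t ≠ 0 := by
      simp only [hp, mul_ne_zero_iff]
      exact ⟨by exact_mod_cast ne_of_gt ht0, hz0⟩
    have hnp : ‖p t‖ = t * r := by
      simp [hp, abs_mul, hr, abs_of_pos ht0]
    have htr1 : t * r < 1 := by
      calc t * r ≤ 1 * r := by gcongr
      _ < 1 := by linarith
    have htr0 : (0:ℝ) < 1 - t * r := by linarith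
    have hgp0 : (0:ℝ) < ‖g (p t)‖ := norm_pos_iff.2 (hgne _ hpmem)
    have hder := hbound (p t) hpmem hpt0
    rw [hnp] at hder
    have hqn : ‖q t‖ = r * ‖deriv g (p t)‖ / ‖g (p t)‖ := by
      simp [hq, norm_div, norm_mul, hr]
    rw [hqn, div_le_div_iff₀ hgp0 (by positivity)]
    calc r * ‖deriv g (p t)‖ * (1 - t * r) ^ 2
        = r * (‖deriv g (p t)‖ * (1 - t * r) ^ 2) := by ring
      _ ≤ r * ‖g (p t)‖ := by gcongr
  have hBder : ∀ t ∈ uIcc (0:ℝ) 1,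
      HasDerivAt (fun t : ℝ => (1 - t * r)⁻¹) (r / (1 - t * r) ^ 2) t := by
    intro t ht
    rw [Set.uIcc_of_le zero_le_one] at ht
    have htr1 : t * r < 1 := by
      calc t * r ≤ 1 * r := by gcongr; exact ht.2
      _ < 1 := by linarith
    have htr0 : (1:ℝ) - t * r ≠ 0 := by linarith
    have h1 : HasDerivAt (fun t : ℝ => 1 - t * r) (-r) t := by
      simpa using ((hasDerivAt_id t).mul_const r).const_sub 1
    have := h1.inv htr0
    refine this.congr_deriv ?_
    ring
  have hbint : IntervalIntegrable (fun t : ℝ => r / (1 - t * r) ^ 2) MeasureTheory.volume 0 1 := by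
    apply ContinuousOn.intervalIntegrable
    apply ContinuousOn.div continuousOn_const
    · fun_prop
    · intro t ht
      rw [Set.uIcc_of_le zero_le_one] at ht
      have htr1 : t * r < 1 := by
        calc t * r ≤ 1 * r := by gcongr; exact ht.2
        _ < 1 := by linarith
      have : (0:ℝ) < 1 - t * r := by linarith
      positivity
  have hint_val : ∫ t in (0:ℝ)..1, r / (1 - t * r) ^ 2 = (1 - r)⁻¹ - 1 := by
    rw [intervalIntegral.integral_eq_sub_of_hasDerivAt hBder hbint]
    norm_num
  have hφ1 : ‖φ 1‖ ≤ r / (1 - r) := by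
    have := intervalIntegral.norm_integral_le_of_norm_le zero_le_one
      (Filter.Eventually.of_forall (fun t ht => hbd t (by rwa [Set.uIoc_of_le zero_le_one]))) hbint
    rw [hint_val] at this
    have habs : |(1 - r)⁻¹ - 1| = r / (1 - r) := by
      rw [_root_.abs_of_nonneg]
      · field_simp; ring
      · have h1 : (1:ℝ) ≤ (1 - r)⁻¹ := by
          rw [le_inv_comm₀] <;> [skip; norm_num; exact hb1r] <;> linarith
        linarith
    rw [← habs]; exact this.trans (le_abs_self _)
  rw [hgz, hr]
  calc ‖Complex.exp (φ 1)‖ = Real.exp ((φ 1).re) := Complex.norm_exp _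
    _ ≤ Real.exp ‖φ 1‖ := Real.exp_le_exp.2 (Complex.re_le_norm _)
    _ ≤ Real.exp (r / (1 - r)) := Real.exp_le_exp.2 hφ1

theorem stmt_11 (μ g h : ℂ → ℂ)
    (hμd : DifferentiableOn ℂ μ (ball (0 : ℂ) 1))
    (hμ0 : μ 0 = 0)
    (hμlt : ∀ z ∈ ball (0 : ℂ) 1, ‖μ z‖ < 1)
    (hgd : DifferentiableOn ℂ g (ball (0 : ℂ) 1))
    (hgne : ∀ z ∈ ball (0 : ℂ) 1, g z ≠ 0)
    (hg0 : g 0 = 1)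
    (heq : ∀ z ∈ ball (0 : ℂ) 1, z * deriv g z * (1 - μ z) * (1 - z) = μ z * g z)
    (hh : ∀ z, h z = g z / (1 - z)) :
    ∀ z ∈ ball (0 : ℂ) 1,
      ‖z * (h z + z * deriv h z) * (starRingEnd ℂ) (g z)
          - (starRingEnd ℂ) z * z * h z * (starRingEnd ℂ) (deriv g z)‖ ≤
        (‖z‖ * (1 + ‖z‖) / (1 - ‖z‖) ^ 3) *
          Real.exp (2 * ‖z‖ / (1 - ‖z‖)) := by
  -- Schwarz lemma
  have hμs : ∀ w ∈ ball (0:ℂ) 1, ‖μ w‖ ≤ ‖w‖ := by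
    intro w hw
    exact Complex.norm_le_norm_of_mapsTo_ball hμd
      (fun v hv => mem_closedBall_zero_iff.2 (le_of_lt (hμlt v hv))) hμ0
      (by simpa using mem_ball_zero_iff.1 hw)
  -- elementary facts about 1 - w, 1 - μ w
  have hsub : ∀ w : ℂ, 1 - ‖w‖ ≤ ‖1 - w‖ := by
    intro w
    have := norm_sub_norm_le (1:ℂ) w
    simpa using this
  -- key derivative bound
  have hbound : ∀ w ∈ ball (0:ℂ) 1, w ≠ 0 →
      ‖deriv g w‖ * (1 - ‖w‖) ^ 2 ≤ ‖g w‖ := by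
    intro w hw hw0
    have hwl : ‖w‖ < 1 := by simpa using mem_ball_zero_iff.1 hw
    have hw0' : 0 < ‖w‖ := norm_pos_iff.2 hw0
    have habseq := congrArg norm (heq w hw)
    simp only [norm_mul] at habseq
    have hμw : ‖μ w‖ ≤ ‖w‖ := hμs w hw
    have h1μ : 1 - ‖w‖ ≤ ‖1 - μ w‖ := by
      calc 1 - ‖w‖ ≤ 1 - ‖μ w‖ := by linarith
        _ ≤ ‖1 - μ w‖ := hsub _
    have h1w : 1 - ‖w‖ ≤ ‖1 - w‖ := hsub w
    have h1 : ‖w‖ * ‖deriv g w‖ * (1 - ‖w‖) ^ 2 ≤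
        ‖w‖ * ‖g w‖ := by
      calc ‖w‖ * ‖deriv g w‖ * (1 - ‖w‖) ^ 2
          = (‖w‖ * ‖deriv g w‖) *
            ((1 - ‖w‖) * (1 - ‖w‖)) := by ring
        _ ≤ (‖w‖ * ‖deriv g w‖) *
            (‖1 - μ w‖ * ‖1 - w‖) := by
            apply mul_le_mul_of_nonneg_left _ (by positivity)
            apply mul_le_mul h1μ h1w (by linarith) (by positivity)
        _ = ‖μ w‖ * ‖g w‖ := by rw [← habseq]; ring
        _ ≤ ‖w‖ * ‖g w‖ := by
            apply mul_le_mul_of_nonneg_right hμw (by positivity)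
    have := le_of_mul_le_mul_left (by
      calc ‖w‖ * (‖deriv g w‖ * (1 - ‖w‖) ^ 2)
          = ‖w‖ * ‖deriv g w‖ * (1 - ‖w‖) ^ 2 := by ring
        _ ≤ ‖w‖ * ‖g w‖ := h1) hw0'
    simpa using this
  -- growth bound
  have hgrow := aux_growth g hgd hgne hg0 hbound
  intro z hz
  rcases eq_or_ne z 0 with rfl | hz0
  · simp
  set r : ℝ := ‖z‖ with hr
  have hr1 : r < 1 := by simpa using mem_ball_zero_iff.1 hz
  have hr0 : 0 < r := norm_pos_iff.2 hz0
  have hb1r : (0:ℝ) < 1 - r := by linarith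
  have hcz : (1:ℂ) - z ≠ 0 := by
    intro hcon
    have := hsub z
    rw [hcon] at this
    simp at this
    linarith
  have hcabs : 1 - r ≤ ‖1 - z‖ := hsub z
  have hgz := hgne z hz
  -- derivative of h
  have hdh : deriv h z = (deriv g z * (1 - z) + g z) / (1 - z) ^ 2 := by
    have hgder : HasDerivAt g (deriv g z) z :=
      (hgd.differentiableAt (isOpen_ball.mem_nhds hz)).hasDerivAt
    have hder : HasDerivAt (fun w => 1 - w : ℂ → ℂ) (-1) z := by
      simpa using (hasDerivAt_id z).const_sub 1
    have := hgder.div hder hcz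
    have h2 : HasDerivAt h ((deriv g z * (1 - z) - g z * (-1)) / (1 - z) ^ 2) z := by
      have hfun : h = fun w => g w / (1 - w) := funext hh
      rw [hfun]; exact this
    rw [h2.deriv]; ring_nf
  -- algebraic identity
  set a := g z with ha
  set b := deriv g z with hb
  set w := z * b / a with hw
  have hX : z * (h z + z * deriv h z) * (starRingEnd ℂ) a
          - (starRingEnd ℂ) z * z * h z * (starRingEnd ℂ) b
      = (z * a * (starRingEnd ℂ) a / (1 - z)) *
        (1 / (1 - z) + w - (starRingEnd ℂ) w) := by
    rw [hh z, hdh, hw, ← ha]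
    have hca : (starRingEnd ℂ) a ≠ 0 := by simpa using hgz
    simp only [map_div₀, map_mul]
    field_simp
    ring
  rw [hX, norm_mul]
  -- bound |w|
  have hbz := hbound z hz hz0
  have haz : 0 < ‖a‖ := norm_pos_iff.2 hgz
  have hwabs : ‖w‖ ≤ r / (1 - r) ^ 2 := by
    rw [hw, norm_div, norm_mul]
    rw [div_le_div_iff₀ haz (by positivity)]
    calc ‖z‖ * ‖b‖ * (1 - r) ^ 2
        = r * (‖b‖ * (1 - r) ^ 2) := by rw [hr]; ring
      _ ≤ r * ‖a‖ := by
          apply mul_le_mul_of_nonneg_left _ (le_of_lt hr0)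
          simpa [hr] using hbz
  -- bound the bracket
  have hE : ‖1 / (1 - z) + w - (starRingEnd ℂ) w‖ ≤ (1 + r) / (1 - r) ^ 2 := by
    calc ‖1 / (1 - z) + w - (starRingEnd ℂ) w‖
        ≤ ‖1 / (1 - z)‖ + ‖w - (starRingEnd ℂ) w‖ := by
          simpa [sub_eq_add_neg, add_assoc] using
            norm_add_le (1 / (1 - z)) (w - (starRingEnd ℂ) w)
      _ ≤ 1 / (1 - r) + 2 * (r / (1 - r) ^ 2) := by
          apply add_le_add
          · rw [norm_div, norm_one]
            apply div_le_div_of_nonneg_left zero_le_one hb1r hcabs |>.trans_eq rfl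
          · calc ‖w - (starRingEnd ℂ) w‖
                ≤ ‖w‖ + ‖(starRingEnd ℂ) w‖ := by
                  simpa using norm_sub_le w ((starRingEnd ℂ) w)
              _ = 2 * ‖w‖ := by rw [Complex.norm_conj]; ring
              _ ≤ 2 * (r / (1 - r) ^ 2) := by linarith
      _ = (1 + r) / (1 - r) ^ 2 := by field_simp; ring
  -- bound the prefactor
  have hgb : ‖a‖ ≤ Real.exp (r / (1 - r)) := by
    have := hgrow z hz
    simpa [hr, ha] using this
  have hgb2 : ‖a‖ * ‖a‖ ≤ Real.exp (2 * r / (1 - r)) := by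
    have h2 : (2:ℝ) * r / (1 - r) = r / (1 - r) + r / (1 - r) := by ring
    rw [h2, Real.exp_add]
    exact mul_le_mul hgb hgb (by positivity) (Real.exp_nonneg _)
  have hK : ‖z * a * (starRingEnd ℂ) a / (1 - z)‖ ≤
      r * (‖a‖ * ‖a‖) / (1 - r) := by
    rw [norm_div, norm_mul, norm_mul, Complex.norm_conj, ← hr]
    apply div_le_div₀ (by positivity) (by rw [mul_assoc]) (by linarith) hcabs
  calc ‖z * a * (starRingEnd ℂ) a / (1 - z)‖ *
        ‖1 / (1 - z) + w - (starRingEnd ℂ) w‖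
      ≤ (r * (‖a‖ * ‖a‖) / (1 - r)) * ((1 + r) / (1 - r) ^ 2) := by
        apply mul_le_mul hK hE (norm_nonneg _) (by positivity)
    _ = (r * (1 + r) / (1 - r) ^ 3) * (‖a‖ * ‖a‖) := by
        field_simp
    _ ≤ (r * (1 + r) / (1 - r) ^ 3) * Real.exp (2 * r / (1 - r)) := by
        apply mul_le_mul_of_nonneg_left hgb2 (by positivity)
end

section
/- Define the log-harmonic Koebe mapping f₀ on the open unit disk by f₀(z) = (z/(1 − z)²)·|1 − z|²·exp(Re(4z/(1 − z))). Then for every θ ∈ (0, 2π), the boundary value of f₀ at z = e^{iθ} (given by the same formula, which is defined for all z ≠ 1) satisfies f₀(e^{iθ}) = −e^{−2}; that is, Re f₀(e^{iθ}) = −1/e² and Im f₀(e^{iθ}) = 0. -/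
open Complex Metric Set

theorem stmt_12 (f₀ : ℂ → ℂ)
    (hf₀ : ∀ z : ℂ, z ≠ 1 →
        f₀ z = z / (1 - z) ^ 2 * ((‖1 - z‖ : ℝ) : ℂ) ^ 2 *
          ((Real.exp ((4 * z / (1 - z)).re) : ℝ) : ℂ)) :
    ∀ θ ∈ Set.Ioo (0 : ℝ) (2 * Real.pi),
      f₀ (Complex.exp (θ * Complex.I)) = ((-(Real.exp 2)⁻¹ : ℝ) : ℂ) ∧
        (f₀ (Complex.exp (θ * Complex.I))).re = -(1 / Real.exp 2) ∧
        (f₀ (Complex.exp (θ * Complex.I))).im = 0 := by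
  intro θ hθ
  obtain ⟨hθ0, hθ2⟩ := hθ
  set z : ℂ := Complex.exp (θ * Complex.I) with hzdef
  have hz1 : z ≠ 1 := by
    intro h
    rw [hzdef, Complex.exp_eq_one_iff] at h
    obtain ⟨n, hn⟩ := h
    have hI : (Complex.I : ℂ) ≠ 0 := Complex.I_ne_zero
    have h2 : (θ : ℂ) = (n : ℂ) * (2 * Real.pi) := by
      have := hn
      field_simp at this
      have h3 : (θ : ℂ) * Complex.I = ((n : ℂ) * (2 * Real.pi)) * Complex.I := by
        rw [hn]; push_cast; ring
      exact mul_right_cancel₀ hI h3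
    have h4 : θ = (n : ℝ) * (2 * Real.pi) := by
      have : ((θ : ℝ) : ℂ) = (((n : ℝ) * (2 * Real.pi) : ℝ) : ℂ) := by
        push_cast; exact h2
      exact_mod_cast this
    have hpi := Real.pi_pos
    rcases lt_trichotomy (n : ℝ) 1 with h | h | h
    · have hn0 : (n : ℝ) ≤ 0 := by
        have : n < 1 := by exact_mod_cast h
        have : n ≤ 0 := by omega
        exact_mod_cast this
      nlinarith
    · have : θ = 2 * Real.pi := by rw [h4, h]; ring
      linarith
    · nlinarith
  have hz0 : z ≠ 0 := Complex.exp_ne_zero _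
  have habs : ‖z‖ = 1 := by
    rw [hzdef]; exact Complex.norm_exp_ofReal_mul_I θ
  have hconj : (starRingEnd ℂ) z = z⁻¹ := by
    rw [Complex.inv_def, Complex.normSq_eq_norm_sq, habs]
    simp
  have hw : (1 : ℂ) - z ≠ 0 := sub_ne_zero.mpr (Ne.symm hz1)
  -- compute |1-z|^2 as complex
  have habs2 : ((‖1 - z‖ : ℝ) : ℂ) ^ 2 = (1 - z) * ((starRingEnd ℂ) (1 - z)) := by
    rw [Complex.mul_conj]
    norm_cast
    exact Complex.sq_norm _
  have hconjw : (starRingEnd ℂ) (1 - z) = 1 - z⁻¹ := by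
    simp [hconj]
  -- real part of 4z/(1-z)
  have hre : (4 * z / (1 - z)).re = -2 := by
    have hzinv : z⁻¹ ≠ 0 := inv_ne_zero hz0
    have hw' : (1 : ℂ) - z⁻¹ ≠ 0 := by
      intro h
      have : z⁻¹ = 1 := by linear_combination -h
      have : z = 1 := by
        field_simp at this
        exact this.symm
      exact hz1 this
    have hadd : (4 * z / (1 - z)) + (starRingEnd ℂ) (4 * z / (1 - z)) = -4 := by
      rw [map_div₀, map_mul, hconj, hconjw]
      simp only [map_ofNat]
      rw [div_add_div _ _ hw hw', div_eq_iff (mul_ne_zero hw hw')]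
      field_simp
      ring
    have := Complex.add_conj (4 * z / (1 - z))
    rw [hadd] at this
    have h5 : (2 : ℝ) * (4 * z / (1 - z)).re = -4 := by exact_mod_cast this.symm
    linarith
  have hval : f₀ z = ((-(Real.exp 2)⁻¹ : ℝ) : ℂ) := by
    rw [hf₀ z hz1, hre, habs2, hconjw]
    have hexp : Real.exp (-2) = (Real.exp 2)⁻¹ := by
      rw [← Real.exp_neg]
    rw [hexp]
    have key : z / (1 - z) ^ 2 * ((1 - z) * (1 - z⁻¹)) = -1 := by
      field_simp
      ring
    rw [key]
    push_cast
    ring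
  refine ⟨hval, ?_, ?_⟩
  · rw [hval, Complex.ofReal_re]; ring
  · rw [hval, Complex.ofReal_im]
end

section
/- Define f₀ on the open unit disk 𝔻 by f₀(z) = (z/(1 − z)²)·|1 − z|²·exp(Re(4z/(1 − z))). Then f₀ is injective on 𝔻 and the image f₀(𝔻) equals ℂ \ {w ∈ ℂ : Im w = 0 and Re w ≤ −e^{−2}}, i.e., the complex plane minus the real slit (−∞, −1/e²]. -/
open Complex Metric Set Filter

noncomputable def FF (w : ℂ) : ℂ := (Real.exp (4 * w.re) : ℂ) * w / (1 + (starRingEnd ℂ) w)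

noncomputable def PHI (a b u : ℝ) : ℝ :=
  u * Real.exp (8*u) - a * Real.exp (4*u) - (u+1)*(a^2+b^2)

-- slope sign lemmas

lemma pos_right {f : ℝ → ℝ} {d x : ℝ} (h : HasDerivAt f d x) (hd : 0 < d) (hx : f x = 0) :
    ∀ᶠ t in nhdsWithin x (Set.Ioi x), 0 < f t := by
  have hs : Tendsto (slope f x) (nhdsWithin x (Set.Ioi x)) (nhds d) :=
    (hasDerivAt_iff_tendsto_slope.mp h).mono_left
      (nhdsWithin_mono x (fun t ht => Set.mem_compl_singleton_iff.mpr (ne_of_gt ht)))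
  filter_upwards [hs.eventually_const_lt hd, self_mem_nhdsWithin] with t h1 h2
  have hxt : 0 < t - x := sub_pos.mpr h2
  have := h1
  rw [slope_def_field] at this
  -- slope f x t = (f t - f x)/(t - x)
  have h3 : 0 < (f t - f x) / (t - x) := this
  have := (div_pos_iff.mp h3)
  rcases this with ⟨h4, _⟩ | ⟨_, h5⟩
  · linarith [hx ▸ h4]
  · linarith

lemma neg_left {f : ℝ → ℝ} {d x : ℝ} (h : HasDerivAt f d x) (hd : 0 < d) (hx : f x = 0) :
    ∀ᶠ t in nhdsWithin x (Set.Iio x), f t < 0 := by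
  have hs : Tendsto (slope f x) (nhdsWithin x (Set.Iio x)) (nhds d) :=
    (hasDerivAt_iff_tendsto_slope.mp h).mono_left
      (nhdsWithin_mono x (fun t ht => Set.mem_compl_singleton_iff.mpr (ne_of_lt ht)))
  filter_upwards [hs.eventually_const_lt hd, self_mem_nhdsWithin] with t h1 h2
  have hxt : t - x < 0 := sub_neg.mpr h2
  rw [slope_def_field] at h1
  rcases div_pos_iff.mp h1 with ⟨_, h5⟩ | ⟨h4, _⟩
  · linarith
  · linarith [hx ▸ h4]

lemma uniqueZeroAux {f : ℝ → ℝ} {c : ℝ} (hf : Continuous f)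
    (hd : ∀ u, c < u → f u = 0 → ∃ d, HasDerivAt f d u ∧ 0 < d) :
    ∀ x y, c < x → c < y → f x = 0 → f y = 0 → x = y := by
  have aux : ∀ x y, c < x → c < y → f x = 0 → f y = 0 → x < y → False := by
    intro x y hcx hcy hfx hfy hxy
    obtain ⟨dx, hdx, hdx0⟩ := hd x hcx hfx
    obtain ⟨dy, hdy, hdy0⟩ := hd y hcy hfy
    -- pick p ∈ (x,y) with f p > 0
    obtain ⟨p, hp0, hp⟩ := ((pos_right hdx hdx0 hfx).and
      (Ioo_mem_nhdsGT_of_mem (Set.mem_Ico.mpr ⟨le_refl x, hxy⟩))).exists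
    -- pick q ∈ (p,y) with f q < 0
    obtain ⟨q, hq0, hq⟩ := ((neg_left hdy hdy0 hfy).and
      (Ioo_mem_nhdsLT_of_mem (Set.mem_Ioc.mpr ⟨hp.2, le_refl y⟩))).exists
    have hpq : p < q := hq.1
    let A : Set ℝ := Set.Icc p q ∩ {t | 0 ≤ f t}
    have hAne : A.Nonempty := ⟨p, Set.mem_Icc.mpr ⟨le_refl p, hpq.le⟩, hp0.le⟩
    have hAcl : IsClosed A := isClosed_Icc.inter (isClosed_le continuous_const hf)
    have hAcp : IsCompact A := isCompact_Icc.of_isClosed_subset hAcl Set.inter_subset_left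
    set m := sSup A with hm
    have hmA : m ∈ A := hAcp.sSup_mem hAne
    have hmq : m < q := lt_of_le_of_ne hmA.1.2 (fun h => absurd (h ▸ hmA.2) (not_le.mpr hq0))
    have hneg : ∀ t ∈ Set.Ioc m q, f t < 0 := by
      intro t ht
      by_contra hcon
      have htA : t ∈ A := ⟨Set.mem_Icc.mpr ⟨le_trans hmA.1.1 ht.1.le, ht.2⟩, 
        Set.mem_setOf_eq ▸ not_lt.mp hcon⟩
      exact absurd (le_csSup hAcp.bddAbove htA) (not_le.mpr ht.1)
    have hfm_le : f m ≤ 0 := by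
      have htd : Tendsto f (nhdsWithin m (Set.Ioi m)) (nhds (f m)) :=
        (hf.continuousAt).continuousWithinAt
      exact le_of_tendsto htd (Filter.eventually_of_mem
        (Ioc_mem_nhdsGT_of_mem (Set.mem_Ico.mpr ⟨le_refl m, hmq⟩)) (fun t ht => (hneg t ht).le))
    have hfm : f m = 0 := le_antisymm hfm_le hmA.2
    have hcm : c < m := lt_of_lt_of_le (lt_trans hcx hp.1) hmA.1.1
    obtain ⟨dm, hdm, hdm0⟩ := hd m hcm hfm
    obtain ⟨t, ht0, ht⟩ := ((pos_right hdm hdm0 hfm).and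
      (Ioc_mem_nhdsGT_of_mem (Set.mem_Ico.mpr ⟨le_refl m, hmq⟩))).exists
    exact absurd ht0 (not_lt.mpr (hneg t ht).le)
  intro x y hx hy hfx hfy
  rcases lt_trichotomy x y with h | h | h
  · exact (aux x y hx hy hfx hfy h).elim
  · exact h
  · exact (aux y x hy hx hfy hfx h).elim

lemma conj_ne (w : ℂ) (hw : -1/2 < w.re) : 1 + (starRingEnd ℂ) w ≠ 0 := by
  intro h
  have := congrArg Complex.re h
  simp [Complex.add_re, Complex.conj_re] at this
  linarith

lemma FF_im (w : ℂ) : (FF w).im =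
    Real.exp (4 * w.re) * (w.im * (1 + 2 * w.re)) / Complex.normSq (1 + (starRingEnd ℂ) w) := by
  simp [FF, Complex.div_im, Complex.mul_im, Complex.mul_re, Complex.add_re, Complex.add_im,
    Complex.conj_re, Complex.conj_im, Complex.ofReal_re, Complex.ofReal_im, -Complex.ofReal_exp]
  ring

lemma FF_re (w : ℂ) : (FF w).re =
    Real.exp (4 * w.re) * (w.re * (1 + w.re) - w.im^2) / Complex.normSq (1 + (starRingEnd ℂ) w) := by
  simp [FF, Complex.div_re, Complex.mul_im, Complex.mul_re, Complex.add_re, Complex.add_im,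
    Complex.conj_re, Complex.conj_im, Complex.ofReal_re, Complex.ofReal_im, -Complex.ofReal_exp]
  ring

-- key identity: (FF w + E) * (1 + conj w) = E * (1 + 2 u)

lemma FF_key (w : ℂ) (hw : -1/2 < w.re) :
    (FF w + (Real.exp (4 * w.re) : ℂ)) * (1 + (starRingEnd ℂ) w)
      = (Real.exp (4 * w.re) : ℂ) * (1 + 2 * w.re) := by
  have h := conj_ne w hw
  rw [FF, add_mul, div_mul_cancel₀ _ h]
  have hc : w + (starRingEnd ℂ) w = 2 * (w.re : ℂ) := by
    rw [Complex.add_conj]; push_cast; ring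
  linear_combination ((Real.exp (4*w.re) : ℝ) : ℂ) * hc

lemma PHI_hasDeriv (a b u : ℝ) : HasDerivAt (PHI a b)
    (Real.exp (8*u) * (1 + 8*u) - 4*a*Real.exp (4*u) - (a^2+b^2)) u := by
  have h8 : HasDerivAt (fun u : ℝ => Real.exp (8*u)) (Real.exp (8*u) * 8) u := by
    simpa [Function.comp_def] using (Real.hasDerivAt_exp (8*u)).comp u ((hasDerivAt_id u).const_mul 8)
  have h4 : HasDerivAt (fun u : ℝ => Real.exp (4*u)) (Real.exp (4*u) * 4) u := by
    simpa [Function.comp_def] using (Real.hasDerivAt_exp (4*u)).comp u ((hasDerivAt_id u).const_mul 4)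
  have h1 : HasDerivAt (fun u : ℝ => u * Real.exp (8*u))
      (1 * Real.exp (8*u) + u * (Real.exp (8*u) * 8)) u := (hasDerivAt_id u).mul h8
  have h2 : HasDerivAt (fun u : ℝ => a * Real.exp (4*u)) (a * (Real.exp (4*u)*4)) u :=
    h4.const_mul a
  have h3 : HasDerivAt (fun u : ℝ => (u+1)*(a^2+b^2)) (a^2+b^2) u := by
    simpa using ((hasDerivAt_id u).add_const 1).mul_const (a^2+b^2)
  have := (h1.sub h2).sub h3
  refine this.congr_deriv ?_
  ring

lemma PHI_deriv_pos (a b u : ℝ) (hu : -1/2 < u)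
    (hS : (a + Real.exp (4*u))^2 + b^2 ≠ 0) (h0 : PHI a b u = 0) :
    0 < Real.exp (8*u) * (1 + 8*u) - 4*a*Real.exp (4*u) - (a^2+b^2) := by
  set E := Real.exp (4*u) with hE
  have hEpos : 0 < E := Real.exp_pos _
  have hE2 : Real.exp (8*u) = E^2 := by
    rw [show (8:ℝ)*u = 4*u+4*u by ring, Real.exp_add, hE]; ring
  rw [PHI, hE2] at h0
  rw [hE2]
  have hS' : 0 < (a+E)^2 + b^2 := lt_of_le_of_ne (by positivity) (Ne.symm hS)
  have h1 : (u+1)*((a+E)^2+b^2) = E*(1+2*u)*(a+E) := by linear_combination -h0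
  have hu1 : (0:ℝ) < u + 1 := by linarith
  have hEu : 0 < E*(1+2*u) := mul_pos hEpos (by linarith)
  have h2 : 0 < a + E := by nlinarith [mul_pos hu1 hS']
  have h3 : (u+1)*(a+E) ≤ E*(1+2*u) := by nlinarith [sq_nonneg b, mul_pos h2 h2]
  have h5 : a*(u+1) ≤ u*E := by nlinarith
  have h6 : a*(u+1)*(E*(4*u+3)) ≤ u*E*(E*(4*u+3)) :=
    mul_le_mul_of_nonneg_right h5 (le_of_lt (mul_pos hEpos (by linarith)))
  have h4 : 0 < E^2*(2*u+1)^3 := mul_pos (by positivity) (pow_pos (by linarith) 3)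
  nlinarith [h0, h6, h4, sq_nonneg (u+1), mul_pos hu1 hu1]

lemma PHI_cont (a b : ℝ) : Continuous (PHI a b) := by
  unfold PHI; fun_prop

lemma PHI_neg_end (a b : ℝ) (h : ¬(b = 0 ∧ a ≤ -(Real.exp 2)⁻¹)) : PHI a b (-1/2) < 0 := by
  have he : Real.exp (8 * (-1/2 : ℝ)) = ((Real.exp 2)⁻¹)^2 := by
    rw [← Real.exp_neg]
    rw [show (8 : ℝ) * (-1/2) = (-2) + (-2) by norm_num, Real.exp_add]; ring
  have he4 : Real.exp (4 * (-1/2 : ℝ)) = (Real.exp 2)⁻¹ := by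
    rw [← Real.exp_neg]; norm_num
  have hkey : PHI a b (-1/2) = -(1/2) * ((a + (Real.exp 2)⁻¹)^2 + b^2) := by
    rw [PHI, he, he4]; ring
  rw [hkey]
  have hS : 0 < (a + (Real.exp 2)⁻¹)^2 + b^2 := by
    rcases eq_or_ne b 0 with hb | hb
    · have ha : a ≠ -(Real.exp 2)⁻¹ := fun hc => h ⟨hb, le_of_eq hc⟩
      have : a + (Real.exp 2)⁻¹ ≠ 0 := fun hc => ha (by linarith)
      positivity
    · positivity
  linarith

lemma PHI_exists_zero (a b : ℝ) (h : ¬(b = 0 ∧ a ≤ -(Real.exp 2)⁻¹)) :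
    ∃ u, -1/2 < u ∧ PHI a b u = 0 := by
  set M : ℝ := |a| + a^2 + b^2 + 1 with hM
  have hM1 : 1 ≤ M := by simp only [hM]; nlinarith [abs_nonneg a, sq_nonneg a, sq_nonneg b]
  have hMpos : PHI a b M > 0 := by
    have hE : 4*M + 1 ≤ Real.exp (4*M) := by
      have := Real.add_one_le_exp (4*M); linarith
    have hE2 : Real.exp (8*M) = Real.exp (4*M) * Real.exp (4*M) := by
      rw [← Real.exp_add]; ring_nf
    have hEpos : (0:ℝ) < Real.exp (4*M) := Real.exp_pos _
    have ha1 : a ≤ M - 1 := by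
      have := le_abs_self a; simp only [hM]; nlinarith
    have ha2 : -(M-1) ≤ a := by
      have := neg_abs_le a; simp only [hM]; nlinarith
    have hab : a^2 + b^2 ≤ M - 1 := by simp only [hM]; nlinarith [abs_nonneg a]
    rw [PHI, hE2]
    nlinarith [mul_pos hEpos hEpos, sq_nonneg (Real.exp (4*M) - 4*M - 1), mul_le_mul_of_nonneg_right hE (le_of_lt hEpos)]
  have hneg := PHI_neg_end a b h
  have hle : (-1/2 : ℝ) ≤ M := by linarith
  have hsub := intermediate_value_Icc hle (PHI_cont a b).continuousOn
  have h0 : (0:ℝ) ∈ Icc (PHI a b (-1/2)) (PHI a b M) := ⟨le_of_lt hneg, le_of_lt hMpos⟩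
  obtain ⟨u, hu, hval⟩ := hsub h0
  refine ⟨u, ?_, hval⟩
  rcases eq_or_lt_of_le hu.1 with heq | hlt
  · exfalso; rw [← heq] at hval; linarith
  · exact hlt

noncomputable def PSI (u : ℝ) : ℝ := u * Real.exp (4*u) / (1+u)

lemma PSI_hasDeriv (u : ℝ) (hu : -1/2 < u) :
    HasDerivAt PSI (Real.exp (4*u) * (2*u+1)^2 / (1+u)^2) u := by
  have hne : (1:ℝ) + u ≠ 0 := by intro h; linarith
  have h4 : HasDerivAt (fun u : ℝ => Real.exp (4*u)) (Real.exp (4*u) * 4) u := by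
    simpa [Function.comp_def] using (Real.hasDerivAt_exp (4*u)).comp u ((hasDerivAt_id u).const_mul 4)
  have hn : HasDerivAt (fun u : ℝ => u * Real.exp (4*u))
      (1 * Real.exp (4*u) + u * (Real.exp (4*u) * 4)) u := (hasDerivAt_id u).mul h4
  have hd : HasDerivAt (fun u : ℝ => 1 + u) 1 u := by
    simpa using (hasDerivAt_id u).const_add 1
  have := hn.div hd hne
  refine this.congr_deriv ?_
  field_simp
  ring

lemma PSI_mono : StrictMonoOn PSI (Ici (-1/2 : ℝ)) := by
  apply strictMonoOn_of_deriv_pos (convex_Ici _)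
  · apply ContinuousOn.div
    · fun_prop
    · fun_prop
    · intro x hx; simp only [mem_Ici] at hx; intro h; linarith
  · intro x hx
    rw [interior_Ici] at hx
    simp only [mem_Ioi] at hx
    rw [(PSI_hasDeriv x hx).deriv]
    have h1 : (0:ℝ) < (2*x+1)^2 := pow_pos (by linarith) 2
    have h2 : (0:ℝ) < (1+x)^2 := pow_pos (by linarith) 2
    positivity

lemma PSI_gt (u : ℝ) (hu : -1/2 < u) : -(Real.exp 2)⁻¹ < PSI u := by
  have h := PSI_mono self_mem_Ici (mem_Ici.mpr hu.le) hu
  have hval : PSI (-1/2) = -(Real.exp 2)⁻¹ := by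
    rw [PSI, ← Real.exp_neg]
    norm_num
    ring
  linarith [hval ▸ h]

lemma FF_eq (w T : ℂ) (hw : -1/2 < w.re) (hT : FF w = T) :
    (T + (Real.exp (4*w.re) : ℂ) ≠ 0) ∧
    (1 + (starRingEnd ℂ) w) * (T + (Real.exp (4*w.re) : ℂ))
      = (Real.exp (4*w.re) : ℂ) * (1 + 2*w.re) ∧
    PHI T.re T.im w.re = 0 := by
  have hkey := FF_key w hw
  rw [hT] at hkey
  rw [mul_comm] at hkey
  have hrhs : (Real.exp (4*w.re) : ℂ) * (1 + 2*(w.re:ℂ)) ≠ 0 := by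
    apply mul_ne_zero
    · exact_mod_cast Real.exp_ne_zero _
    · intro h
      have := congrArg Complex.re h
      simp at this
      linarith
  have hTE : T + (Real.exp (4*w.re) : ℂ) ≠ 0 := by
    intro h
    rw [h, mul_zero] at hkey
    exact hrhs hkey.symm
  refine ⟨hTE, hkey, ?_⟩
  -- multiply by conj (T+E)
  set E := Real.exp (4*w.re) with hE
  set D := T + (E:ℂ) with hD
  have h2 : (1 + (starRingEnd ℂ) w) * (D * (starRingEnd ℂ) D)
      = (E:ℂ) * (1 + 2*w.re) * (starRingEnd ℂ) D := by
    rw [← mul_assoc, hkey]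
  rw [Complex.mul_conj] at h2
  have h3 := congrArg Complex.re h2
  have hDre : ((starRingEnd ℂ) D).re = T.re + E := by
    simp [hD, Complex.conj_re, Complex.add_re]
  have hDim : ((starRingEnd ℂ) D).im = -T.im := by
    simp [hD, Complex.conj_im, Complex.add_im]
  have hnsq : Complex.normSq D = (T.re + E)^2 + T.im^2 := by
    rw [Complex.normSq_apply]
    simp [hD, Complex.add_re, Complex.add_im]
    ring
  simp only [Complex.mul_re, Complex.add_re, Complex.add_im, Complex.one_re, Complex.one_im,
    Complex.conj_re, Complex.conj_im, Complex.ofReal_re, Complex.ofReal_im, hDre, hDim,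
    Complex.mul_im, Complex.re_ofNat, Complex.im_ofNat] at h3
  rw [hnsq] at h3
  have hE8 : Real.exp (8*w.re) = E^2 := by
    rw [show (8:ℝ)*w.re = 4*w.re+4*w.re by ring, Real.exp_add, hE]; ring
  rw [PHI, hE8]
  nlinarith [h3, hE]

lemma FF_avoid (w : ℂ) (hw : -1/2 < w.re) :
    ¬((FF w).im = 0 ∧ (FF w).re ≤ -(Real.exp 2)⁻¹) := by
  rintro ⟨him, hre⟩
  have hnsq : 0 < Complex.normSq (1 + (starRingEnd ℂ) w) :=
    Complex.normSq_pos.mpr (conj_ne w hw)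
  rw [FF_im] at him
  have hnum : w.im * (1 + 2*w.re) = 0 := by
    have hexp := Real.exp_pos (4*w.re)
    rcases mul_eq_zero.mp ((div_eq_zero_iff.mp him).resolve_right (ne_of_gt hnsq)) with h | h
    · exact absurd h (ne_of_gt hexp)
    · exact h
  have hvim : w.im = 0 := by
    rcases mul_eq_zero.mp hnum with h | h
    · exact h
    · exfalso; linarith
  have hnsq' : Complex.normSq (1 + (starRingEnd ℂ) w) = (1+w.re)^2 := by
    rw [Complex.normSq_apply]
    simp [Complex.add_re, Complex.add_im, Complex.conj_re, Complex.conj_im, hvim]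
    ring
  rw [FF_re, hvim, hnsq'] at hre
  have h1u : (0:ℝ) < 1 + w.re := by linarith
  have heq : Real.exp (4*w.re) * (w.re*(1+w.re) - 0^2) / (1+w.re)^2 = PSI w.re := by
    rw [PSI]
    field_simp
    ring
  rw [heq] at hre
  exact absurd hre (not_le.mpr (PSI_gt w.re hw))

lemma FF_surj (T : ℂ) (hT : ¬(T.im = 0 ∧ T.re ≤ -(Real.exp 2)⁻¹)) :
    ∃ w : ℂ, -1/2 < w.re ∧ FF w = T := by
  obtain ⟨u, hu, h0⟩ := PHI_exists_zero T.re T.im hT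
  set E := Real.exp (4*u) with hE
  have hEpos : 0 < E := Real.exp_pos _
  have hEgt : (Real.exp 2)⁻¹ < E := by
    rw [hE, ← Real.exp_neg]
    exact Real.exp_lt_exp.mpr (by linarith)
  have hTE : T + (E:ℂ) ≠ 0 := by
    intro h
    have hre : T.re = -E := by
      have := congrArg Complex.re h; simp at this; linarith
    have him : T.im = 0 := by
      have := congrArg Complex.im h; simpa using this
    exact hT ⟨him, by rw [hre]; linarith⟩
  have hcTE : (starRingEnd ℂ) T + (E:ℂ) ≠ 0 := by
    intro h
    apply hTE
    have := congrArg (starRingEnd ℂ) h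
    simpa [map_add, Complex.conj_conj, Complex.conj_ofReal] using this
  have hnsq : Complex.normSq (T + (E:ℂ)) = (T.re+E)^2 + T.im^2 := by
    rw [Complex.normSq_apply]; simp [Complex.add_re, Complex.add_im]; ring
  have hSpos : 0 < (T.re+E)^2 + T.im^2 := by
    rw [← hnsq]; exact Complex.normSq_pos.mpr hTE
  have hE8 : Real.exp (8*u) = E^2 := by
    rw [show (8:ℝ)*u = 4*u+4*u by ring, Real.exp_add, hE]; ring
  rw [PHI, hE8] at h0
  -- key real identity from PHI = 0
  have hkeyR : E*(1+2*u)*(T.re+E) = (u+1)*((T.re+E)^2 + T.im^2) := by nlinarith [h0, hE]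
  set w : ℂ := ((E*(1+2*u) : ℝ) : ℂ)/((starRingEnd ℂ) T + (E:ℂ)) - 1 with hwdef
  have hnsq' : Complex.normSq ((starRingEnd ℂ) T + (E:ℂ)) = (T.re+E)^2 + T.im^2 := by
    rw [Complex.normSq_apply]; simp [Complex.add_re, Complex.add_im]; ring
  have hwre : w.re = u := by
    rw [hwdef]
    simp only [Complex.sub_re, Complex.one_re, Complex.div_re, Complex.ofReal_re,
      Complex.ofReal_im, Complex.add_re, Complex.add_im, Complex.conj_re, Complex.conj_im,
      hnsq']
    field_simp
    linear_combination hkeyR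
  have hwgt : -1/2 < w.re := by rw [hwre]; exact hu
  have hconj : 1 + (starRingEnd ℂ) w = ((E*(1+2*u):ℝ):ℂ)/(T + (E:ℂ)) := by
    rw [hwdef, map_sub, map_div₀, map_one, Complex.conj_ofReal, map_add,
      Complex.conj_conj, Complex.conj_ofReal]
    ring
  have hc : ((E*(1+2*u):ℝ):ℂ) ≠ 0 := by
    have : (0:ℝ) < E*(1+2*u) := mul_pos hEpos (by linarith)
    exact_mod_cast ne_of_gt this
  have hkey := FF_key w hwgt
  rw [hwre, hconj] at hkey
  have hmul : (FF w + (E:ℂ)) * ((E*(1+2*u):ℝ):ℂ) = (T + (E:ℂ)) * ((E*(1+2*u):ℝ):ℂ) := by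
    rw [← hE] at hkey
    field_simp [hTE] at hkey
    push_cast at hkey ⊢
    linear_combination hkey
  have := mul_right_cancel₀ hc hmul
  refine ⟨w, hwgt, ?_⟩
  linear_combination this

lemma one_sub_ne (z : ℂ) (hz : ‖z‖ < 1) : (1:ℂ) - z ≠ 0 := by
  intro h
  have : z = 1 := by linear_combination -h
  rw [this] at hz; simp at hz

lemma mob_mem (z : ℂ) (hz : ‖z‖ < 1) : -1/2 < (z/(1-z)).re := by
  have h1 : Complex.normSq z < 1 := by
    rw [Complex.normSq_eq_norm_sq]
    calc ‖z‖ ^ 2 ≤ ‖z‖ * 1 := by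
          rw [sq]; exact mul_le_mul_of_nonneg_left hz.le (norm_nonneg z)
      _ < 1 := by rwa [mul_one]
  have h2 : 0 < Complex.normSq (1 - z) := Complex.normSq_pos.mpr (one_sub_ne z hz)
  rw [Complex.div_re]
  rw [Complex.normSq_apply] at h1 h2 ⊢
  simp only [Complex.sub_re, Complex.sub_im, Complex.one_re, Complex.one_im] at h2 ⊢
  rw [← add_div, lt_div_iff₀ h2]
  nlinarith [h1]

lemma mob_inj (z₁ z₂ : ℂ) (h1 : ‖z₁‖ < 1) (h2 : ‖z₂‖ < 1)
    (h : z₁/(1-z₁) = z₂/(1-z₂)) : z₁ = z₂ := by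
  have e1 := one_sub_ne z₁ h1
  have e2 := one_sub_ne z₂ h2
  field_simp at h
  linear_combination h

lemma mob_surj (w : ℂ) (hw : -1/2 < w.re) :
    ∃ z : ℂ, ‖z‖ < 1 ∧ z/(1-z) = w := by
  have hne : (1:ℂ) + w ≠ 0 := by
    intro h
    have := congrArg Complex.re h
    simp at this; linarith
  refine ⟨w/(1+w), ?_, ?_⟩
  · rw [norm_div, div_lt_one (norm_pos_iff.mpr hne)]
    have : Complex.normSq w < Complex.normSq (1+w) := by
      rw [Complex.normSq_apply, Complex.normSq_apply]
      simp only [Complex.add_re, Complex.add_im, Complex.one_re, Complex.one_im]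
      nlinarith
    have h3 := (Real.sqrt_lt_sqrt (Complex.normSq_nonneg w)) this
    rwa [Complex.norm_def, Complex.norm_def]
  · have hsub : (1:ℂ) - w/(1+w) = 1/(1+w) := by
      field_simp
      ring
    rw [hsub]
    field_simp

lemma f0_comp (z : ℂ) (hz : ‖z‖ < 1) :
    z / (1 - z) ^ 2 * ((‖1 - z‖ : ℝ) : ℂ) ^ 2 *
      ((Real.exp ((4 * z / (1 - z)).re) : ℝ) : ℂ) = FF (z/(1-z)) := by
  have h1 := one_sub_ne z hz
  have h2 : (starRingEnd ℂ) (1 - z) ≠ 0 := by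
    rw [map_sub, map_one]
    intro h
    apply h1
    have := congrArg (starRingEnd ℂ) h
    simpa using this
  have habs : ((‖1 - z‖ : ℝ) : ℂ) ^ 2 = (1-z) * (starRingEnd ℂ) (1-z) := by
    rw [Complex.mul_conj, Complex.normSq_eq_norm_sq]
    push_cast
    ring
  have hre : (4 * z / (1 - z)).re = 4 * (z/(1-z)).re := by
    rw [mul_div_assoc]
    simp [Complex.mul_re]
  have h3 : (1:ℂ) - (starRingEnd ℂ) z ≠ 0 := by
    rw [map_sub, map_one] at h2; exact h2
  have hden : 1 + (starRingEnd ℂ) (z/(1-z)) = ((starRingEnd ℂ) (1-z))⁻¹ := by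
    rw [map_div₀, map_sub, map_one]
    field_simp
    ring
  rw [habs, hre, FF, hden]
  field_simp

lemma PHI_unique (a b : ℝ) (h : ¬(b = 0 ∧ a ≤ -(Real.exp 2)⁻¹)) :
    ∀ x y, -1/2 < x → -1/2 < y → PHI a b x = 0 → PHI a b y = 0 → x = y := by
  apply uniqueZeroAux (PHI_cont a b)
  intro u hu h0
  refine ⟨_, PHI_hasDeriv a b u, ?_⟩
  apply PHI_deriv_pos a b u hu _ h0
  intro hS
  have hbn : b = 0 := by nlinarith [sq_nonneg (a + Real.exp (4*u)), sq_nonneg b]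
  have han : a = -Real.exp (4*u) := by
    nlinarith [sq_nonneg (a + Real.exp (4*u)), sq_nonneg b]
  apply h
  refine ⟨hbn, ?_⟩
  rw [han]
  have : (Real.exp 2)⁻¹ ≤ Real.exp (4*u) := by
    rw [← Real.exp_neg]; exact Real.exp_le_exp.mpr (by linarith)
  linarith

theorem stmt_13 (f₀ : ℂ → ℂ)
    (hf₀ : ∀ z : ℂ, z ≠ 1 →
        f₀ z = z / (1 - z) ^ 2 * ((‖1 - z‖ : ℝ) : ℂ) ^ 2 *
          ((Real.exp ((4 * z / (1 - z)).re) : ℝ) : ℂ)) :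
    Set.InjOn f₀ (ball (0 : ℂ) 1) ∧
      f₀ '' ball (0 : ℂ) 1 = {w : ℂ | w.im = 0 ∧ w.re ≤ -(Real.exp 2)⁻¹}ᶜ := by
  have hmem : ∀ z : ℂ, z ∈ ball (0:ℂ) 1 → ‖z‖ < 1 := by
    intro z hz
    simpa using mem_ball_zero_iff.mp hz
  have hf : ∀ z : ℂ, ‖z‖ < 1 → f₀ z = FF (z/(1-z)) := by
    intro z hz
    have hz1 : z ≠ 1 := by intro h; rw [h] at hz; simp at hz
    rw [hf₀ z hz1, f0_comp z hz]
  constructor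
  · intro z₁ hz₁ z₂ hz₂ heq
    have h1 := hmem z₁ hz₁
    have h2 := hmem z₂ hz₂
    have hw₁ := mob_mem z₁ h1
    have hw₂ := mob_mem z₂ h2
    have hT2 : FF (z₂/(1-z₂)) = FF (z₁/(1-z₁)) := by
      rw [← hf z₁ h1, ← hf z₂ h2, heq]
    obtain ⟨hTE1, hkey1, hphi1⟩ := FF_eq (z₁/(1-z₁)) (FF (z₁/(1-z₁))) hw₁ rfl
    obtain ⟨hTE2, hkey2, hphi2⟩ := FF_eq (z₂/(1-z₂)) (FF (z₁/(1-z₁))) hw₂ hT2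
    have hslit := FF_avoid (z₁/(1-z₁)) hw₁
    have huu : (z₁/(1-z₁)).re = (z₂/(1-z₂)).re :=
      PHI_unique _ _ hslit _ _ hw₁ hw₂ hphi1 hphi2
    rw [← huu] at hkey2 hTE2
    have hconj : 1 + (starRingEnd ℂ) (z₁/(1-z₁)) = 1 + (starRingEnd ℂ) (z₂/(1-z₂)) :=
      mul_right_cancel₀ hTE1 (hkey1.trans hkey2.symm)
    have hw : z₁/(1-z₁) = z₂/(1-z₂) := by
      have h3 : (starRingEnd ℂ) (z₁/(1-z₁)) = (starRingEnd ℂ) (z₂/(1-z₂)) := by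
        have := congrArg (fun t => t - 1) hconj
        simpa using this
      have := congrArg (starRingEnd ℂ) h3
      simpa using this
    exact mob_inj z₁ z₂ h1 h2 hw
  · ext T
    simp only [Set.mem_image, Set.mem_compl_iff, Set.mem_setOf_eq]
    constructor
    · rintro ⟨z, hz, rfl⟩
      have h1 := hmem z hz
      rw [hf z h1]
      exact FF_avoid _ (mob_mem z h1)
    · intro hT
      obtain ⟨w, hw, hFw⟩ := FF_surj T hT
      obtain ⟨z, hz, hzw⟩ := mob_surj w hw
      exact ⟨z, mem_ball_zero_iff.mpr (by simpa using hz),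
        by rw [hf z hz, hzw, hFw]⟩
end
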